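/- arXiv:2601.12107 — 7 statements merged into one kernel-verified Lean document; each statement's English description precedes it below -/
import Mathlib

section
/- Let p be a prime and n ≥ 2 an integer, and let π be a polynomial with integer coefficients. Then π is a permutation polynomial over ℤ_{p^n} if and only if π is a permutation polynomial over ℤ_p and the formal derivative of π satisfies π′(k) ≢ 0 (mod p) for every integer k. -/
private lemma taylor_int (π : Polynomial ℤ) (a h : ℤ) :
    ∃ k : ℤ, π.eval (a + h) = π.eval a + (Polynomial.derivative π).eval a * h + k * h ^ 2 :=
  ⟨(π.binomExpansion a h).1, (π.binomExpansion a h).2⟩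

private lemma lift_step (p : ℕ) (hp : p.Prime) (π : Polynomial ℤ)
    (hd : ∀ k : ℤ, ¬ (p : ℤ) ∣ (Polynomial.derivative π).eval k)
    (j : ℕ) (hj : 1 ≤ j) (a b : ℤ)
    (h : (p : ℤ) ^ (j + 1) ∣ π.eval b - π.eval a)
    (hab : (p : ℤ) ^ j ∣ b - a) : (p : ℤ) ^ (j + 1) ∣ b - a := by
  obtain ⟨t, ht⟩ := hab
  have hb : b = a + (p : ℤ) ^ j * t := by linarith
  obtain ⟨k, hk⟩ := taylor_int π a ((p : ℤ) ^ j * t)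
  rw [hb, hk] at h
  have h2 : (p : ℤ) ^ (j + 1) ∣ (p : ℤ) ^ j *
      ((Polynomial.derivative π).eval a * t + k * (p : ℤ) ^ j * t ^ 2) := by
    convert h using 1; ring
  have h3 : (p : ℤ) ∣ (Polynomial.derivative π).eval a * t + k * (p : ℤ) ^ j * t ^ 2 := by
    have hpj : (p : ℤ) ^ j ≠ 0 := pow_ne_zero _ (by exact_mod_cast hp.ne_zero)
    rw [pow_succ] at h2
    exact (mul_dvd_mul_iff_left hpj).mp h2
  have h35 : (p : ℤ) ∣ k * (p : ℤ) ^ j * t ^ 2 :=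
    Dvd.dvd.mul_right (Dvd.dvd.mul_left (dvd_pow_self _ (by omega)) k) _
  have h4 : (p : ℤ) ∣ (Polynomial.derivative π).eval a * t := by
    exact (dvd_add_left h35).mp h3
  have h5 : (p : ℤ) ∣ t := by
    rcases (Int.Prime.dvd_mul' (by exact_mod_cast hp) h4) with h | h
    · exact absurd h (hd a)
    · exact h
  rw [hb]
  obtain ⟨s, hs⟩ := h5
  exact ⟨s, by rw [hs]; ring⟩

/-- Lemma 2.2(i) (Hardman): for a prime `p` and `n ≥ 2`, a polynomial `π ∈ ℤ[x]` is a
permutation polynomial over `ℤ_{p^n}` iff it is a permutation polynomial over `ℤ_p` and its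
formal derivative satisfies `π'(k) ≢ 0 (mod p)` for every integer `k`. -/
theorem stmt_1 (p : ℕ) (hp : p.Prime) (n : ℕ) (hn : 2 ≤ n) (π : Polynomial ℤ) :
    Function.Bijective
        (fun x : ZMod (p ^ n) => (π.map (Int.castRingHom (ZMod (p ^ n)))).eval x) ↔
      (Function.Bijective (fun x : ZMod p => (π.map (Int.castRingHom (ZMod p))).eval x) ∧
        ∀ k : ℤ, ¬ ((Polynomial.derivative π).eval k ≡ 0 [ZMOD (p : ℤ)])) := by
  haveI : Fact p.Prime := ⟨hp⟩
  haveI : NeZero (p ^ n) := ⟨pow_ne_zero n hp.ne_zero⟩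
  have hval : ∀ (m : ℕ) [NeZero m] (x : ZMod m), (((x.val : ℕ) : ℤ) : ZMod m) = x := by
    intro m _ x
    push_cast
    simp [ZMod.natCast_val, ZMod.cast_id]
  have hevalN : ∀ (m : ℕ) (a : ℤ),
      (π.map (Int.castRingHom (ZMod m))).eval ((a : ℤ) : ZMod m) = ((π.eval a : ℤ) : ZMod m) :=
    fun m a => Polynomial.eval_intCast_map _ _ _
  have hmodeq : ∀ k : ℤ, ((Polynomial.derivative π).eval k ≡ 0 [ZMOD (p : ℤ)]) ↔
      (p : ℤ) ∣ (Polynomial.derivative π).eval k := fun k => Int.modEq_zero_iff_dvd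
  constructor
  · rintro hbij
    constructor
    · -- surjectivity mod p
      rw [← Finite.surjective_iff_bijective]
      intro c
      obtain ⟨x, hx⟩ := hbij.surjective (((c.val : ℤ)) : ZMod (p ^ n))
      refine ⟨(((x.val : ℤ)) : ZMod p), ?_⟩
      simp only at hx ⊢
      rw [hevalN]
      rw [← hval (p ^ n) x, hevalN] at hx
      rw [ZMod.intCast_eq_intCast_iff_dvd_sub] at hx
      have hpdvd : (p : ℤ) ∣ ((p ^ n : ℕ) : ℤ) := by
        push_cast; exact dvd_pow_self _ (by omega)
      have hdvd : (p : ℤ) ∣ (c.val : ℤ) - π.eval (x.val : ℤ) := dvd_trans hpdvd hx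
      rw [show ((π.eval (x.val : ℤ) : ℤ) : ZMod p) = ((c.val : ℤ) : ZMod p) from
        (ZMod.intCast_eq_intCast_iff_dvd_sub _ _ _).mpr (by exact_mod_cast hdvd)]
      exact hval p c
    · -- derivative condition
      intro a ha
      rw [hmodeq] at ha
      obtain ⟨k, hk⟩ := taylor_int π a ((p : ℤ) ^ (n - 1))
      have hpn : (p : ℤ) ^ n = p * p ^ (n - 1) := by
        rw [← pow_succ']; congr 1; omega
      have hd1 : ((p : ℤ)) ^ n ∣ (Polynomial.derivative π).eval a * (p : ℤ) ^ (n - 1) := by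
        obtain ⟨s, hs⟩ := ha
        exact ⟨s, by rw [hs, hpn]; ring⟩
      have hd2 : ((p : ℤ)) ^ n ∣ k * ((p : ℤ) ^ (n - 1)) ^ 2 := by
        refine Dvd.dvd.mul_left ?_ k
        rw [← pow_mul]
        exact pow_dvd_pow _ (by omega)
      have hcongr : (π.map (Int.castRingHom (ZMod (p ^ n)))).eval
            (((a + (p : ℤ) ^ (n - 1) : ℤ)) : ZMod (p ^ n)) =
          (π.map (Int.castRingHom (ZMod (p ^ n)))).eval ((a : ℤ) : ZMod (p ^ n)) := by
        rw [hevalN, hevalN, ZMod.intCast_eq_intCast_iff_dvd_sub, hk]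
        have : Polynomial.eval a π -
            (Polynomial.eval a π + (Polynomial.derivative π).eval a * (p : ℤ) ^ (n - 1) +
              k * ((p : ℤ) ^ (n - 1)) ^ 2) =
            -((Polynomial.derivative π).eval a * (p : ℤ) ^ (n - 1) +
              k * ((p : ℤ) ^ (n - 1)) ^ 2) := by ring
        push_cast
        rw [this]
        exact dvd_neg.mpr (dvd_add hd1 hd2)
      have hinj := hbij.injective hcongr
      rw [ZMod.intCast_eq_intCast_iff_dvd_sub] at hinj
      have hdvd : (p : ℤ) ^ n ∣ (p : ℤ) ^ (n - 1) := by
        have h2 : ((p ^ n : ℕ) : ℤ) ∣ -((p : ℤ) ^ (n - 1)) := by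
          convert hinj using 1; ring
        rw [dvd_neg] at h2
        exact_mod_cast h2
      have hnat : (p ^ n : ℕ) ∣ p ^ (n - 1) := by exact_mod_cast hdvd
      have := (Nat.pow_dvd_pow_iff_le_right hp.one_lt).mp hnat
      omega
  · rintro ⟨hbijp, hd⟩
    simp only [hmodeq] at hd
    have key : ∀ j : ℕ, 1 ≤ j → ∀ a b : ℤ,
        (p : ℤ) ^ j ∣ π.eval b - π.eval a → (p : ℤ) ^ j ∣ b - a := by
      intro j hj
      induction j with
      | zero => omega
      | succ j ih =>
        intro a b h
        rcases Nat.eq_or_lt_of_le hj with h1 | h1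
        · have hj0 : j = 0 := by omega
          subst hj0
          rw [pow_one] at h ⊢
          have hc : ((π.eval a : ℤ) : ZMod p) = ((π.eval b : ℤ) : ZMod p) :=
            (ZMod.intCast_eq_intCast_iff_dvd_sub _ _ _).mpr (by exact_mod_cast h)
          rw [← hevalN p a, ← hevalN p b] at hc
          have := hbijp.injective hc
          have := (ZMod.intCast_eq_intCast_iff_dvd_sub _ _ _).mp this
          exact_mod_cast this
        · have hj1 : 1 ≤ j := by omega
          have hprev : (p : ℤ) ^ j ∣ b - a :=
            ih hj1 a b (dvd_trans (pow_dvd_pow _ (by omega)) h)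
          exact lift_step p hp π hd j hj1 a b h hprev
    rw [← Finite.injective_iff_bijective]
    intro x y hxy
    simp only at hxy
    rw [← hval (p ^ n) x, ← hval (p ^ n) y, hevalN, hevalN] at hxy
    have hdvd : (p : ℤ) ^ n ∣ π.eval (y.val : ℤ) - π.eval (x.val : ℤ) := by
      have := (ZMod.intCast_eq_intCast_iff_dvd_sub _ _ (p ^ n)).mp hxy
      exact_mod_cast this
    have hba := key n (by omega) _ _ hdvd
    have hcast : (((x.val : ℤ)) : ZMod (p ^ n)) = (((y.val : ℤ)) : ZMod (p ^ n)) := by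
      rw [ZMod.intCast_eq_intCast_iff_dvd_sub]
      exact_mod_cast hba
    rw [hval, hval] at hcast
    exact hcast
end

section
/- Let p be a prime, n a positive integer, and N = p^n·N₁, where gcd(p, N₁) = 1 and N₁ is either 1 or a product q₁q₂⋯q_r of distinct primes each satisfying gcd(p, q_i − 1) = 1. If a, b are integers with a ≢ 0 (mod p), a ≢ −1 (mod p), and N₁ ∣ a, then π(x) = x^p + a·x + b is a permutation polynomial over ℤ_N. -/
lemma pow_inj_of_coprime (qq : ℕ) [Fact qq.Prime] {p : ℕ} (hp : p ≠ 0)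
    (hc : Nat.Coprime p (qq - 1)) {x y : ZMod qq} (h : x ^ p = y ^ p) : x = y := by
  rcases eq_or_ne x 0 with hx | hx
  · subst hx
    rw [zero_pow hp, eq_comm, pow_eq_zero_iff hp] at h
    exact h.symm
  rcases eq_or_ne y 0 with hy | hy
  · subst hy
    rw [zero_pow hp, pow_eq_zero_iff hp] at h
    exact absurd h hx
  have hcop : (Nat.card (ZMod qq)ˣ).Coprime p := by
    rw [Nat.card_eq_fintype_card, ZMod.card_units]
    exact hc.symm
  have hu : (Units.mk0 x hx) ^ p = (Units.mk0 y hy) ^ p := by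
    ext; simpa using h
  have := (powCoprime hcop).injective hu
  simpa using congrArg Units.val this

/-- Lemma 3.3 (first part): let `p` be a prime, `n ≥ 1`, `N = p^n·N₁` with `gcd(p,N₁)=1`
and `N₁` equal to `1` or a product of distinct primes `qᵢ` with `gcd(p, qᵢ−1) = 1`.
If `a ≢ 0, −1 (mod p)` and `N₁ ∣ a`, then `π(x) = x^p + a·x + b` permutes `ℤ_N`. -/
theorem stmt_5 (p : ℕ) (hp : p.Prime) (n : ℕ) (hn : 0 < n)
    (N N₁ : ℕ) (hN : N = p ^ n * N₁) (hcop : Nat.Coprime p N₁)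
    (r : ℕ) (q : Fin r → ℕ) (hq : ∀ i, (q i).Prime) (hinj : Function.Injective q)
    (hN₁ : N₁ = ∏ i, q i) (hqcop : ∀ i, Nat.Coprime p (q i - 1))
    (a b : ℤ) (ha0 : ¬ a ≡ 0 [ZMOD (p : ℤ)]) (ha1 : ¬ a ≡ -1 [ZMOD (p : ℤ)])
    (haN₁ : (N₁ : ℤ) ∣ a) :
    Function.Bijective
      (fun x : ZMod N => x ^ p + (a : ZMod N) * x + (b : ZMod N)) := by
  haveI : Fact p.Prime := ⟨hp⟩
  have hN₁pos : 0 < N₁ := by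
    rw [hN₁]; exact Finset.prod_pos (fun i _ => (hq i).pos)
  have hNpos : 0 < N := by
    rw [hN]; exact Nat.mul_pos (pow_pos hp.pos n) hN₁pos
  haveI : NeZero N := ⟨hNpos.ne'⟩
  rw [Finite.injective_iff_bijective.symm]
  intro x y hxy
  obtain ⟨X, rfl⟩ := ZMod.intCast_surjective x
  obtain ⟨Y, rfl⟩ := ZMod.intCast_surjective y
  simp only at hxy
  -- turn hxy into an integer divisibility
  have hdvd : (N : ℤ) ∣ (X ^ p + a * X) - (Y ^ p + a * Y) := by
    have : ((X ^ p + a * X + b : ℤ) : ZMod N) = ((Y ^ p + a * Y + b : ℤ) : ZMod N) := by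
      push_cast
      exact hxy
    have := (ZMod.intCast_eq_intCast_iff _ _ _).mp this
    have := Int.ModEq.dvd this
    have h2 : (Y ^ p + a * Y + b) - (X ^ p + a * X + b)
        = -((X ^ p + a * X) - (Y ^ p + a * Y)) := by ring
    rw [h2] at this
    exact (dvd_neg.mp this)
  -- factorization
  set G : ℤ := (∑ i ∈ Finset.range p, X ^ i * Y ^ (p - 1 - i)) + a with hG
  have hfact : (X ^ p + a * X) - (Y ^ p + a * Y) = (X - Y) * G := by
    have h := geom_sum₂_mul X Y p
    rw [hG]
    linear_combination -h
  rw [hfact] at hdvd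
  -- mod p : X ≡ Y
  have hpn_dvd : ((p : ℤ) ^ n) ∣ (X - Y) * G := by
    refine dvd_trans ?_ hdvd
    rw [hN]; push_cast; exact Dvd.intro _ rfl
  have hp_dvdN : (p : ℤ) ∣ (N : ℤ) := by
    rw [hN]; push_cast
    exact Dvd.dvd.mul_right (dvd_pow_self _ hn.ne') _
  have hXYp : ((X : ZMod p)) = (Y : ZMod p) := by
    have hdp : (p : ℤ) ∣ (X - Y) * G := hp_dvdN.trans hdvd
    have : ((((X - Y) * G : ℤ)) : ZMod p) = 0 := by
      rw [ZMod.intCast_zmod_eq_zero_iff_dvd]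
      exact_mod_cast hdp
    push_cast at this
    -- (X - Y) * G = 0 in ZMod p ; compute G mod p later; here use original equation instead
    -- use: X^p + aX ≡ Y^p + aY mod p
    have hd2 : (p : ℤ) ∣ (X ^ p + a * X) - (Y ^ p + a * Y) := by
      rw [hfact]; exact hp_dvdN.trans hdvd
    have h2 : ((X ^ p + a * X : ℤ) : ZMod p) = ((Y ^ p + a * Y : ℤ) : ZMod p) := by
      rw [ZMod.intCast_eq_intCast_iff]
      exact Int.modEq_iff_dvd.mpr (dvd_sub_comm.mp hd2)
    push_cast at h2
    rw [ZMod.pow_card, ZMod.pow_card] at h2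
    have ha1' : (a : ZMod p) + 1 ≠ 0 := by
      intro hcon
      apply ha1
      have : (a : ZMod p) = ((-1 : ℤ) : ZMod p) := by
        push_cast
        linear_combination hcon
      exact (ZMod.intCast_eq_intCast_iff _ _ _).mp this
    have h3 : ((a : ZMod p) + 1) * ((X : ZMod p) - (Y : ZMod p)) = 0 := by
      linear_combination h2
    rcases mul_eq_zero.mp h3 with h4 | h4
    · exact absurd h4 ha1'
    · exact sub_eq_zero.mp h4
  have hpXY : (p : ℤ) ∣ X - Y := by
    have := (ZMod.intCast_eq_intCast_iff _ _ _).mp hXYp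
    exact Int.ModEq.dvd this.symm
  -- G is not divisible by p
  have hGp : ¬ (p : ℤ) ∣ G := by
    intro hcon
    apply ha0
    have h0 : ((G : ℤ) : ZMod p) = 0 := by
      rw [ZMod.intCast_zmod_eq_zero_iff_dvd]; exact_mod_cast hcon
    rw [hG] at h0
    push_cast at h0
    have hsum : (∑ i ∈ Finset.range p, (X : ZMod p) ^ i * (Y : ZMod p) ^ (p - 1 - i)) = 0 := by
      have : ∀ i ∈ Finset.range p, (X : ZMod p) ^ i * (Y : ZMod p) ^ (p - 1 - i)
          = (X : ZMod p) ^ (p - 1) := by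
        intro i hi
        rw [Finset.mem_range] at hi
        rw [← hXYp, ← pow_add]
        congr 1
        omega
      rw [Finset.sum_congr rfl this, Finset.sum_const, Finset.card_range,
        nsmul_eq_mul, ZMod.natCast_self, zero_mul]
    rw [hsum, zero_add] at h0
    have : (a : ZMod p) = ((0 : ℤ) : ZMod p) := by push_cast; exact h0
    exact (ZMod.intCast_eq_intCast_iff _ _ _).mp this
  have hcopG : IsCoprime ((p : ℤ) ^ n) G :=
    ((Nat.prime_iff_prime_int.mp hp).coprime_iff_not_dvd.mpr hGp).pow_left
  have hpnXY : ((p : ℤ) ^ n) ∣ X - Y := hcopG.dvd_of_dvd_mul_right hpn_dvd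
  -- N₁ part
  have hN₁dvd : (N₁ : ℤ) ∣ (X - Y) * G := by
    refine dvd_trans ?_ hdvd
    rw [hN]; push_cast; exact Dvd.intro_left _ rfl
  have hN₁pow : (N₁ : ℤ) ∣ X ^ p - Y ^ p := by
    have h1 : (N₁ : ℤ) ∣ a * (X - Y) := Dvd.dvd.mul_right haN₁ _
    have h3 : (N₁ : ℤ) ∣ (X ^ p + a * X) - (Y ^ p + a * Y) := by
      rw [hfact]; exact hN₁dvd
    have h4 : X ^ p - Y ^ p = ((X ^ p + a * X) - (Y ^ p + a * Y)) - a * (X - Y) := by ring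
    rw [h4]; exact dvd_sub h3 h1
  have hqXY : ∀ i, ((q i : ℤ)) ∣ X - Y := by
    intro i
    haveI : Fact (q i).Prime := ⟨hq i⟩
    have hpow : ((X : ZMod (q i))) ^ p = ((Y : ZMod (q i))) ^ p := by
      have hqd : (q i : ℤ) ∣ (N₁ : ℤ) := by
        rw [hN₁]; push_cast
        exact Finset.dvd_prod_of_mem _ (Finset.mem_univ i)
      have : ((X ^ p : ℤ) : ZMod (q i)) = ((Y ^ p : ℤ) : ZMod (q i)) := by
        rw [ZMod.intCast_eq_intCast_iff]
        exact Int.modEq_iff_dvd.mpr (dvd_sub_comm.mp (hqd.trans hN₁pow))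
      push_cast at this
      exact this
    have := pow_inj_of_coprime (q i) hp.pos.ne' (hqcop i) hpow
    exact Int.ModEq.dvd ((ZMod.intCast_eq_intCast_iff _ _ _).mp this).symm
  have hN₁XY : (N₁ : ℤ) ∣ X - Y := by
    have hcast : (N₁ : ℤ) = ∏ i, (q i : ℤ) := by rw [hN₁]; push_cast; ring
    rw [hcast]
    refine Fintype.prod_dvd_of_coprime ?_ hqXY
    intro i j hij
    have : Nat.Coprime (q i) (q j) := (Nat.coprime_primes (hq i) (hq j)).mpr
      (fun h => hij (hinj h))
    exact Nat.isCoprime_iff_coprime.mpr this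
  -- combine
  have hNXY : (N : ℤ) ∣ X - Y := by
    have hc : IsCoprime ((p : ℤ) ^ n) (N₁ : ℤ) := by
      have : IsCoprime ((p : ℤ)) (N₁ : ℤ) := Nat.isCoprime_iff_coprime.mpr hcop
      exact this.pow_left
    have := hc.mul_dvd hpnXY hN₁XY
    rw [hN]; push_cast
    exact this
  have : ((X : ℤ) : ZMod N) = ((Y : ℤ) : ZMod N) := by
    rw [ZMod.intCast_eq_intCast_iff]
    exact Int.modEq_iff_dvd.mpr (dvd_sub_comm.mp hNXY)
  exact this
end

section
/- Let p ≥ 3 be a prime, n ≥ 2 an integer, and N = p^n·N₁, where gcd(p, N₁) = 1 and N₁ is either 1 or a product q₁q₂⋯q_r of distinct primes such that (q_i − 1) divides (p − 1) for every i. Let a, b be integers such that π(x) = x^p + a·x + b is a permutation polynomial over ℤ_N with a ≢ 0 (mod p) and a ≢ −1 (mod p), and let s be the Zadoff–Chu sequence of length N with root index u, where gcd(u, N) = 1. Then the interleaved sequence s∘π is a CAZAC sequence: |s(π(k))| = 1 for every k, and for every integer d with 0 < d < N, Σ_{k=0}^{N−1} s(π(k))·conj(s(π(k+d))) = 0. 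-/
set_option maxHeartbeats 1600000

open Complex Finset Polynomial

section CAZACProof

noncomputable def Efn (M : ℕ) (t : ℤ) : ℂ :=
  Complex.exp (2 * Real.pi * Complex.I * t / M)

lemma Efn_add (M : ℕ) (s t : ℤ) : Efn M (s + t) = Efn M s * Efn M t := by
  rw [Efn, Efn, Efn, ← Complex.exp_add]
  congr 1
  push_cast
  ring

lemma Efn_zero (M : ℕ) : Efn M 0 = 1 := by
  simp [Efn]

lemma Efn_congr {M : ℕ} (hM : M ≠ 0) {t t' : ℤ} (h : (M : ℤ) ∣ (t - t')) :
    Efn M t = Efn M t' := by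
  obtain ⟨j, hj⟩ := h
  have ht : t = t' + M * j := by linarith
  subst ht
  rw [Efn, Efn]
  rw [show (2 * (Real.pi:ℂ) * Complex.I * ((t' + M*j : ℤ):ℂ) / (M:ℂ))
      = 2 * (Real.pi:ℂ) * Complex.I * (t':ℂ) / (M:ℂ) + (j:ℂ) * (2 * (Real.pi:ℂ) * Complex.I) by
    have hM' : (M:ℂ) ≠ 0 := by exact_mod_cast hM
    field_simp
    push_cast
    ring]
  rw [Complex.exp_add, Complex.exp_int_mul_two_pi_mul_I, mul_one]

lemma Efn_mul_left {M₁ : ℕ} (hM₁ : M₁ ≠ 0) (M₂ : ℕ) (t : ℤ) :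
    Efn (M₁ * M₂) ((M₁ : ℤ) * t) = Efn M₂ t := by
  rw [Efn, Efn]
  congr 1
  have h1 : (M₁:ℂ) ≠ 0 := by exact_mod_cast hM₁
  push_cast
  by_cases h2 : (M₂:ℂ) = 0
  · rw [h2]; simp
  field_simp

lemma Efn_pow (M : ℕ) (c : ℤ) (x : ℕ) : Efn M (c * x) = (Efn M c) ^ x := by
  rw [Efn, Efn, ← Complex.exp_nat_mul]
  congr 1
  push_cast
  ring

lemma Efn_ne_one {M : ℕ} (hM : 0 < M) {c : ℤ} (h : ¬ (M:ℤ) ∣ c) : Efn M c ≠ 1 := by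
  rw [Efn]
  intro hc
  rw [Complex.exp_eq_one_iff] at hc
  obtain ⟨k, hk⟩ := hc
  apply h
  refine ⟨k, ?_⟩
  have hM' : (M:ℂ) ≠ 0 := by
    exact_mod_cast hM.ne'
  have hπ : (2 * (Real.pi:ℂ) * Complex.I) ≠ 0 := by
    intro h'
    apply Real.pi_ne_zero
    simp [Complex.ext_iff] at h'
  have h2 : (2 * (Real.pi:ℂ) * Complex.I) * (c:ℂ) = (2 * (Real.pi:ℂ) * Complex.I) * ((M:ℂ) * k) := by
    field_simp at hk
    linear_combination (2 * (Real.pi:ℂ) * Complex.I) * hk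
  have h3 : (c:ℂ) = (M:ℂ) * k := mul_left_cancel₀ hπ h2
  exact_mod_cast h3

lemma Efn_pow_self {M : ℕ} (c : ℤ) : (Efn M c) ^ M = 1 := by
  by_cases hM : M = 0
  · subst hM; simp
  rw [← Efn_pow]
  have : (M:ℤ) ∣ (c * M - 0) := ⟨c, by ring⟩
  rw [Efn_congr hM this, Efn_zero]

lemma geom_vanish {M : ℕ} (hM : 0 < M) {c : ℤ} (h : ¬ (M:ℤ) ∣ c) (β : ℤ) :
    ∑ x ∈ Finset.range M, Efn M (c * x + β) = 0 := by
  have h1 : ∀ x : ℕ, Efn M (c * x + β) = (Efn M c) ^ x * Efn M β := by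
    intro x; rw [Efn_add, Efn_pow]
  simp only [h1, ← Finset.sum_mul]
  rw [geom_sum_eq (Efn_ne_one hM h), Efn_pow_self]
  simp

lemma sum_range_mul' (f : ℕ → ℂ) (a b : ℕ) :
    ∑ k ∈ Finset.range (a * b), f k
      = ∑ i ∈ Finset.range b, ∑ j ∈ Finset.range a, f (i * a + j) := by
  induction b with
  | zero => simp
  | succ b ih =>
    rw [Nat.mul_succ, Finset.sum_range_add, ih, Finset.sum_range_succ]
    congr 1
    apply Finset.sum_congr rfl
    intro j _
    congr 1
    ring

lemma split_sum {Q R : ℕ} (hQ : 0 < Q) (hR : 0 < R) (hco : Nat.Coprime Q R)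
    (F G : ℕ → ℂ)
    (hF : ∀ k k' : ℕ, k ≡ k' [MOD Q] → F k = F k')
    (hG : ∀ k k' : ℕ, k ≡ k' [MOD R] → G k = G k') :
    ∑ k ∈ Finset.range (Q * R), F k * G k
      = (∑ i ∈ Finset.range Q, F i) * (∑ j ∈ Finset.range R, G j) := by
  rw [Finset.sum_mul_sum]
  rw [← Finset.sum_product']
  apply Finset.sum_nbij' (i := fun k => (k % Q, k % R))
    (j := fun ij => (Nat.chineseRemainder hco ij.1 ij.2 : ℕ) % (Q * R))
  · intro k hk
    simp only [Finset.mem_product, Finset.mem_range] at *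
    exact ⟨Nat.mod_lt _ hQ, Nat.mod_lt _ hR⟩
  · intro ij hij
    simp only [Finset.mem_range] at *
    exact Nat.mod_lt _ (Nat.mul_pos hQ hR)
  · intro k hk
    simp only [Finset.mem_range] at hk
    set c := (Nat.chineseRemainder hco (k % Q) (k % R) : ℕ) with hcdef
    have hc := (Nat.chineseRemainder hco (k % Q) (k % R)).prop
    have h1 : c ≡ k [MOD Q] := hc.1.trans (Nat.mod_modEq k Q)
    have h2 : c ≡ k [MOD R] := hc.2.trans (Nat.mod_modEq k R)
    have h3 : c ≡ k [MOD Q * R] := (Nat.modEq_and_modEq_iff_modEq_mul hco).mp ⟨h1, h2⟩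
    have h5 : c % (Q*R) = k % (Q*R) := by
      have h4 : c % (Q*R) ≡ k [MOD Q*R] := (Nat.mod_modEq c (Q*R)).trans h3
      unfold Nat.ModEq at h4
      rw [Nat.mod_mod_of_dvd _ dvd_rfl] at h4
      exact h4
    rw [h5]
    exact Nat.mod_eq_of_lt hk
  · intro ij hij
    simp only [Finset.mem_product, Finset.mem_range] at hij
    set c := (Nat.chineseRemainder hco ij.1 ij.2 : ℕ) with hcdef
    have hc := (Nat.chineseRemainder hco ij.1 ij.2).prop
    have e1 : c % (Q*R) % Q = ij.1 := by
      rw [Nat.mod_mod_of_dvd _ (dvd_mul_right Q R)]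
      have h := hc.1
      unfold Nat.ModEq at h
      exact h.trans (Nat.mod_eq_of_lt hij.1)
    have e2 : c % (Q*R) % R = ij.2 := by
      rw [Nat.mod_mod_of_dvd _ (dvd_mul_left R Q)]
      have h := hc.2
      unfold Nat.ModEq at h
      exact h.trans (Nat.mod_eq_of_lt hij.2)
    have e1' : c % (Q*R) % Q = ij.1 := e1
    have e2' : c % (Q*R) % R = ij.2 := e2
    exact Prod.ext e1' e2'
  · intro k hk
    have h1 : F k = F (k % Q) := hF _ _ (Nat.mod_modEq k Q).symm
    have h2 : G k = G (k % R) := hG _ _ (Nat.mod_modEq k R).symm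
    rw [h1, h2]

def Pf (p : ℕ) (a b x : ℤ) : ℤ := x ^ p + a * x + b
def Af (p : ℕ) (a b ε x : ℤ) : ℤ := (Pf p a b x) ^ 2 + ε * (Pf p a b x)
def Df (p : ℕ) (a b ε d x : ℤ) : ℤ := Af p a b ε (x + d) - Af p a b ε x

lemma Pf_modeq {p : ℕ} {a b M x y : ℤ} (h : x ≡ y [ZMOD M]) :
    Pf p a b x ≡ Pf p a b y [ZMOD M] := by
  unfold Pf
  exact ((h.pow p).add ((Int.ModEq.refl a).mul h)).add (Int.ModEq.refl b)

lemma Af_modeq {p : ℕ} {a b ε M x y : ℤ} (h : x ≡ y [ZMOD M]) :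
    Af p a b ε x ≡ Af p a b ε y [ZMOD M] := by
  unfold Af
  have h1 := Pf_modeq (p := p) (a := a) (b := b) h
  exact ((h1.pow 2).add ((Int.ModEq.refl ε).mul h1))

lemma Df_modeq {p : ℕ} {a b ε d M x y : ℤ} (h : x ≡ y [ZMOD M]) :
    Df p a b ε d x ≡ Df p a b ε d y [ZMOD M] := by
  unfold Df
  exact (Af_modeq (h.add_right d)).sub (Af_modeq h)

lemma modeq_of_dvd_sub {M x y : ℤ} (h : M ∣ x - y) : x ≡ y [ZMOD M] :=
  Int.modEq_iff_dvd.mpr (by rw [show y - x = -(x-y) by ring]; exact h.neg_right)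

lemma Df_dvd_sub {p : ℕ} {a b ε d M x y : ℤ} (h : M ∣ x - y) :
    M ∣ (Df p a b ε d x - Df p a b ε d y) := by
  have h2 := Df_modeq (p := p) (a := a) (b := b) (ε := ε) (d := d) (modeq_of_dvd_sub h)
  exact Int.ModEq.dvd h2.symm

/-- Key factorization `Af x − Af y = (Pf x − Pf y) (Pf x + Pf y + ε)`. -/
lemma Af_sub_factor (p : ℕ) (a b ε x y : ℤ) :
    Af p a b ε x - Af p a b ε y
      = (Pf p a b x - Pf p a b y) * (Pf p a b x + Pf p a b y + ε) := by
  unfold Af; ring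

/-- Period lemma modulo `2R`. -/
lemma Af_sub_dvd_twoR {p : ℕ} {a b ε R x y : ℤ}
    (hpar : (¬ (2:ℤ) ∣ ε ∧ ¬ (2:ℤ) ∣ R) ∨ ((2:ℤ) ∣ ε ∧ (2:ℤ) ∣ R))
    (h : R ∣ x - y) :
    2 * R ∣ Af p a b ε x - Af p a b ε y := by
  rw [Af_sub_factor]
  set X := Pf p a b x - Pf p a b y with hX
  set Y := Pf p a b x + Pf p a b y + ε with hY
  have hRX : R ∣ X := by
    have h2 := Pf_modeq (p := p) (a := a) (b := b) (modeq_of_dvd_sub h)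
    exact Int.ModEq.dvd h2.symm
  rcases hpar with ⟨hε, hR⟩ | ⟨hε, hR⟩
  · -- ε odd, R odd : X and Y have different parities
    have h2 : (2:ℤ) ∣ X * Y := by
      rcases Int.even_or_odd X with hE | hO
      · exact Dvd.dvd.mul_right hE.two_dvd _
      · have hXY : Odd (X + Y) := by
          have : X + Y = 2 * (Pf p a b x) + ε := by rw [hX, hY]; ring
          rw [this]
          rcases Int.even_or_odd ε with hee | heo
          · exact absurd hee.two_dvd hε
          · exact (even_two_mul _).add_odd heo
        have hYE : Even Y := by
          rcases Int.even_or_odd Y with h | h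
          · exact h
          · exfalso
            have := hO.add_odd h
            exact (Int.not_odd_iff_even.mpr this) hXY
        exact Dvd.dvd.mul_left hYE.two_dvd _
    have hco : IsCoprime (2:ℤ) R := by
      rw [Int.prime_two.coprime_iff_not_dvd]
      exact hR
    exact hco.mul_dvd h2 (hRX.mul_right _)
  · -- ε even, R even : 2 ∣ Y
    have h2Y : (2:ℤ) ∣ Y := by
      have h2X : (2:ℤ) ∣ X := hR.trans hRX
      have : Y = X + 2 * (Pf p a b y) + ε := by rw [hX, hY]; ring
      rw [this]
      exact dvd_add (dvd_add h2X ⟨_, rfl⟩) hε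
    rw [mul_comm]
    exact mul_dvd_mul hRX h2Y

lemma zmod_pow_eq_self {q p : ℕ} (hq : q.Prime) (hp1 : 1 ≤ p) (hdvd : (q - 1) ∣ (p - 1))
    (z : ZMod q) : z ^ p = z := by
  haveI : Fact q.Prime := ⟨hq⟩
  by_cases hz : z = 0
  · subst hz
    rw [zero_pow (by omega)]
  · obtain ⟨e, he⟩ := hdvd
    have hq2 : 2 ≤ q := hq.two_le
    have hpe : p = (q - 1) * e + 1 := by omega
    rw [hpe, pow_add, pow_mul, pow_one, ZMod.pow_card_sub_one_eq_one hz, one_pow, one_mul]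

lemma oddq_vanish (p q : ℕ) (hq : q.Prime) (hq2 : q ≠ 2) (hp1 : 1 ≤ p)
    (hdvd : (q - 1) ∣ (p - 1)) (a b ε : ℤ) (hc : ¬ (q:ℤ) ∣ (1 + a))
    (d : ℕ) (hd : ¬ (q:ℤ) ∣ (d:ℤ)) (w : ℤ) (hw : ¬ (q:ℤ) ∣ w) :
    ∑ x ∈ Finset.range q, Efn q (w * Df p a b ε (d:ℤ) (x:ℤ)) = 0 := by
  haveI : Fact q.Prime := ⟨hq⟩
  have hqI : Prime (q:ℤ) := Nat.prime_iff_prime_int.mp hq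
  have key : ∀ z : ZMod q, z ^ p = z := zmod_pow_eq_self hq hp1 hdvd
  have hterm : ∀ x : ℕ, Efn q (w * Df p a b ε (d:ℤ) (x:ℤ))
      = Efn q ((w * (2 * (1+a)^2 * d)) * x + (w * (((1+a)*d) * ((1+a)*d + 2*b + ε)))) := by
    intro x
    apply Efn_congr hq.pos.ne'
    rw [← ZMod.intCast_zmod_eq_zero_iff_dvd]
    unfold Df Af Pf
    push_cast
    rw [key ((x:ZMod q) + (d:ZMod q)), key (x:ZMod q)]
    ring
  rw [Finset.sum_congr rfl (fun x _ => hterm x)]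
  apply geom_vanish hq.pos _ _
  intro hdv
  rcases (hqI.dvd_mul.mp hdv) with h | h
  · exact hw h
  rcases (hqI.dvd_mul.mp h) with h | h
  · rcases (hqI.dvd_mul.mp h) with h | h
    · have h2 : q ∣ 2 := by exact_mod_cast h
      have := Nat.le_of_dvd (by norm_num) h2
      have := hq.two_le
      omega
    · exact hc (hqI.dvd_of_dvd_pow h)
  · exact hd h

lemma ppow_vanish (p n : ℕ) (hp : p.Prime) (hp3 : 3 ≤ p) (hn : 2 ≤ n)
    (a b ε : ℤ) (ha0 : ¬ (p:ℤ) ∣ a) (ha1 : ¬ (p:ℤ) ∣ (a + 1))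
    (d : ℕ) (hd0 : 0 < d) (hdn : ¬ p ^ n ∣ d)
    (w : ℤ) (hw : ¬ (p:ℤ) ∣ w) :
    ∑ x ∈ Finset.range (p ^ n), Efn (p ^ n) (w * Df p a b ε (d:ℤ) (x:ℤ)) = 0 := by
  haveI : Fact p.Prime := ⟨hp⟩
  have hpI : Prime (p:ℤ) := Nat.prime_iff_prime_int.mp hp
  have hp0 : (p:ℤ) ≠ 0 := by exact_mod_cast hp.pos.ne'
  obtain ⟨t, d', hd', hdeq⟩ := Nat.exists_eq_pow_mul_and_not_dvd hd0.ne' p hp.one_lt.ne'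
  have htn : t < n := by
    by_contra h
    exact hdn (hdeq ▸ Dvd.dvd.mul_right (pow_dvd_pow p (by omega)) d')
  set m := n - t with hm
  have hm1 : 1 ≤ m := by omega
  have hnm : n = t + m := by omega
  have hd1 : (d:ℤ) = (p:ℤ)^t * (d':ℤ) := by exact_mod_cast hdeq
  -- polynomials
  set Pq : ℤ[X] := X^p + C a * X + C b with hPq
  set T : ℤ[X] := ∑ i ∈ Finset.range p, (X + C (d:ℤ))^i * X^(p-1-i) with hT
  set μ : ℤ[X] := T + C a with hμ
  set σp : ℤ[X] := Pq.comp (X + C (d:ℤ)) + Pq + C ε with hσp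
  set Φ : ℤ[X] := μ * σp with hΦ
  have hTd : T * C (d:ℤ) = (X + C (d:ℤ))^p - X^p := by
    have h1 := geom_sum₂_mul (X + C (d:ℤ)) (X : ℤ[X]) p
    simpa [hT] using h1
  have hF1 : Pq.comp (X + C (d:ℤ)) - Pq = C (d:ℤ) * μ := by
    rw [hPq, hμ]
    simp only [add_comp, mul_comp, pow_comp, X_comp, C_comp]
    linear_combination -hTd
  have hPq' : derivative Pq = C (p:ℤ) * X^(p-1) + C a := by
    rw [hPq]
    simp [derivative_X_pow]
  have hcomp' : derivative (Pq.comp (X + C (d:ℤ)))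
      = C (p:ℤ) * (X + C (d:ℤ))^(p-1) + C a := by
    rw [derivative_comp, hPq']
    simp
  have hF3 : C (d:ℤ) * derivative μ = C (p:ℤ) * ((X + C (d:ℤ))^(p-1) - X^(p-1)) := by
    have h1 := congrArg derivative hF1
    rw [derivative_sub, hcomp', hPq', derivative_C_mul] at h1
    linear_combination -h1
  -- value facts
  have hPfeval : ∀ x : ℤ, Pq.eval x = Pf p a b x := by
    intro x; rw [hPq]; simp [Pf]
  have hμd : ∀ x : ℤ, Pf p a b (x + d) - Pf p a b x = (d:ℤ) * μ.eval x := by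
    intro x
    have h1 := congrArg (eval x) hF1
    simpa [eval_comp, hPfeval] using h1
  have hσval : ∀ x : ℤ, σp.eval x = Pf p a b (x + d) + Pf p a b x + ε := by
    intro x; rw [hσp]; simp [eval_comp, hPfeval]
  have hDval : ∀ x : ℤ, Df p a b ε (d:ℤ) x = (d:ℤ) * Φ.eval x := by
    intro x
    have h1 := hμd x
    have h2 := hσval x
    rw [hΦ, eval_mul]
    unfold Df Af
    linear_combination (Pf p a b (x + (d:ℤ)) + Pf p a b x + ε) * h1 - ((d:ℤ) * μ.eval x) * h2
  -- mod-p facts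
  have hμ'0 : ∀ y : ℤ, (((derivative μ).eval y : ℤ) : ZMod p) = 0 := by
    intro y
    have h1 : (d:ℤ) * (derivative μ).eval y = (p:ℤ) * ((y+(d:ℤ))^(p-1) - y^(p-1)) := by
      have := congrArg (eval y) hF3
      simpa using this
    have hsub : ((y+(d:ℤ)) - y) ∣ ((y+(d:ℤ))^(p-1) - y^(p-1)) :=
      Dvd.intro_left _ (geom_sum₂_mul (y+(d:ℤ)) y (p-1))
    have h2 : ((p:ℤ))^t ∣ ((y+(d:ℤ))^(p-1) - y^(p-1)) := by
      refine dvd_trans ?_ hsub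
      rw [show (y+(d:ℤ)) - y = (d:ℤ) by ring, hd1]
      exact Dvd.intro _ rfl
    have h3 : ((p:ℤ))^(t+1) ∣ (d:ℤ) * (derivative μ).eval y := by
      rw [h1, pow_succ']
      exact mul_dvd_mul_left _ h2
    rw [hd1, mul_assoc, pow_succ] at h3
    have h4 : (p:ℤ) ∣ (d':ℤ) * (derivative μ).eval y :=
      (mul_dvd_mul_iff_left (pow_ne_zero t hp0)).mp h3
    rcases hpI.dvd_mul.mp h4 with h | h
    · exact absurd (by exact_mod_cast h) hd'
    · exact (ZMod.intCast_zmod_eq_zero_iff_dvd _ _).mpr h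
  have hTeval : ∀ y : ℤ, T.eval y = ∑ i ∈ Finset.range p, (y+(d:ℤ))^i * y^(p-1-i) := by
    intro y; rw [hT, eval_finset_sum]; simp
  have hTval0 : (p:ℤ) ∣ (d:ℤ) → ∀ y : ℤ, ((T.eval y : ℤ) : ZMod p) = 0 := by
    intro hdvd y
    rw [hTeval]
    push_cast
    have hdz : ((d:ℕ) : ZMod p) = 0 :=
      (ZMod.natCast_eq_zero_iff d p).mpr (by exact_mod_cast hdvd)
    rw [hdz]
    have : ∀ i ∈ Finset.range p,
        ((y:ZMod p) + 0)^i * (y:ZMod p)^(p-1-i) = (y:ZMod p)^(p-1) := by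
      intro i hi
      rw [add_zero, ← pow_add]
      congr 1
      simp only [Finset.mem_range] at hi
      omega
    rw [Finset.sum_congr rfl this, Finset.sum_const, Finset.card_range]
    simp [ZMod.natCast_self]
  have hTval1 : ¬ (p:ℤ) ∣ (d:ℤ) → ∀ y : ℤ, ((T.eval y : ℤ) : ZMod p) = 1 := by
    intro hdvd y
    have h1 : T.eval y * (d:ℤ) = (y+(d:ℤ))^p - y^p := by
      have := congrArg (eval y) hTd
      simpa using this
    have h2 : ((T.eval y : ℤ) : ZMod p) * ((d:ℕ) : ZMod p)
        = ((d:ℕ) : ZMod p) := by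
      have h0 := congrArg (fun z : ℤ => (z : ZMod p)) h1
      push_cast at h0
      rw [ZMod.pow_card, ZMod.pow_card] at h0
      rw [h0]
      ring
    have hdz : ((d:ℕ) : ZMod p) ≠ 0 := fun h =>
      hdvd (by exact_mod_cast (ZMod.natCast_eq_zero_iff d p).mp h)
    have h3 : (((T.eval y : ℤ) : ZMod p) - 1) * ((d:ℕ) : ZMod p) = 0 := by
      linear_combination h2
    rcases mul_eq_zero.mp h3 with h | h
    · exact sub_eq_zero.mp h
    · exact absurd h hdz
  set eC : ZMod p := if (p:ℤ) ∣ (d:ℤ) then 0 else 1 with heC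
  have hμval : ∀ y : ℤ, ((μ.eval y : ℤ) : ZMod p) = (a : ZMod p) + eC := by
    intro y
    rw [hμ, eval_add, eval_C]
    push_cast
    by_cases hdvd : (p:ℤ) ∣ (d:ℤ)
    · rw [heC, if_pos hdvd, hTval0 hdvd y]; ring
    · rw [heC, if_neg hdvd, hTval1 hdvd y]; ring
  have haz : (a : ZMod p) ≠ 0 := fun h => ha0 ((ZMod.intCast_zmod_eq_zero_iff_dvd _ _).mp h)
  have haeC : (a : ZMod p) + eC ≠ 0 := by
    by_cases hdvd : (p:ℤ) ∣ (d:ℤ)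
    · rw [heC, if_pos hdvd, add_zero]; exact haz
    · rw [heC, if_neg hdvd]
      intro h
      apply ha1
      rw [← ZMod.intCast_zmod_eq_zero_iff_dvd]
      push_cast
      exact h
  have h2z : (2 : ZMod p) ≠ 0 := by
    intro h
    have h2 : ((2:ℕ) : ZMod p) = 0 := by exact_mod_cast h
    have h3 : p ∣ 2 := (ZMod.natCast_eq_zero_iff 2 p).mp h2
    have := Nat.le_of_dvd (by norm_num) h3
    omega
  have hσ'val : ∀ y : ℤ, (((derivative σp).eval y : ℤ) : ZMod p) = 2 * (a : ZMod p) := by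
    intro y
    rw [hσp, derivative_add, derivative_add, derivative_C, add_zero, hcomp', hPq']
    simp only [eval_add, eval_mul, eval_C, eval_pow, eval_X]
    push_cast
    rw [ZMod.natCast_self]
    ring
  have hΦ'val : ∀ y : ℤ, (((derivative Φ).eval y : ℤ) : ZMod p)
      = ((a : ZMod p) + eC) * (2 * (a : ZMod p)) := by
    intro y
    rw [hΦ, derivative_mul, eval_add, eval_mul, eval_mul]
    push_cast
    rw [hμ'0 y, hμval y, hσ'val y]
    ring
  have hΦ'ne : ∀ y : ℤ, ¬ (p:ℤ) ∣ (derivative Φ).eval y := by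
    intro y h
    have h1 := (ZMod.intCast_zmod_eq_zero_iff_dvd _ _).mpr h
    rw [hΦ'val y] at h1
    exact (mul_ne_zero haeC (mul_ne_zero h2z haz)) h1
  -- the sum
  have hv : ¬ (p:ℤ) ∣ (w * (d':ℤ)) := by
    intro h
    rcases hpI.dvd_mul.mp h with h | h
    · exact hw h
    · exact hd' (by exact_mod_cast h)
  set v : ℤ := w * (d':ℤ) with hvdef
  have hterm1 : ∀ x : ℤ, Efn (p^n) (w * Df p a b ε (d:ℤ) x) = Efn (p^m) (v * Φ.eval x) := by
    intro x
    rw [hDval x, show w * ((d:ℤ) * Φ.eval x) = ((p^t : ℕ) : ℤ) * (v * Φ.eval x) by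
      push_cast [hd1]; ring]
    rw [show p^n = p^t * p^m by rw [← pow_add]; congr 1]
    exact Efn_mul_left (pow_ne_zero _ hp.pos.ne') _ _
  have hS' : ∑ x ∈ Finset.range (p^m), Efn (p^m) (v * Φ.eval (x:ℤ)) = 0 := by
    rcases eq_or_lt_of_le hm1 with hm2 | hm2
    · -- m = 1 : linear case, p ∣ d
      have hm1' : m = 1 := hm2.symm
      have ht1 : 1 ≤ t := by omega
      have hpd : (p:ℤ) ∣ (d:ℤ) := by
        rw [hd1]
        exact Dvd.dvd.mul_right (dvd_pow_self _ (by omega)) _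
      have hΦlin : ∀ y : ℤ, ((Φ.eval y : ℤ) : ZMod p)
          = (a : ZMod p) * (2 * (1 + (a:ZMod p)) * (y : ZMod p) + (2*(b:ZMod p) + (ε:ZMod p))) := by
        intro y
        rw [hΦ, eval_mul]
        push_cast
        rw [hμval y, heC, if_pos hpd, add_zero]
        congr 1
        rw [hσval y]
        unfold Pf
        push_cast
        have hdz : ((d:ℕ) : ZMod p) = 0 :=
          (ZMod.natCast_eq_zero_iff d p).mpr (by exact_mod_cast hpd)
        rw [hdz]
        rw [show (y:ZMod p) + 0 = (y:ZMod p) by ring]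
        rw [ZMod.pow_card]
        ring
      have hpm : p^m = p := by rw [hm1', pow_one]
      rw [hpm]
      have hterm2 : ∀ x : ℕ, Efn p (v * Φ.eval (x:ℤ))
          = Efn p ((v * (2*a*(1+a))) * x + v * (a * (2*b + ε))) := by
        intro x
        apply Efn_congr hp.pos.ne'
        rw [← ZMod.intCast_zmod_eq_zero_iff_dvd]
        push_cast
        rw [hΦlin x]
        push_cast
        ring
      rw [Finset.sum_congr rfl (fun x _ => hterm2 x)]
      apply geom_vanish hp.pos _ _
      intro h
      rcases hpI.dvd_mul.mp h with h | h
      · exact hv h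
      rcases hpI.dvd_mul.mp h with h | h
      · rcases hpI.dvd_mul.mp h with h | h
        · have h2 : p ∣ 2 := by exact_mod_cast h
          have := Nat.le_of_dvd (by norm_num) h2
          omega
        · exact ha0 h
      · exact ha1 (by rw [show a + 1 = 1 + a by ring]; exact h)
    · -- m ≥ 2 : stationary phase
      set L : ℕ := p^(m-1) with hL
      have hL0 : L ≠ 0 := pow_ne_zero _ hp.pos.ne'
      have hps : p^m = L * p := by rw [hL, ← pow_succ]; congr 1; omega
      have hLsq : ((p:ℤ))^m ∣ ((L:ℤ))^2 := by
        rw [hL]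
        push_cast
        rw [← pow_mul]
        exact pow_dvd_pow _ (by omega)
      rw [hps, sum_range_mul' _ L p, Finset.sum_comm]
      apply Finset.sum_eq_zero
      intro y hy
      have hcoef : ¬ (p:ℤ) ∣ (v * (derivative Φ).eval (y:ℤ)) := by
        intro h
        rcases hpI.dvd_mul.mp h with h | h
        · exact hv h
        · exact hΦ'ne (y:ℤ) h
      have hterm3 : ∀ i : ℕ, Efn (L*p) (v * Φ.eval ((i*L + y : ℕ):ℤ))
          = Efn (L*p) (v * Φ.eval (y:ℤ))
            * Efn p ((v * (derivative Φ).eval (y:ℤ)) * i) := by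
        intro i
        obtain ⟨k, hk⟩ := Φ.binomExpansion (y:ℤ) ((i:ℤ) * (L:ℕ))
        have harg : ((i*L + y : ℕ):ℤ) = (y:ℤ) + (i:ℤ)*(L:ℕ) := by push_cast; ring
        rw [harg, hk]
        rw [show v * (Φ.eval (y:ℤ) + (derivative Φ).eval (y:ℤ) * ((i:ℤ)*(L:ℕ)) + k * ((i:ℤ)*(L:ℕ))^2)
            = (v * Φ.eval (y:ℤ) + (L:ℤ) * ((v * (derivative Φ).eval (y:ℤ)) * i))
              + (v*k*(i:ℤ)^2) * ((L:ℕ):ℤ)^2 by push_cast; ring]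
        rw [Efn_add, Efn_add]
        have h3 : Efn (L*p) ((v*k*(i:ℤ)^2) * ((L:ℕ):ℤ)^2) = 1 := by
          have hdvd0 : ((L*p : ℕ):ℤ) ∣ ((v*k*(i:ℤ)^2) * ((L:ℕ):ℤ)^2 - 0) := by
            rw [sub_zero]
            apply Dvd.dvd.mul_left _ (v*k*(i:ℤ)^2)
            have : ((L*p : ℕ):ℤ) = ((p:ℤ))^m := by rw [← hps]; push_cast; ring
            rw [this]
            exact hLsq
          rw [Efn_congr (by positivity) hdvd0, Efn_zero]
        rw [h3, mul_one]
        congr 1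
        exact Efn_mul_left hL0 p _
      rw [Finset.sum_congr rfl (fun i _ => hterm3 i), ← Finset.mul_sum]
      have h4 : ∑ i ∈ Finset.range p, Efn p ((v * (derivative Φ).eval (y:ℤ)) * i) = 0 := by
        have h5 := geom_vanish hp.pos hcoef 0
        simpa using h5
      rw [h4, mul_zero]
  -- assemble
  have hsum : ∑ x ∈ Finset.range (p^n), Efn (p^n) (w * Df p a b ε (d:ℤ) (x:ℤ))
      = ∑ i ∈ Finset.range (p^t), ∑ j ∈ Finset.range (p^m), Efn (p^m) (v * Φ.eval ((j:ℕ):ℤ)) := by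
    have he1 : ∑ x ∈ Finset.range (p^n), Efn (p^n) (w * Df p a b ε (d:ℤ) (x:ℤ))
        = ∑ x ∈ Finset.range (p^n), Efn (p^m) (v * Φ.eval (x:ℤ)) :=
      Finset.sum_congr rfl (fun x _ => hterm1 (x:ℤ))
    rw [he1]
    rw [show p^n = p^m * p^t by rw [← pow_add]; congr 1; omega]
    rw [sum_range_mul' _ (p^m) (p^t)]
    apply Finset.sum_congr rfl
    intro i _
    apply Finset.sum_congr rfl
    intro j _
    apply Efn_congr (pow_ne_zero _ hp.pos.ne')
    have hdvd : ((p^m : ℕ):ℤ) ∣ (Φ.eval ((i * p^m + j : ℕ):ℤ) - Φ.eval ((j:ℕ):ℤ)) := by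
      refine dvd_trans ?_ (Polynomial.sub_dvd_eval_sub _ _ Φ)
      push_cast
      exact ⟨i, by ring⟩
    rw [show v * Φ.eval ((i * p^m + j : ℕ):ℤ) - v * Φ.eval ((j:ℕ):ℤ)
        = v * (Φ.eval ((i * p^m + j : ℕ):ℤ) - Φ.eval ((j:ℕ):ℤ)) by ring]
    exact Dvd.dvd.mul_left hdvd v
  rw [hsum, Finset.sum_congr rfl (fun i _ => hS'), Finset.sum_const]
  simp

lemma Df_dvd_sub_two {p : ℕ} {a b ε d R x y : ℤ}
    (hpar : (¬ (2:ℤ) ∣ ε ∧ ¬ (2:ℤ) ∣ R) ∨ ((2:ℤ) ∣ ε ∧ (2:ℤ) ∣ R))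
    (h : R ∣ x - y) :
    2 * R ∣ Df p a b ε d x - Df p a b ε d y := by
  have h1 := Af_sub_dvd_twoR (p := p) (a := a) (b := b) hpar
    (show R ∣ (x + d) - (y + d) by simpa using h)
  have h2 := Af_sub_dvd_twoR (p := p) (a := a) (b := b) hpar h
  have h3 := dvd_sub h1 h2
  rw [show Df p a b ε d x - Df p a b ε d y
      = (Af p a b ε (x + d) - Af p a b ε (y + d)) - (Af p a b ε x - Af p a b ε y) by unfold Df; ring]
  exact h3

/-- Reduction of bijectivity mod `N` to bijectivity mod `Q` for `Q ∣ N`. -/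
lemma bij_reduce {N Q : ℕ} (hQN : Q ∣ N) (hN : N ≠ 0) (hQ0 : Q ≠ 0) (p : ℕ) (a b : ℤ)
    (h : Function.Bijective (fun x : ZMod N => x ^ p + (a : ZMod N) * x + (b : ZMod N))) :
    Function.Bijective (fun x : ZMod Q => x ^ p + (a : ZMod Q) * x + (b : ZMod Q)) := by
  haveI : NeZero N := ⟨hN⟩
  haveI : NeZero Q := ⟨hQ0⟩
  have hsurj : Function.Surjective
      (fun x : ZMod Q => x ^ p + (a : ZMod Q) * x + (b : ZMod Q)) := by
    intro y
    let π := ZMod.castHom hQN (ZMod Q)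
    obtain ⟨x, hx⟩ := h.surjective ((y.val : ℕ) : ZMod N)
    refine ⟨π x, ?_⟩
    show (π x) ^ p + (a : ZMod Q) * (π x) + (b : ZMod Q) = y
    have hcomm : π (x ^ p + (a : ZMod N) * x + (b : ZMod N))
        = (π x) ^ p + (a : ZMod Q) * (π x) + (b : ZMod Q) := by
      simp [map_add, map_mul, map_pow, map_intCast]
    have hx' : π ((fun x : ZMod N => x ^ p + (a : ZMod N) * x + (b : ZMod N)) x)
        = π ((y.val : ℕ) : ZMod N) := by rw [hx]
    simp only at hx'
    rw [hcomm] at hx'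
    rw [hx']
    rw [map_natCast]
    exact ZMod.natCast_rightInverse y
  exact Finite.surjective_iff_bijective.mp hsurj

lemma slope_unit {Q : ℕ} (hQ1 : 1 < Q) {p : ℕ} (hp0 : p ≠ 0) (a b : ℤ)
    (h : Function.Bijective (fun x : ZMod Q => x ^ p + (a : ZMod Q) * x + (b : ZMod Q))) :
    ¬ (Q:ℤ) ∣ (1 + a) := by
  haveI : Fact (1 < Q) := ⟨hQ1⟩
  intro hdvd
  have h0 : ((1 + a : ℤ) : ZMod Q) = 0 := (ZMod.intCast_zmod_eq_zero_iff_dvd _ _).mpr hdvd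
  push_cast at h0
  have he : (fun x : ZMod Q => x ^ p + (a : ZMod Q) * x + (b : ZMod Q)) 0
      = (fun x : ZMod Q => x ^ p + (a : ZMod Q) * x + (b : ZMod Q)) 1 := by
    simp only [zero_pow hp0, one_pow, mul_zero, mul_one]
    ring_nf
    linear_combination -h0
  exact zero_ne_one (h.injective he)

lemma scenarioOdd (p : ℕ) (a b ε u : ℤ) (d : ℕ)
    (Q R : ℕ) (hQ1 : 1 < Q) (hR0 : 0 < R) (hQodd : ¬ 2 ∣ Q) (hco : Nat.Coprime Q R)
    (hε : ε = ((Q * R) % 2 : ℕ))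
    (huQ : IsCoprime (Q:ℤ) u)
    (hvan : ∀ w : ℤ, IsCoprime (Q:ℤ) w →
      ∑ x ∈ Finset.range Q, Efn Q (w * Df p a b ε (d:ℤ) (x:ℤ)) = 0) :
    ∑ k ∈ Finset.range (Q * R), Efn (2 * (Q * R)) (u * Df p a b ε (d:ℤ) (k:ℤ)) = 0 := by
  have hQ0 : 0 < Q := by omega
  have hQne : Q ≠ 0 := by omega
  have hRne : R ≠ 0 := hR0.ne'
  have hQ2 : Nat.Coprime Q 2 :=
    ((Nat.Prime.coprime_iff_not_dvd Nat.prime_two).mpr hQodd).symm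
  have hco2 : Nat.Coprime Q (2 * R) := Nat.Coprime.mul_right hQ2 hco
  have hcoZ : IsCoprime (Q:ℤ) ((2 * R : ℕ):ℤ) := Nat.isCoprime_iff_coprime.mpr hco2
  obtain ⟨c₂, c₁, hbez⟩ := hcoZ
  -- parity dichotomy
  have hpar : (¬ (2:ℤ) ∣ ε ∧ ¬ (2:ℤ) ∣ (R:ℤ)) ∨ ((2:ℤ) ∣ ε ∧ (2:ℤ) ∣ (R:ℤ)) := by
    rcases Nat.even_or_odd (Q * R) with hNe | hNo
    · right
      have h2R : 2 ∣ R := by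
        rcases (Nat.Prime.dvd_mul Nat.prime_two).mp hNe.two_dvd with h | h
        · exact absurd h hQodd
        · exact h
      constructor
      · rw [hε]
        have : (Q * R) % 2 = 0 := Nat.even_iff.mp hNe
        rw [this]
        simp
      · exact_mod_cast h2R
    · left
      have hmod : (Q * R) % 2 = 1 := Nat.odd_iff.mp hNo
      constructor
      · rw [hε, hmod]
        norm_num
      · intro h2R
        have h2R' : 2 ∣ R := by exact_mod_cast h2R
        have hd : 2 ∣ Q * R := Dvd.dvd.mul_left h2R' Q
        have hmod2 : (Q * R) % 2 = 1 := Nat.odd_iff.mp hNo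
        omega
  set F : ℕ → ℂ := fun k => Efn Q (c₁ * (u * Df p a b ε (d:ℤ) (k:ℤ))) with hF
  set G : ℕ → ℂ := fun k => Efn (2 * R) (c₂ * (u * Df p a b ε (d:ℤ) (k:ℤ))) with hG
  have hterm : ∀ k : ℕ, Efn (2 * (Q * R)) (u * Df p a b ε (d:ℤ) (k:ℤ)) = F k * G k := by
    intro k
    set tt := u * Df p a b ε (d:ℤ) (k:ℤ) with htt
    have h2N : 2 * (Q * R) = Q * (2 * R) := by ring
    rw [h2N]
    have harg : tt = (Q:ℤ) * (c₂ * tt) + ((2 * R : ℕ):ℤ) * (c₁ * tt) := by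
      have : (c₂ * (Q:ℤ) + c₁ * ((2*R:ℕ):ℤ)) * tt = tt := by rw [hbez]; ring
      linear_combination -this
    rw [show Efn (Q * (2 * R)) tt = Efn (Q * (2 * R)) ((Q:ℤ) * (c₂ * tt) + ((2 * R : ℕ):ℤ) * (c₁ * tt)) from by rw [← harg]]
    rw [Efn_add]
    rw [Efn_mul_left hQne (2 * R) (c₂ * tt)]
    rw [show Q * (2 * R) = (2 * R) * Q from mul_comm _ _]
    rw [Efn_mul_left (by omega : 2 * R ≠ 0) Q (c₁ * tt)]
    rw [mul_comm]
  have hsum := Finset.sum_congr rfl (fun k (_ : k ∈ Finset.range (Q * R)) => hterm k)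
  rw [hsum]
  have hFper : ∀ k k' : ℕ, k ≡ k' [MOD Q] → F k = F k' := by
    intro k k' hkk
    apply Efn_congr hQne
    have h1 : (Q:ℤ) ∣ ((k:ℤ) - (k':ℤ)) := by
      have := hkk.dvd
      exact_mod_cast (Nat.ModEq.dvd hkk.symm)
    have h2 := Df_dvd_sub (p := p) (a := a) (b := b) (ε := ε) (d := (d:ℤ)) h1
    rw [show c₁ * (u * Df p a b ε (d:ℤ) (k:ℤ)) - c₁ * (u * Df p a b ε (d:ℤ) (k':ℤ))
        = (c₁ * u) * (Df p a b ε (d:ℤ) (k:ℤ) - Df p a b ε (d:ℤ) (k':ℤ)) by ring]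
    exact h2.mul_left _
  have hGper : ∀ k k' : ℕ, k ≡ k' [MOD R] → G k = G k' := by
    intro k k' hkk
    apply Efn_congr (by omega)
    have h1 : ((R:ℕ):ℤ) ∣ ((k:ℤ) - (k':ℤ)) := by
      exact_mod_cast (Nat.ModEq.dvd hkk.symm)
    have h2 := Df_dvd_sub_two (p := p) (a := a) (b := b) (ε := ε) (d := (d:ℤ)) hpar h1
    rw [show c₂ * (u * Df p a b ε (d:ℤ) (k:ℤ)) - c₂ * (u * Df p a b ε (d:ℤ) (k':ℤ))
        = (c₂ * u) * (Df p a b ε (d:ℤ) (k:ℤ) - Df p a b ε (d:ℤ) (k':ℤ)) by ring]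
    have h3 : ((2 * R : ℕ):ℤ) ∣ (Df p a b ε (d:ℤ) (k:ℤ) - Df p a b ε (d:ℤ) (k':ℤ)) := by
      push_cast
      exact h2
    exact h3.mul_left _
  rw [split_sum hQ0 hR0 hco F G hFper hGper]
  have hSQ : ∑ i ∈ Finset.range Q, F i = 0 := by
    have hc₁ : IsCoprime (Q:ℤ) c₁ := ⟨c₂, ((2 * R : ℕ):ℤ), by linear_combination hbez⟩
    have hw : IsCoprime (Q:ℤ) (c₁ * u) := hc₁.mul_right huQ
    calc ∑ i ∈ Finset.range Q, F i
        = ∑ i ∈ Finset.range Q, Efn Q ((c₁ * u) * Df p a b ε (d:ℤ) (i:ℤ)) := by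
          apply Finset.sum_congr rfl
          intro x _
          show Efn Q (c₁ * (u * Df p a b ε (d:ℤ) (x:ℤ))) = _
          congr 1
          ring
      _ = 0 := hvan (c₁ * u) hw
  rw [hSQ, zero_mul]

lemma Efn_two_odd {c : ℤ} (hc : ¬ (2:ℤ) ∣ c) : Efn 2 c = -1 := by
  obtain ⟨j, hj⟩ : ∃ j, c = 2 * j + 1 := ⟨(c-1)/2, by omega⟩
  have h1 : Efn 2 c = Efn 2 (2 * j) * Efn 2 1 := by
    rw [← Efn_add, ← hj]
  have h2 : Efn 2 (2 * j) = 1 := by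
    have h3 : (2:ℤ) ∣ (2 * j - 0) := ⟨j, by ring⟩
    rw [Efn_congr (by norm_num) h3, Efn_zero]
  have h4 : Efn 2 1 = -1 := by
    rw [Efn]
    rw [show (2 * (Real.pi:ℂ) * Complex.I * ((1:ℤ):ℂ) / ((2:ℕ):ℂ)) = (Real.pi:ℂ) * Complex.I by
      push_cast; ring]
    exact Complex.exp_pi_mul_I
  rw [h1, h2, h4, one_mul]

lemma four_sum_vanish {c : ℤ} (hc : ¬ (2:ℤ) ∣ c) : Efn 4 c + Efn 4 (-c) = 0 := by
  set x := Efn 4 c with hx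
  have hx2 : x * x = -1 := by
    have hml := Efn_mul_left (M₁ := 2) (by norm_num) 2 c
    calc x * x = Efn 4 (c + c) := by rw [hx, ← Efn_add]
      _ = Efn (2 * 2) (((2:ℕ):ℤ) * c) := by
          congr 1
          push_cast
          ring
      _ = Efn 2 c := hml
      _ = -1 := Efn_two_odd hc
  have hxinv : Efn 4 (-c) * x = 1 := by
    rw [hx, ← Efn_add, show -c + c = 0 by ring, Efn_zero]
  have hxne : x ≠ 0 := by
    intro h
    rw [h, mul_zero] at hx2
    norm_num at hx2
  have h5 : (x + Efn 4 (-c)) * x = 0 := by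
    rw [add_mul, hx2, hxinv]
    ring
  rcases mul_eq_zero.mp h5 with h | h
  · linear_combination h
  · exact absurd h hxne

lemma sq_odd_mod4 {z : ℤ} (h : ¬ (2:ℤ) ∣ z) : (4:ℤ) ∣ z^2 - 1 := by
  obtain ⟨j, hj⟩ : ∃ j, z = 2 * j + 1 := ⟨(z-1)/2, by omega⟩
  exact ⟨j^2 + j, by rw [hj]; ring⟩

lemma sq_even_mod4 {z : ℤ} (h : (2:ℤ) ∣ z) : (4:ℤ) ∣ z^2 := by
  obtain ⟨j, hj⟩ := h
  exact ⟨j^2, by rw [hj]; ring⟩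

lemma scenarioTwo (p : ℕ) (hp0 : p ≠ 0) (a b u : ℤ) (d : ℕ)
    (R : ℕ) (hR0 : 0 < R) (hRodd : ¬ 2 ∣ R)
    (ha2 : (2:ℤ) ∣ a) (hd2 : ¬ (2:ℤ) ∣ (d:ℤ)) (hu2 : ¬ (2:ℤ) ∣ u) :
    ∑ k ∈ Finset.range (2 * R), Efn (2 * (2 * R)) (u * Df p a b 0 (d:ℤ) (k:ℤ)) = 0 := by
  have hRne : R ≠ 0 := hR0.ne'
  have hRoddZ : ¬ (2:ℤ) ∣ (R:ℤ) := by exact_mod_cast hRodd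
  have hco4R : IsCoprime (4:ℤ) ((R:ℕ):ℤ) := by
    have h1 : IsCoprime (2:ℤ) ((R:ℕ):ℤ) := (Int.prime_two.coprime_iff_not_dvd).mpr hRoddZ
    have h2 : IsCoprime ((2:ℤ)^2) ((R:ℕ):ℤ) := h1.pow_left
    rw [show (2:ℤ)^2 = 4 by norm_num] at h2
    exact h2
  obtain ⟨c₂, c₁, hbez⟩ := hco4R
  -- mod-2 congruence for Df modulo 4
  have hDf4 : ∀ x y : ℤ, (2:ℤ) ∣ x - y → (4:ℤ) ∣ Df p a b 0 (d:ℤ) x - Df p a b 0 (d:ℤ) y := by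
    intro x y hxy
    have key : ∀ m m' : ℤ, (2:ℤ) ∣ m - m' → (4:ℤ) ∣ Af p a b 0 m - Af p a b 0 m' := by
      intro m m' hmm
      rw [Af_sub_factor]
      have hX : (2:ℤ) ∣ Pf p a b m - Pf p a b m' :=
        Int.ModEq.dvd (Pf_modeq (modeq_of_dvd_sub hmm)).symm
      have hY : (2:ℤ) ∣ Pf p a b m + Pf p a b m' + 0 := by
        rw [show Pf p a b m + Pf p a b m' + 0
            = (Pf p a b m - Pf p a b m') + 2 * Pf p a b m' by ring]
        exact dvd_add hX ⟨_, rfl⟩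
      rw [show (4:ℤ) = 2 * 2 by norm_num]
      exact mul_dvd_mul hX hY
    have h1 := key (x + d) (y + d) (by simpa using hxy)
    have h2 := key x y hxy
    have h3 := dvd_sub h1 h2
    rw [show Df p a b 0 (d:ℤ) x - Df p a b 0 (d:ℤ) y
        = (Af p a b 0 (x + d) - Af p a b 0 (y + d)) - (Af p a b 0 x - Af p a b 0 y) by unfold Df; ring]
    exact h3
  set F : ℕ → ℂ := fun k => Efn 4 (c₁ * (u * Df p a b 0 (d:ℤ) (k:ℤ))) with hF
  set G : ℕ → ℂ := fun k => Efn R (c₂ * (u * Df p a b 0 (d:ℤ) (k:ℤ))) with hG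
  have hterm : ∀ k : ℕ, Efn (2 * (2 * R)) (u * Df p a b 0 (d:ℤ) (k:ℤ)) = F k * G k := by
    intro k
    set tt := u * Df p a b 0 (d:ℤ) (k:ℤ) with htt
    have h2N : 2 * (2 * R) = 4 * R := by ring
    rw [h2N]
    have harg : tt = ((4:ℕ):ℤ) * (c₂ * tt) + ((R:ℕ):ℤ) * (c₁ * tt) := by
      have h0 : (c₂ * (4:ℤ) + c₁ * ((R:ℕ):ℤ)) * tt = tt := by rw [hbez]; ring
      push_cast
      linear_combination -h0
    rw [show Efn (4 * R) tt = Efn (4 * R) (((4:ℕ):ℤ) * (c₂ * tt) + ((R:ℕ):ℤ) * (c₁ * tt)) from by rw [← harg]]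
    rw [Efn_add]
    rw [Efn_mul_left (by norm_num : (4:ℕ) ≠ 0) R (c₂ * tt)]
    rw [show (4 : ℕ) * R = R * 4 from mul_comm _ _]
    rw [Efn_mul_left hRne 4 (c₁ * tt)]
    rw [mul_comm]
  have hsum := Finset.sum_congr rfl (fun k (_ : k ∈ Finset.range (2 * R)) => hterm k)
  rw [hsum]
  have hFper : ∀ k k' : ℕ, k ≡ k' [MOD 2] → F k = F k' := by
    intro k k' hkk
    apply Efn_congr (by norm_num)
    have h1 : (2:ℤ) ∣ ((k:ℤ) - (k':ℤ)) := by exact_mod_cast (Nat.ModEq.dvd hkk.symm)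
    have h2 := hDf4 (k:ℤ) (k':ℤ) h1
    rw [show c₁ * (u * Df p a b 0 (d:ℤ) (k:ℤ)) - c₁ * (u * Df p a b 0 (d:ℤ) (k':ℤ))
        = (c₁ * u) * (Df p a b 0 (d:ℤ) (k:ℤ) - Df p a b 0 (d:ℤ) (k':ℤ)) by ring]
    exact_mod_cast h2.mul_left (c₁ * u)
  have hGper : ∀ k k' : ℕ, k ≡ k' [MOD R] → G k = G k' := by
    intro k k' hkk
    apply Efn_congr hRne
    have h1 : ((R:ℕ):ℤ) ∣ ((k:ℤ) - (k':ℤ)) := by exact_mod_cast (Nat.ModEq.dvd hkk.symm)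
    have h2 := Df_dvd_sub (p := p) (a := a) (b := b) (ε := (0:ℤ)) (d := (d:ℤ)) h1
    rw [show c₂ * (u * Df p a b 0 (d:ℤ) (k:ℤ)) - c₂ * (u * Df p a b 0 (d:ℤ) (k':ℤ))
        = (c₂ * u) * (Df p a b 0 (d:ℤ) (k:ℤ) - Df p a b 0 (d:ℤ) (k':ℤ)) by ring]
    exact h2.mul_left _
  rw [split_sum (by norm_num) hR0 (((Nat.Prime.coprime_iff_not_dvd Nat.prime_two).mpr hRodd)) F G hFper hGper]
  -- now show the 2-point sum vanishes
  have hS2 : ∑ i ∈ Finset.range 2, F i = 0 := by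
    rw [Finset.sum_range_succ, Finset.sum_range_one]
    set D0 := Df p a b 0 (d:ℤ) ((0:ℕ):ℤ) with hD0def
    set D1 := Df p a b 0 (d:ℤ) ((1:ℕ):ℤ) with hD1def
    have hDf0 : D0 = (Pf p a b (((0:ℕ):ℤ)+d))^2 - (Pf p a b ((0:ℕ):ℤ))^2 := by
      rw [hD0def]; unfold Df Af; ring
    have hDf1 : D1 = (Pf p a b (((1:ℕ):ℤ)+d))^2 - (Pf p a b ((1:ℕ):ℤ))^2 := by
      rw [hD1def]; unfold Df Af; ring
    set B0 := Pf p a b ((0:ℕ):ℤ) with hB0def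
    set B1 := Pf p a b ((1:ℕ):ℤ) with hB1def
    set A0 := Pf p a b (((0:ℕ):ℤ)+d) with hA0def
    set A1 := Pf p a b (((1:ℕ):ℤ)+d) with hA1def
    have h10 : B1 - B0 = 1 + a := by
      rw [hB0def, hB1def]; unfold Pf
      push_cast
      rw [one_pow, zero_pow hp0]
      ring
    have hd0 : A0 - B0 = (d:ℤ)^p + a*d := by
      rw [hA0def, hB0def]; unfold Pf
      push_cast
      rw [zero_add, zero_pow hp0]
      ring
    have h1d : A1 - A0 = ((1+(d:ℤ))^p - (d:ℤ)^p) + a := by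
      rw [hA1def, hA0def]; unfold Pf
      push_cast
      rw [zero_add]
      ring
    have hdp_odd : ¬ (2:ℤ) ∣ (d:ℤ)^p := fun h => hd2 (Int.prime_two.dvd_of_dvd_pow h)
    have h1d_even : (2:ℤ) ∣ (1+(d:ℤ))^p := by
      apply dvd_pow _ hp0
      have : ∃ j : ℤ, (d:ℤ) = 2*j+1 := ⟨((d:ℤ)-1)/2, by omega⟩
      obtain ⟨j, hj⟩ := this
      exact ⟨j+1, by omega⟩
    -- parity of the four values
    have hkey : ¬ (2:ℤ) ∣ D0 ∧ (4:ℤ) ∣ (D1 + D0) := by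
      have hX : ¬ (2:ℤ) ∣ ((d:ℤ)^p + a*d) := by
        intro h
        have h2 : (2:ℤ) ∣ a * d := ha2.mul_right d
        have h3 : (2:ℤ) ∣ (d:ℤ)^p := by
          have := dvd_sub h h2
          simpa using this
        exact hdp_odd h3
      have hY : (2:ℤ) ∣ ((1+(d:ℤ))^p - (d:ℤ)^p + a) → False := by
        intro h
        have h2 : (2:ℤ) ∣ ((1+(d:ℤ))^p - (d:ℤ)^p + a) - (1+(d:ℤ))^p - a := by
          exact dvd_sub (dvd_sub h h1d_even) ha2
        have h3 : (2:ℤ) ∣ (d:ℤ)^p := by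
          have h4 : ((1+(d:ℤ))^p - (d:ℤ)^p + a) - (1+(d:ℤ))^p - a = -(d:ℤ)^p := by ring
          rw [h4] at h2
          exact (dvd_neg.mp h2)
        exact hdp_odd h3
      have hodd1a : ¬ (2:ℤ) ∣ (1+a) := by
        intro h
        obtain ⟨i, hi⟩ := h
        obtain ⟨j, hj⟩ := ha2
        omega
      rcases em ((2:ℤ) ∣ B0) with hB0 | hB0
      · -- B0 even, A0 odd, B1 odd, A1 even
        have hA0 : ¬ (2:ℤ) ∣ A0 := by
          intro h
          exact hX (by rw [← hd0]; exact dvd_sub h hB0)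
        have hB1 : ¬ (2:ℤ) ∣ B1 := by
          intro h
          exact hodd1a (by rw [← h10]; exact dvd_sub h hB0)
        have hA1 : (2:ℤ) ∣ A1 := by
          rcases em ((2:ℤ) ∣ A1) with h | h
          · exact h
          · exfalso
            apply hY
            rw [← h1d]
            obtain ⟨i, hi⟩ : ∃ i, A1 = 2*i+1 := ⟨(A1-1)/2, by omega⟩
            obtain ⟨j, hj⟩ : ∃ j, A0 = 2*j+1 := ⟨(A0-1)/2, by omega⟩
            exact ⟨i - j, by omega⟩
        have s1 := sq_even_mod4 hB0
        have s2 := sq_odd_mod4 hA0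
        have s3 := sq_odd_mod4 hB1
        have s4 := sq_even_mod4 hA1
        constructor
        · rw [hDf0]
          obtain ⟨i, hi⟩ := s1
          obtain ⟨j, hj⟩ := s2
          intro hcon
          obtain ⟨l, hl⟩ := hcon
          omega
        · rw [hDf0, hDf1]
          obtain ⟨i, hi⟩ := s1
          obtain ⟨j, hj⟩ := s2
          obtain ⟨i2, hi2⟩ := s3
          obtain ⟨j2, hj2⟩ := s4
          exact ⟨j2 - i2 + j - i, by omega⟩
      · -- B0 odd, A0 even, B1 even, A1 odd
        have hA0 : (2:ℤ) ∣ A0 := by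
          rcases em ((2:ℤ) ∣ A0) with h | h
          · exact h
          · exfalso
            apply hX
            rw [← hd0]
            obtain ⟨i, hi⟩ : ∃ i, A0 = 2*i+1 := ⟨(A0-1)/2, by omega⟩
            obtain ⟨j, hj⟩ : ∃ j, B0 = 2*j+1 := ⟨(B0-1)/2, by omega⟩
            exact ⟨i - j, by omega⟩
        have hB1 : (2:ℤ) ∣ B1 := by
          rcases em ((2:ℤ) ∣ B1) with h | h
          · exact h
          · exfalso
            apply hodd1a
            rw [← h10]
            obtain ⟨i, hi⟩ : ∃ i, B1 = 2*i+1 := ⟨(B1-1)/2, by omega⟩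
            obtain ⟨j, hj⟩ : ∃ j, B0 = 2*j+1 := ⟨(B0-1)/2, by omega⟩
            exact ⟨i - j, by omega⟩
        have hA1 : ¬ (2:ℤ) ∣ A1 := by
          intro h
          exact hY (by rw [← h1d]; exact dvd_sub h hA0)
        have s1 := sq_odd_mod4 hB0
        have s2 := sq_even_mod4 hA0
        have s3 := sq_even_mod4 hB1
        have s4 := sq_odd_mod4 hA1
        constructor
        · rw [hDf0]
          obtain ⟨i, hi⟩ := s1
          obtain ⟨j, hj⟩ := s2
          intro hcon
          obtain ⟨l, hl⟩ := hcon
          omega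
        · rw [hDf0, hDf1]
          obtain ⟨i, hi⟩ := s1
          obtain ⟨j, hj⟩ := s2
          obtain ⟨i2, hi2⟩ := s3
          obtain ⟨j2, hj2⟩ := s4
          exact ⟨j2 - i2 + j - i, by omega⟩
    obtain ⟨hD0odd, hDsum⟩ := hkey
    have hc1odd : ¬ (2:ℤ) ∣ c₁ := by
      intro h
      have h1 : (2:ℤ) ∣ c₁ * (R:ℤ) := h.mul_right _
      have h2 : (2:ℤ) ∣ c₂ * 4 := ⟨c₂ * 2, by ring⟩
      have h3 : (2:ℤ) ∣ (1:ℤ) := by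
        rw [← hbez]
        exact dvd_add h2 h1
      norm_num at h3
    have hcodd : ¬ (2:ℤ) ∣ (c₁ * (u * D0)) := by
      intro h
      rcases (Int.Prime.dvd_mul' Nat.prime_two (by exact_mod_cast h)) with h | h
      · exact hc1odd (by exact_mod_cast h)
      rcases (Int.Prime.dvd_mul' Nat.prime_two (by exact_mod_cast h)) with h | h
      · exact hu2 (by exact_mod_cast h)
      · exact hD0odd (by exact_mod_cast h)
    have hF0 : F 0 = Efn 4 (c₁ * (u * D0)) := by rw [hF]
    have hF1' : F 1 = Efn 4 (-(c₁ * (u * D0))) := by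
      rw [hF]
      apply Efn_congr (by norm_num)
      rw [show c₁ * (u * D1) - -(c₁ * (u * D0)) = (c₁ * u) * (D1 + D0) by ring]
      exact_mod_cast hDsum.mul_left (c₁ * u)
    rw [hF0, hF1']
    exact four_sum_vanish hcodd
  rw [hS2, zero_mul]

lemma isCoprime_not_dvd {M : ℕ} (hM : 1 < M) {w : ℤ} (h : IsCoprime (M:ℤ) w)
    (hdv : (M:ℤ) ∣ w) : False := by
  obtain ⟨α, β, hc⟩ := h
  have h1 : (M:ℤ) ∣ 1 := by
    rw [← hc]
    exact dvd_add (Dvd.intro_left α rfl) (hdv.mul_left β)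
  have h2 : (M:ℤ) ≤ 1 := Int.le_of_dvd one_pos h1
  have : (1:ℤ) < (M:ℤ) := by exact_mod_cast hM
  omega

/-- Theorem 4.1(i): with `p ≥ 3` prime, `n ≥ 2`, `N = p^n·N₁` as in Lemma 3.3, a ZC
sequence `s` of length `N` with root index `u`, and the permutation polynomial
`π(x) = x^p + a·x + b` over `ℤ_N` (`a ≢ 0, −1 (mod p)`), the interleaved sequence `s∘π`
is a CAZAC sequence. -/
theorem stmt_8 (p : ℕ) (hp : p.Prime) (hp3 : 3 ≤ p) (n : ℕ) (hn : 2 ≤ n)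
    (N N₁ : ℕ) (hN : N = p ^ n * N₁) (hcop : Nat.Coprime p N₁)
    (r : ℕ) (q : Fin r → ℕ) (hq : ∀ i, (q i).Prime) (hinj : Function.Injective q)
    (hN₁ : N₁ = ∏ i, q i) (hqdvd : ∀ i, (q i - 1) ∣ (p - 1))
    (a b : ℤ)
    (hPP : Function.Bijective
      (fun x : ZMod N => x ^ p + (a : ZMod N) * x + (b : ZMod N)))
    (ha0 : ¬ a ≡ 0 [ZMOD (p : ℤ)]) (ha1 : ¬ a ≡ -1 [ZMOD (p : ℤ)])
    (u : ℤ) (hu : Int.gcd u (N : ℤ) = 1)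
    (s : ℤ → ℂ)
    (hs : ∀ k : ℤ, s k =
      Complex.exp (-(Real.pi : ℂ) * Complex.I * (u : ℂ) *
        ((k : ℂ) ^ 2 + ((N % 2 : ℕ) : ℂ) * (k : ℂ)) / (N : ℂ))) :
    (∀ k : ℤ, ‖s (k ^ p + a * k + b)‖ = 1) ∧
    ∀ d : ℕ, 0 < d → d < N →
      ∑ k ∈ Finset.range N,
          s ((k : ℤ) ^ p + a * (k : ℤ) + b) *
            (starRingEnd ℂ)
              (s (((k : ℤ) + (d : ℤ)) ^ p + a * ((k : ℤ) + (d : ℤ)) + b)) = 0 := by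
  haveI : Fact p.Prime := ⟨hp⟩
  have hp0 : p ≠ 0 := by omega
  have hN₁pos : 0 < N₁ := by
    rw [hN₁]; exact Finset.prod_pos (fun i _ => (hq i).pos)
  have hppow_pos : 0 < p ^ n := pow_pos (by omega) n
  have hNpos : 0 < N := by rw [hN]; exact Nat.mul_pos hppow_pos hN₁pos
  have hNne : (N:ℂ) ≠ 0 := by exact_mod_cast hNpos.ne'
  set ε : ℤ := ((N % 2 : ℕ) : ℤ) with hεdef
  -- amplitude part
  have habs : ∀ k : ℤ, ‖s (k ^ p + a * k + b)‖ = 1 := by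
    intro k
    rw [hs]
    rw [show -(Real.pi : ℂ) * Complex.I * (u : ℂ) *
        (((k ^ p + a * k + b : ℤ) : ℂ) ^ 2 + ((N % 2 : ℕ) : ℂ) * ((k ^ p + a * k + b : ℤ) : ℂ)) / (N : ℂ)
        = ((-(Real.pi) * (u : ℝ) *
        (((k ^ p + a * k + b : ℤ) : ℝ) ^ 2 + ((N % 2 : ℕ) : ℝ) * ((k ^ p + a * k + b : ℤ) : ℝ)) / (N : ℝ) : ℝ) : ℂ) * Complex.I by
      push_cast
      ring]
    exact Complex.norm_exp_ofReal_mul_I _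
  refine ⟨habs, ?_⟩
  intro d hd0 hdN
  -- rewrite s in Efn form
  have hs' : ∀ m : ℤ, s m = Efn (2 * N) (-(u * (m ^ 2 + ε * m))) := by
    intro m
    rw [hs m, Efn]
    congr 1
    rw [hεdef]
    generalize (N % 2 : ℕ) = e2
    push_cast
    field_simp [hNne]
  have hconj : ∀ (M : ℕ) (t : ℤ), (starRingEnd ℂ) (Efn M t) = Efn M (-t) := by
    intro M t
    rw [Efn, Efn, ← Complex.exp_conj]
    congr 1
    simp only [map_div₀, map_mul, Complex.conj_I, Complex.conj_ofReal, map_intCast,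
      map_natCast, map_ofNat]
    push_cast
    ring
  have hterm : ∀ k : ℕ,
      s ((k : ℤ) ^ p + a * (k : ℤ) + b) *
        (starRingEnd ℂ) (s (((k : ℤ) + (d : ℤ)) ^ p + a * ((k : ℤ) + (d : ℤ)) + b))
      = Efn (2 * N) (u * Df p a b ε (d:ℤ) (k:ℤ)) := by
    intro k
    show s (Pf p a b (k:ℤ)) * (starRingEnd ℂ) (s (Pf p a b ((k:ℤ) + (d:ℤ))))
      = Efn (2 * N) (u * Df p a b ε (d:ℤ) (k:ℤ))
    rw [hs' (Pf p a b (k:ℤ)), hs' (Pf p a b ((k:ℤ) + (d:ℤ))), hconj, ← Efn_add]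
    congr 1
    unfold Df Af
    ring
  have hsum := Finset.sum_congr rfl (fun k (_ : k ∈ Finset.range N) => hterm k)
  rw [hsum]
  -- coprimality of u
  have huN : IsCoprime u ((N:ℕ):ℤ) := Int.isCoprime_iff_gcd_eq_one.mpr hu
  -- mod-p conditions
  have ha0' : ¬ (p:ℤ) ∣ a := by
    intro h
    exact ha0 ((Int.modEq_zero_iff_dvd).mpr h)
  have ha1' : ¬ (p:ℤ) ∣ (a + 1) := by
    intro h
    apply ha1
    rw [Int.modEq_iff_dvd]
    rw [show (-1 : ℤ) - a = -(a+1) by ring]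
    exact h.neg_right
  by_cases hpn : p ^ n ∣ d
  · -- a bad q i exists
    have hqd : ¬ ∀ i, q i ∣ d := by
      intro hall
      have hprod : N₁ ∣ d := by
        rw [hN₁]
        have himg : ∏ x ∈ Finset.image q Finset.univ, x = ∏ i, q i :=
          Finset.prod_image (fun i _ j _ h => hinj h)
        rw [← himg]
        apply Finset.prod_primes_dvd
        · intro pp hpp
          simp only [Finset.mem_image, Finset.mem_univ, true_and] at hpp
          obtain ⟨i, hi⟩ := hpp
          rw [← hi]
          exact (hq i).prime
        · intro pp hpp
          simp only [Finset.mem_image, Finset.mem_univ, true_and] at hpp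
          obtain ⟨i, hi⟩ := hpp
          rw [← hi]
          exact hall i
      have hNd : N ∣ d := by
        rw [hN]
        exact (Nat.Coprime.pow_left n hcop).mul_dvd_of_dvd_of_dvd hpn hprod
      have := Nat.le_of_dvd hd0 hNd
      omega
    push_neg at hqd
    obtain ⟨i, hqi⟩ := hqd
    have hQprime := hq i
    set Q := q i with hQdef
    set R := p ^ n * ∏ j ∈ Finset.univ.erase i, q j with hRdef
    have hNQR : N = Q * R := by
      rw [hN, hN₁, hRdef, ← Finset.mul_prod_erase _ _ (Finset.mem_univ i)]
      ring
    have hRpos : 0 < R := by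
      rw [hRdef]
      exact Nat.mul_pos hppow_pos (Finset.prod_pos (fun j _ => (hq j).pos))
    have hQp : Q ≠ p := by
      intro h
      have hpd : p ∣ N₁ := by
        rw [hN₁, ← h]
        exact Finset.dvd_prod_of_mem q (Finset.mem_univ i)
      have h1 : p = 1 := Nat.Coprime.eq_one_of_dvd hcop hpd
      omega
    have hcoQR : Nat.Coprime Q R := by
      rw [hRdef]
      apply Nat.Coprime.mul_right
      · exact ((Nat.coprime_primes hQprime hp).mpr hQp).pow_right n
      · apply Nat.Coprime.prod_right
        intro j hj
        have hij : q i ≠ q j := by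
          intro h
          exact (Finset.mem_erase.mp hj).1 (hinj h).symm
        exact (Nat.coprime_primes hQprime (hq j)).mpr hij
    have hQdvdN : Q ∣ N := by rw [hNQR]; exact Dvd.intro R rfl
    have hQbij := bij_reduce hQdvdN hNpos.ne' hQprime.pos.ne' p a b hPP
    have hQslope := slope_unit hQprime.one_lt hp0 a b hQbij
    have huQ : IsCoprime ((Q:ℕ):ℤ) u := by
      apply IsCoprime.symm
      exact huN.of_isCoprime_of_dvd_right (by exact_mod_cast hQdvdN)
    by_cases hQ2 : Q = 2
    · -- scenario Q = 2
      have hRodd : ¬ 2 ∣ R := by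
        intro h2R
        have h1 : 2 ∣ Nat.gcd Q R := Nat.dvd_gcd (by omega) h2R
        rw [hcoQR] at h1
        omega
      have h2N : 2 ∣ N := by rw [hNQR, ← hQ2]; exact Dvd.intro R rfl
      have hε0 : ε = 0 := by
        have h2 : N % 2 = 0 := by omega
        rw [hεdef, h2]
        rfl
      have ha2 : (2:ℤ) ∣ a := by
        have h1 := slope_unit (by omega : 1 < 2) hp0 a b
          (by rw [← hQ2]; exact hQbij)
        omega
      have hu2 : ¬ (2:ℤ) ∣ u := by
        intro h2u
        have h1 : IsCoprime ((2:ℕ):ℤ) u := by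
          apply IsCoprime.symm
          exact huN.of_isCoprime_of_dvd_right (by exact_mod_cast h2N)
        exact isCoprime_not_dvd (by omega) h1 (by exact_mod_cast h2u)
      have hd2Z : ¬ (2:ℤ) ∣ (d:ℤ) := by
        intro h
        apply hqi
        show Q ∣ d
        rw [hQ2]
        exact_mod_cast h
      rw [hε0]
      rw [show N = 2 * R from by rw [hNQR, hQ2]]
      exact scenarioTwo p hp0 a b u d R hRpos hRodd ha2 hd2Z hu2
    · -- scenario odd prime Q
      have hQodd : ¬ 2 ∣ Q := by
        intro h
        rcases (Nat.Prime.eq_one_or_self_of_dvd hQprime 2 h) with h1 | h1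
        · omega
        · exact hQ2 h1.symm
      have hε' : ε = ((Q * R) % 2 : ℕ) := by rw [hεdef, hNQR]
      have hvan : ∀ w : ℤ, IsCoprime ((Q:ℕ):ℤ) w →
          ∑ x ∈ Finset.range Q, Efn Q (w * Df p a b ε (d:ℤ) (x:ℤ)) = 0 := by
        intro w hw
        apply oddq_vanish p Q hQprime hQ2 (by omega) (hqdvd i) a b ε hQslope d
        · intro h
          exact hqi (by exact_mod_cast h)
        · intro h
          exact isCoprime_not_dvd hQprime.one_lt hw h
      rw [hNQR]
      exact scenarioOdd p a b ε u d Q R hQprime.one_lt hRpos hQodd hcoQR hε' huQ hvan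
  · -- Q = p^n
    set Q := p ^ n with hQdef
    have hQ1 : 1 < Q := by
      rw [hQdef]
      calc 1 < p := by omega
        _ ≤ p ^ n := Nat.le_self_pow (by omega) p
    have hQodd : ¬ 2 ∣ Q := by
      intro h
      have h1 : 2 ∣ p := (Nat.Prime.dvd_of_dvd_pow Nat.prime_two h)
      have := Nat.le_of_dvd (by omega) h1
      rcases (Nat.Prime.eq_one_or_self_of_dvd hp 2 h1) with h2 | h2 <;> omega
    have hcoQR : Nat.Coprime Q N₁ := Nat.Coprime.pow_left n hcop
    have hQdvdN : Q ∣ N := by rw [hN]; exact Dvd.intro N₁ rfl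
    have hε' : ε = ((Q * N₁) % 2 : ℕ) := by rw [hεdef, hN]
    have huQ : IsCoprime ((Q:ℕ):ℤ) u := by
      apply IsCoprime.symm
      exact huN.of_isCoprime_of_dvd_right (by exact_mod_cast hQdvdN)
    have hvan : ∀ w : ℤ, IsCoprime ((Q:ℕ):ℤ) w →
        ∑ x ∈ Finset.range Q, Efn Q (w * Df p a b ε (d:ℤ) (x:ℤ)) = 0 := by
      intro w hw
      apply ppow_vanish p n hp hp3 hn a b ε ha0' ha1' d hd0 hpn
      intro h
      have hpQ : (p:ℤ) ∣ ((Q:ℕ):ℤ) := by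
        rw [hQdef]
        push_cast
        exact dvd_pow_self _ (by omega)
      obtain ⟨α, β, hc⟩ := hw
      have h1 : (p:ℤ) ∣ 1 := by
        rw [← hc]
        exact dvd_add ((hpQ.mul_left α)) ((h.mul_left β))
      have := Int.le_of_dvd one_pos h1
      have : (3:ℤ) ≤ (p:ℤ) := by exact_mod_cast hp3
      omega
    rw [hN]
    exact scenarioOdd p a b ε u d Q N₁ hQ1 hN₁pos hQodd hcoQR hε' huQ hvan

end CAZACProof
end

section
/- Let p ≥ 3 be a prime, n ≥ 2 an integer, and N = p^n·N₁, where gcd(p, N₁) = 1 and N₁ is either 1 or a product q₁q₂⋯q_r of distinct primes such that (q_i − 1) divides (p − 1) for every i. Let a, b be integers such that π(x) = x^p + a·x + b is a permutation polynomial over ℤ_N with a ≢ 0 (mod p) and a ≢ −1 (mod p), let σ be the permutation of ℤ/Nℤ induced by π, and let s be the Zadoff–Chu sequence of length N with root index u, where gcd(u, N) = 1. Define y : ℤ/Nℤ → ℂ by y(x) = s(k) for any integer representative k of σ⁻¹(x). Then y is a CAZAC sequence: |y(x)| = 1 for every x, and for every nonzero d ∈ ℤ/Nℤ, Σ_{x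 ∈ ℤ/Nℤ} y(x)·conj(y(x+d)) = 0. -/
open Complex Finset

private lemma fermat_zmod (p q : ℕ) (hq : q.Prime) (hp1 : 1 ≤ p) (h : (q-1) ∣ (p-1))
    (x : ZMod q) : x ^ p = x := by
  haveI : Fact q.Prime := ⟨hq⟩
  obtain ⟨k, hk⟩ := h
  have hp : p = (q-1)*k + 1 := by have := hq.two_le; omega
  rcases eq_or_ne x 0 with rfl | hx
  · rw [zero_pow (by omega)]
  · rw [hp, pow_add, pow_mul, ZMod.pow_card_sub_one_eq_one hx, one_pow, pow_one, one_mul]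

private lemma int_fermat (p q : ℕ) (hq : q.Prime) (hp1 : 1 ≤ p) (h : (q-1) ∣ (p-1))
    (z : ℤ) : (q:ℤ) ∣ z ^ p - z := by
  have h2 := fermat_zmod p q hq hp1 h (z : ZMod q)
  have h3 : ((z^p - z : ℤ) : ZMod q) = 0 := by push_cast [h2]; ring
  exact (ZMod.intCast_zmod_eq_zero_iff_dvd _ _).mp h3

private lemma exp_two_pi_int (z : ℤ) : Complex.exp (2 * (Real.pi:ℂ) * Complex.I * z) = 1 := by
  rw [show (2 * (Real.pi:ℂ) * Complex.I * z) = (z:ℂ) * (2 * (Real.pi:ℂ) * Complex.I) by ring]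
  exact Complex.exp_int_mul_two_pi_mul_I z

private lemma exp_int_div_eq_one (z : ℤ) (M : ℕ) (hM : M ≠ 0)
    (h : Complex.exp (2 * (Real.pi:ℂ) * Complex.I * z / M) = 1) : (M:ℤ) ∣ z := by
  rw [Complex.exp_eq_one_iff] at h
  obtain ⟨k, hk⟩ := h
  have hM' : (M:ℂ) ≠ 0 := Nat.cast_ne_zero.mpr hM
  have h2 : (2 * (Real.pi:ℂ) * Complex.I) * ((z:ℂ)/M) = (2 * (Real.pi:ℂ) * Complex.I) * k := by
    rw [mul_div_assoc] at hk; rw [hk]; ring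
  have h3 : (z:ℂ)/M = k := mul_left_cancel₀ Complex.two_pi_I_ne_zero h2
  have h4 : (z:ℂ) = (M:ℂ) * k := by field_simp at h3; linear_combination h3
  have h5 : z = (M:ℤ) * k := by exact_mod_cast h4
  exact ⟨k, h5⟩

private lemma geom_zero (ζ : ℂ) (Q : ℕ) (h1 : ζ ≠ 1) (hQ : ζ^Q = 1) :
    ∑ m ∈ Finset.range Q, ζ^m = 0 := by
  rw [geom_sum_eq h1, hQ, sub_self, zero_div]


/-- Theorem 4.1(ii): with the setting of Theorem 4.1, the sequence `s∘π⁻¹`, obtained by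
interleaving the ZC sequence `s` with the inverse of the permutation `σ` of `ℤ/Nℤ`
induced by `π(x) = x^p + a·x + b`, is a CAZAC sequence. -/
theorem stmt_9 (p : ℕ) (hp : p.Prime) (hp3 : 3 ≤ p) (n : ℕ) (hn : 2 ≤ n)
    (N N₁ : ℕ) [NeZero N] (hN : N = p ^ n * N₁) (hcop : Nat.Coprime p N₁)
    (r : ℕ) (q : Fin r → ℕ) (hq : ∀ i, (q i).Prime) (hinj : Function.Injective q)
    (hN₁ : N₁ = ∏ i, q i) (hqdvd : ∀ i, (q i - 1) ∣ (p - 1))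
    (a b : ℤ)
    (f : ZMod N → ZMod N)
    (hf : ∀ x, f x = x ^ p + (a : ZMod N) * x + (b : ZMod N))
    (hbij : Function.Bijective f)
    (ha0 : ¬ a ≡ 0 [ZMOD (p : ℤ)]) (ha1 : ¬ a ≡ -1 [ZMOD (p : ℤ)])
    (u : ℤ) (hu : Int.gcd u (N : ℤ) = 1)
    (s : ℤ → ℂ)
    (hs : ∀ k : ℤ, s k =
      Complex.exp (-(Real.pi : ℂ) * Complex.I * (u : ℂ) *
        ((k : ℂ) ^ 2 + ((N % 2 : ℕ) : ℂ) * (k : ℂ)) / (N : ℂ)))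
    (y : ZMod N → ℂ)
    (hy : ∀ x : ZMod N,
      y x = s (((((Equiv.ofBijective f hbij).symm x).val : ℕ) : ℤ))) :
    (∀ x : ZMod N, ‖y x‖ = 1) ∧
    ∀ d : ZMod N, d ≠ 0 →
      ∑ x : ZMod N, y x * (starRingEnd ℂ) (y (x + d)) = 0 := by
  haveI factp : Fact p.Prime := ⟨hp⟩
  have hp1 : 1 ≤ p := hp.one_le
  have hNpos : 0 < N := Nat.pos_of_ne_zero (NeZero.ne N)
  have hNC : (N:ℂ) ≠ 0 := Nat.cast_ne_zero.mpr (NeZero.ne N)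
  set E := Equiv.ofBijective f hbij with hE
  have hfE : ∀ t : ZMod N, E t = f t := fun t => rfl
  have hvalcast : ∀ x : ZMod N, (((x.val : ℕ) : ℤ) : ZMod N) = x := by
    intro x; rw [Int.cast_natCast, ZMod.natCast_val, ZMod.cast_id]
  have hvalcast2 : ∀ x : ZMod N, ((x.val : ℕ) : ZMod N) = x := by
    intro x; rw [ZMod.natCast_val, ZMod.cast_id]
  set F : ℤ → ℤ := fun z => z ^ p + a * z + b with hF
  have hfcast : ∀ z : ℤ, f ((z : ZMod N)) = ((F z : ℤ) : ZMod N) := by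
    intro z; rw [hf]; show _ = ((z^p + a*z + b : ℤ) : ZMod N); push_cast; ring
  have hcongrN : ∀ A B : ℤ, (N:ℤ) ∣ A - B → ((A : ℤ) : ZMod N) = ((B : ℤ) : ZMod N) := by
    intro A B h
    have h2 := (ZMod.intCast_zmod_eq_zero_iff_dvd _ N).mpr h
    push_cast at h2
    linear_combination h2
  -- s is well-defined modulo N
  have hscongr : ∀ j k : ℤ, (N:ℤ) ∣ j - k → s j = s k := by
    intro j k hjk
    set e2 : ℕ := N % 2 with he2
    obtain ⟨m, hm⟩ := hjk
    have hpar : (2:ℤ) ∣ m * (j + k + (e2 : ℤ)) := by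
      rcases Int.even_or_odd m with he | ho
      · exact Dvd.dvd.mul_right he.two_dvd _
      · apply Dvd.dvd.mul_left
        obtain ⟨c, hc⟩ := ho
        rcases Nat.even_or_odd N with hN2 | hN2
        · obtain ⟨N', hN'⟩ := hN2
          have h1 : (e2 : ℤ) = 0 := by
            have h0 : e2 = 0 := by omega
            simp [h0]
          have h2 : (N:ℤ) = 2*N' := by exact_mod_cast by omega
          rw [h1]
          have : j = k + (N:ℤ)*m := by linarith
          rw [this, h2]
          exact ⟨k + N'*m, by ring⟩
        · obtain ⟨N', hN'⟩ := hN2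
          have h1 : (e2 : ℤ) = 1 := by
            have h0 : e2 = 1 := by omega
            simp [h0]
          have h2 : (N:ℤ) = 2*N' + 1 := by exact_mod_cast by omega
          rw [h1]
          have h3 : j = k + (N:ℤ)*m := by linarith
          rw [h3, h2, hc]
          exact ⟨k + 2*N'*c + N' + c + 1, by ring⟩
    obtain ⟨w, hw⟩ := hpar
    rw [hs j, hs k]
    have hkey : u*(j^2 + (e2:ℤ)*j) = u*(k^2 + (e2:ℤ)*k) + (N:ℤ)*(2*(u*w)) := by
      have h1 : j - k = (N:ℤ)*m := hm
      linear_combination (u*(j + k + (e2:ℤ)))*h1 + (u*(N:ℤ))*hw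
    have hkeyC : (u:ℂ)*((j:ℂ)^2 + (e2:ℂ)*(j:ℂ))
        = (u:ℂ)*((k:ℂ)^2+(e2:ℂ)*(k:ℂ)) + (N:ℂ)*(2*((u:ℂ)*(w:ℂ))) := by
      have h5 := congrArg (fun z : ℤ => (z:ℂ)) hkey
      push_cast at h5 ⊢
      linear_combination h5
    have harg : -(Real.pi:ℂ) * Complex.I * u * ((j:ℂ)^2 + (e2:ℂ)*(j:ℂ))/(N:ℂ)
        = -(Real.pi:ℂ) * Complex.I * u * ((k:ℂ)^2 + (e2:ℂ)*(k:ℂ))/(N:ℂ)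
          + ((-(u*w) : ℤ) : ℂ)*(2*(Real.pi:ℂ)*Complex.I) := by
      rw [div_eq_iff hNC, add_mul, div_mul_cancel₀ _ hNC]
      push_cast
      linear_combination (-(Real.pi:ℂ)*Complex.I) * hkeyC
    rw [harg, Complex.exp_add, Complex.exp_int_mul_two_pi_mul_I, mul_one]
  -- correlation formula
  have hconj : ∀ k : ℤ, (starRingEnd ℂ) (s k) =
      Complex.exp ((Real.pi:ℂ) * Complex.I * u * ((k:ℂ)^2 + ((N % 2 :ℕ):ℂ)*(k:ℂ))/(N:ℂ)) := by
    intro k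
    rw [hs k, ← Complex.exp_conj]
    congr 1
    simp only [map_div₀, map_mul, map_add, map_neg, Complex.conj_I, map_pow, map_intCast, map_natCast,
      Complex.conj_ofReal]
    ring
  have hcorr : ∀ j k : ℤ, s j * (starRingEnd ℂ) (s k) =
      Complex.exp ((Real.pi:ℂ) * Complex.I * u * (((k:ℂ)-(j:ℂ))*((k:ℂ)+(j:ℂ)+((N % 2 :ℕ):ℂ)))/(N:ℂ)) := by
    intro j k
    rw [hs j, hconj k, ← Complex.exp_add]
    congr 1
    ring
  constructor
  · -- amplitude
    have habs : ∀ k : ℤ, ‖s k‖ = 1 := by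
      intro k
      rw [hs k]
      have harg : -(Real.pi:ℂ) * Complex.I * u * ((k:ℂ)^2 + ((N % 2 :ℕ):ℂ)*(k:ℂ)) / (N:ℂ)
          = ((-(Real.pi * u * ((k:ℝ)^2 + ((N % 2 :ℕ):ℝ)*(k:ℝ)) / (N:ℝ)) : ℝ) : ℂ) * Complex.I := by
        push_cast
        ring
      rw [harg, Complex.norm_exp_ofReal_mul_I]
    intro x
    rw [hy x]
    exact habs _
  · intro d hd
    set D : ZMod N → ZMod N := fun t => E.symm (f t + d) - t with hDdef
    have hfD : ∀ t, f (t + D t) = f t + d := by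
      intro t
      have h1 : t + D t = E.symm (f t + d) := by rw [hDdef]; ring
      rw [h1, ← hfE]
      exact E.apply_symm_apply (f t + d)
    have hbase : ∀ t : ZMod N, (N:ℤ) ∣
        F ((t.val : ℤ) + ((D t).val : ℤ)) - (F (t.val : ℤ) + (d.val : ℤ)) := by
      intro t
      have h1 := hfD t
      have h2 : t + D t = (((t.val : ℤ) + ((D t).val : ℤ) : ℤ) : ZMod N) := by
        push_cast
        rw [hvalcast2, hvalcast2]
      have h3 : f t = ((F (t.val : ℤ) : ℤ) : ZMod N) := by
        rw [← hfcast, hvalcast]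
      have h4 : d = (((d.val : ℤ) : ℤ) : ZMod N) := (hvalcast d).symm
      rw [h2, hfcast, h3, h4] at h1
      have h5 : ((F ((t.val : ℤ) + ((D t).val : ℤ)) : ℤ) : ZMod N)
          = ((F (t.val : ℤ) + (d.val : ℤ) : ℤ) : ZMod N) := by
        rw [h1]; push_cast; ring
      rw [ZMod.intCast_eq_intCast_iff] at h5
      exact Int.ModEq.dvd h5.symm
    -- the binomial periodicity lemma
    have hX : ∀ t c e : ℤ, ((p:ℤ)^(n-1)) ∣ c * e →
        (N:ℤ) ∣ (F (t+c+e) - F (t+c)) - (F (t+e) - F t) := by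
      intro t c e hce
      have hpow : ∀ x y : ℤ, (x+e)^p - (y+e)^p - (x^p - y^p)
          = ∑ k ∈ Finset.range p, (x^k - y^k) * e^(p-k) * (p.choose k : ℤ) := by
        intro x y
        rw [add_pow, add_pow, ← Finset.sum_sub_distrib]
        have hlast : ∀ z : ℤ, ∀ k ∈ Finset.range (p+1),
            z ^ k * e ^ (p-k) * (p.choose k : ℤ) = z ^ k * e ^ (p-k) * (p.choose k : ℤ) := by
          intro _ _ _; rfl
        rw [show (∑ k ∈ Finset.range (p+1),
            (x ^ k * e ^ (p-k) * (p.choose k : ℤ) - y ^ k * e ^ (p-k) * (p.choose k : ℤ)))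
            = ∑ k ∈ Finset.range (p+1), (x^k - y^k) * e^(p-k) * (p.choose k : ℤ) from by
          apply Finset.sum_congr rfl; intro k _; ring]
        rw [Finset.sum_range_succ, Nat.sub_self, pow_zero, Nat.choose_self]
        push_cast
        ring
      have hX1 : (F (t+c+e) - F (t+c)) - (F (t+e) - F t)
          = ∑ k ∈ Finset.range p, ((t+c)^k - t^k) * e^(p-k) * (p.choose k : ℤ) := by
        have hpc := hpow (t+c) t
        simp only [hF]
        linear_combination hpc
      -- p^n divides
      have hpn : ((p:ℤ)^n) ∣ (F (t+c+e) - F (t+c)) - (F (t+e) - F t) := by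
        rw [hX1]
        apply Finset.dvd_sum
        intro k hk
        rcases Nat.eq_zero_or_pos k with rfl | hk1
        · simp
        · have hkp : k < p := Finset.mem_range.mp hk
          have hd1 : (c : ℤ) ∣ (t+c)^k - t^k := by
            have : (t + c) - t = c := by ring
            calc (c:ℤ) = (t+c) - t := this.symm
              _ ∣ (t+c)^k - t^k := sub_dvd_pow_sub_pow _ _ _
          have hd2 : (e : ℤ) ∣ e^(p-k) := dvd_pow_self e (by omega)
          have hd3 : (p : ℤ) ∣ (p.choose k : ℤ) := by
            exact_mod_cast Int.natCast_dvd_natCast.mpr (hp.dvd_choose_self (by omega) hkp)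
          have hce' : ((p:ℤ)^(n-1)) ∣ ((t+c)^k - t^k) * e^(p-k) := by
            obtain ⟨c', hc'⟩ := hd1
            obtain ⟨e', he'⟩ := hd2
            rw [hc', he']
            calc ((p:ℤ)^(n-1)) ∣ c * e := hce
              _ ∣ (c * c') * (e * e') := ⟨c' * e', by ring⟩
              _ = c * c' * (e * e') := rfl
          have : ((p:ℤ)^n) = (p:ℤ)^(n-1) * p := by
            rw [← pow_succ]
            congr 1
            omega
          rw [this]
          exact mul_dvd_mul hce' hd3
      -- N₁ divides
      have hfermN₁ : ∀ z : ℤ, (N₁:ℤ) ∣ z^p - z := by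
        intro z
        have hcast : (N₁:ℤ) = ∏ i, (q i : ℤ) := by rw [hN₁]; push_cast; rfl
        rw [hcast]
        apply Fintype.prod_dvd_of_coprime
        · intro i j hij
          have := (Nat.coprime_primes (hq i) (hq j)).mpr (fun h => hij (hinj h))
          exact Int.isCoprime_iff_gcd_eq_one.mpr (by simpa [Int.gcd_natCast_natCast] using this)
        · intro i
          exact int_fermat p (q i) (hq i) hp1 (hqdvd i) z
      have hN₁dvd : (N₁:ℤ) ∣ (F (t+c+e) - F (t+c)) - (F (t+e) - F t) := by
        have hform : (F (t+c+e) - F (t+c)) - (F (t+e) - F t)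
            = (((t+c+e)^p - (t+c+e)) - ((t+c)^p - (t+c))) - (((t+e)^p - (t+e)) - (t^p - t)) := by
          simp only [hF]; ring
        rw [hform]
        exact dvd_sub (dvd_sub (hfermN₁ _) (hfermN₁ _)) (dvd_sub (hfermN₁ _) (hfermN₁ _))
      -- combine
      have hcopZ : IsCoprime ((p:ℤ)^n) ((N₁:ℤ)) := by
        have h1 : Nat.Coprime (p^n) N₁ := hcop.pow_left n
        have h2 : Int.gcd ((p^n : ℕ) : ℤ) ((N₁:ℕ) : ℤ) = 1 := by
          rw [Int.gcd_natCast_natCast]; exact h1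
        have h3 := Int.isCoprime_iff_gcd_eq_one.mpr h2
        push_cast at h3
        exact h3
      have hNfac : (N:ℤ) = (p:ℤ)^n * (N₁:ℤ) := by exact_mod_cast congrArg (Nat.cast : ℕ → ℤ) hN
      rw [hNfac]
      exact hcopZ.mul_dvd hpn hN₁dvd
    have hperiod : ∀ (t : ZMod N) (c : ℤ),
        ((p:ℤ)^(n-1)) ∣ c * ((D t).val : ℤ) → D (t + ((c : ℤ) : ZMod N)) = D t := by
      intro t c hce
      have h1 : f (t + (c : ZMod N) + D t) = f (t + (c : ZMod N)) + d := by
        have e1 : t + (c : ZMod N) + D t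
            = (((t.val : ℤ) + c + ((D t).val : ℤ) : ℤ) : ZMod N) := by
          push_cast
          rw [hvalcast2, hvalcast2]
        have e2 : t + (c : ZMod N) = (((t.val : ℤ) + c : ℤ) : ZMod N) := by
          push_cast
          rw [hvalcast2]
        have e3 : t + D t = (((t.val : ℤ) + ((D t).val : ℤ) : ℤ) : ZMod N) := by
          push_cast
          rw [hvalcast2, hvalcast2]
        rw [e1, e2, hfcast, hfcast]
        have hXc := hX (t.val : ℤ) c ((D t).val : ℤ) hce
        have h4 : ((F ((t.val : ℤ)+c+((D t).val : ℤ)) : ℤ) : ZMod N)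
            = ((F ((t.val : ℤ)+c) + (F ((t.val : ℤ)+((D t).val : ℤ)) - F (t.val : ℤ)) : ℤ) : ZMod N) := by
          apply hcongrN
          have hre : F ((t.val : ℤ)+c+((D t).val : ℤ))
              - (F ((t.val : ℤ)+c) + (F ((t.val : ℤ)+((D t).val : ℤ)) - F (t.val : ℤ)))
              = (F ((t.val : ℤ)+c+((D t).val : ℤ)) - F ((t.val : ℤ)+c))
                - (F ((t.val : ℤ)+((D t).val : ℤ)) - F (t.val : ℤ)) := by ring
          rw [hre]
          exact hXc
        rw [h4]
        have h5 : ((F ((t.val : ℤ)+((D t).val : ℤ)) : ℤ) : ZMod N) = f (t + D t) := by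
          rw [e3, hfcast]
        have h6 : ((F ((t.val : ℤ)) : ℤ) : ZMod N) = f t := by
          rw [← hfcast, hvalcast]
        push_cast
        rw [h5, h6, hfD t]
        ring
      have h2 : E.symm (f (t + (c : ZMod N)) + d) = t + (c : ZMod N) + D t := by
        rw [← h1, ← hfE]
        exact E.symm_apply_apply _
      show E.symm (f (t + (c : ZMod N)) + d) - (t + (c : ZMod N)) = D t
      rw [h2]
      ring
    -- the main computation
    have main : ∀ Q P : ℕ, P * Q = N →
        (∀ (t : ZMod N) (m : ℕ), D (t + ((((P * m : ℕ) : ℤ)) : ZMod N)) = D t) →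
        (∀ t : ZMod N, ¬ ((Q:ℤ) ∣ ((D t).val : ℤ))) →
        ∑ x : ZMod N, y x * (starRingEnd ℂ) (y (x + d)) = 0 := by
      intro Q P hPQ hshift hndvd
      have hQ0 : Q ≠ 0 := by rintro rfl; rw [mul_zero] at hPQ; omega
      have hP0 : P ≠ 0 := by rintro rfl; rw [zero_mul] at hPQ; omega
      set W : ZMod N → ℂ := fun t => y (f t) * (starRingEnd ℂ) (y (f t + d)) with hW
      have hsum0 : ∑ x : ZMod N, y x * (starRingEnd ℂ) (y (x + d)) = ∑ t : ZMod N, W t := by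
        rw [← Equiv.sum_comp E (fun x => y x * (starRingEnd ℂ) (y (x + d)))]
        apply Finset.sum_congr rfl
        intro t _
        rw [hW, hfE]
      have hWt : ∀ t, W t = s ((t.val : ℤ)) * (starRingEnd ℂ) (s (((t + D t).val : ℤ))) := by
        intro t
        have h1 : E.symm (f t) = t := by rw [← hfE]; exact E.symm_apply_apply t
        have h2 : E.symm (f t + d) = t + D t := by
          show E.symm (f t + d) = t + (E.symm (f t + d) - t)
          ring
        rw [hW]
        show y (f t) * (starRingEnd ℂ) (y (f t + d)) = _
        rw [hy (f t), hy (f t + d), h1, h2]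
      have hcast0 : ∀ (x : ZMod N) (z : ℤ), ((z : ZMod N) = x) → s ((x.val : ℤ)) = s z := by
        intro x z hz
        apply hscongr
        apply (ZMod.intCast_zmod_eq_zero_iff_dvd _ N).mp
        push_cast
        rw [hvalcast2]
        exact sub_eq_zero.mpr hz.symm
      have key : ∀ rr : ZMod N,
          ∑ m ∈ Finset.range Q, W (rr + (((P * m : ℕ) : ℤ) : ZMod N)) = 0 := by
        intro rr
        have hPQC : (P:ℂ) * (Q:ℂ) = (N:ℂ) := by exact_mod_cast congrArg (Nat.cast : ℕ → ℂ) hPQ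
        have he1 : ∀ m : ℕ, ((((rr.val : ℕ) : ℤ) + (P:ℤ)*m : ℤ) : ZMod N)
            = rr + (((P * m : ℕ) : ℤ) : ZMod N) := by
          intro m
          push_cast
          rw [hvalcast2]
        have he2 : ∀ m : ℕ, ((((rr.val : ℕ) : ℤ) + (P:ℤ)*m + ((D rr).val : ℤ) : ℤ) : ZMod N)
            = rr + (((P * m : ℕ) : ℤ) : ZMod N) + D rr := by
          intro m
          push_cast
          rw [hvalcast2, hvalcast2]
        set Dv : ℤ := ((D rr).val : ℤ) with hDvdef
        set rv : ℤ := ((rr.val : ℕ) : ℤ) with hrvdef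
        set ζ : ℂ := Complex.exp (2 * (Real.pi:ℂ) * Complex.I * ((u * Dv * P : ℤ) : ℂ) / (N:ℂ))
          with hζ
        set K : ℂ := Complex.exp ((Real.pi:ℂ) * Complex.I * u *
          ((Dv:ℂ) * (2*(rv:ℂ) + (Dv:ℂ) + ((N % 2 :ℕ):ℂ)))/(N:ℂ)) with hK
        have hterm : ∀ m : ℕ, W (rr + (((P * m : ℕ) : ℤ) : ZMod N)) = K * ζ ^ m := by
          intro m
          rw [hWt, hshift rr m, hcast0 _ _ (he1 m), hcast0 _ _ (he2 m), hcorr]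
          rw [hK, hζ, ← Complex.exp_nat_mul, ← Complex.exp_add]
          congr 1
          push_cast
          field_simp
          ring
        have hzQ : ζ ^ Q = 1 := by
          rw [hζ, ← Complex.exp_nat_mul]
          have harg : (Q:ℂ) * (2 * (Real.pi:ℂ) * Complex.I * ((u * Dv * P : ℤ) : ℂ) / (N:ℂ))
              = 2 * (Real.pi:ℂ) * Complex.I * ((u * Dv : ℤ) : ℂ) := by
            rw [← hPQC]
            have hPC : (P:ℂ) ≠ 0 := Nat.cast_ne_zero.mpr hP0
            have hQC' : (Q:ℂ) ≠ 0 := Nat.cast_ne_zero.mpr hQ0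
            field_simp
            push_cast
            ring
          rw [harg]
          exact exp_two_pi_int _
        have hz1 : ζ ≠ 1 := by
          intro hone
          rw [hζ] at hone
          have hdvd := exp_int_div_eq_one (u*Dv*P) N (NeZero.ne N) hone
          obtain ⟨k, hk⟩ := hdvd
          have h3 : u * Dv = (Q:ℤ) * k := by
            have hP' : (P:ℤ) ≠ 0 := Int.natCast_ne_zero.mpr hP0
            apply mul_left_cancel₀ hP'
            have hNZ : (N:ℤ) = (P:ℤ) * (Q:ℤ) := by exact_mod_cast hPQ.symm
            calc (P:ℤ) * (u * Dv) = u * Dv * P := by ring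
              _ = (N:ℤ) * k := hk
              _ = (P:ℤ) * ((Q:ℤ) * k) := by rw [hNZ]; ring
          have hcopQ : Nat.Coprime u.natAbs Q := by
            have h4 : Nat.Coprime u.natAbs N := hu
            exact Nat.Coprime.coprime_dvd_right ⟨P, by rw [← hPQ]; ring⟩ h4
          have h7 : IsCoprime ((Q:ℕ):ℤ) u := by
            rw [Int.isCoprime_iff_gcd_eq_one, Int.gcd_def, Int.natAbs_natCast]
            exact hcopQ.symm
          have h6 : ((Q:ℕ):ℤ) ∣ u * Dv := Dvd.intro k h3.symm
          exact hndvd rr (h7.dvd_of_dvd_mul_left h6)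
        calc ∑ m ∈ Finset.range Q, W (rr + (((P * m : ℕ) : ℤ) : ZMod N))
            = ∑ m ∈ Finset.range Q, (K * ζ^m) := Finset.sum_congr rfl (fun m _ => hterm m)
          _ = K * ∑ m ∈ Finset.range Q, ζ^m := by rw [Finset.mul_sum]
          _ = 0 := by rw [geom_zero ζ Q hz1 hzQ, mul_zero]
      have hQC : (Q:ℂ) * (∑ t : ZMod N, W t) = 0 := by
        have h1 : ∀ m : ℕ, ∑ t : ZMod N, W (t + (((P * m : ℕ) : ℤ) : ZMod N)) = ∑ t : ZMod N, W t :=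
          fun m => Equiv.sum_comp (Equiv.addRight ((((P * m : ℕ) : ℤ) : ZMod N))) W
        calc (Q:ℂ) * ∑ t : ZMod N, W t
            = ∑ m ∈ Finset.range Q, ∑ t : ZMod N, W (t + (((P * m : ℕ) : ℤ) : ZMod N)) := by
              rw [Finset.sum_congr rfl (fun m _ => h1 m), Finset.sum_const, Finset.card_range,
                nsmul_eq_mul]
          _ = ∑ t : ZMod N, ∑ m ∈ Finset.range Q, W (t + (((P * m : ℕ) : ℤ) : ZMod N)) :=
              Finset.sum_comm
          _ = 0 := by
              apply Finset.sum_eq_zero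
              intro t _
              exact key t
      rw [hsum0]
      have hQne : (Q:ℂ) ≠ 0 := Nat.cast_ne_zero.mpr hQ0
      rcases mul_eq_zero.mp hQC with h | h
      · exact absurd h hQne
      · exact h
    -- case split on d
    set dv : ℕ := d.val with hdv
    have hd0 : dv ≠ 0 := by
      intro h
      apply hd
      rw [← hvalcast d, ← hdv, h]
      simp
    by_cases hcase : p^n ∣ dv
    · -- some q i does not divide dv
      have hex : ∃ i, ¬ (q i ∣ dv) := by
        by_contra hall
        push_neg at hall
        have hN₁dvd : (N₁:ℤ) ∣ (dv:ℤ) := by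
          have hcast : (N₁:ℤ) = ∏ i, (q i : ℤ) := by rw [hN₁]; push_cast; rfl
          rw [hcast]
          apply Fintype.prod_dvd_of_coprime
          · intro i j hij
            have hc := (Nat.coprime_primes (hq i) (hq j)).mpr (fun h => hij (hinj h))
            rw [Function.onFun, Int.isCoprime_iff_gcd_eq_one, Int.gcd_natCast_natCast]
            exact hc
          · intro i
            exact Int.natCast_dvd_natCast.mpr (hall i)
        have hN₁dvd' : N₁ ∣ dv := Int.natCast_dvd_natCast.mp hN₁dvd
        have hNdvd : N ∣ dv := by
          rw [hN]
          exact Nat.Coprime.mul_dvd_of_dvd_of_dvd (hcop.pow_left n) hcase hN₁dvd'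
        exact hd0 (Nat.eq_zero_of_dvd_of_lt hNdvd (ZMod.val_lt d))
      obtain ⟨i, hqi⟩ := hex
      have hqqN₁ : q i ∣ N₁ := by rw [hN₁]; exact Finset.dvd_prod_of_mem q (Finset.mem_univ i)
      apply main (q i) (p^n * (N₁ / q i))
      · rw [mul_assoc, Nat.div_mul_cancel hqqN₁, ← hN]
      · intro t m
        apply hperiod
        have h1 : ((p:ℤ)^(n-1)) ∣ (((p^n * (N₁ / q i) * m : ℕ) : ℤ)) := by
          push_cast
          exact Dvd.dvd.mul_right (Dvd.dvd.mul_right (pow_dvd_pow (p:ℤ) (by omega)) _) _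
        exact h1.mul_right _
      · intro t hdvd
        have hbt := hbase t
        have hqN : ((q i : ℕ):ℤ) ∣ (N:ℤ) :=
          Int.natCast_dvd_natCast.mpr (by rw [hN]; exact Dvd.dvd.mul_left hqqN₁ _)
        have h1 : ((q i : ℕ):ℤ) ∣ F ((t.val:ℤ) + ((D t).val:ℤ)) - (F (t.val:ℤ) + (dv:ℤ)) :=
          dvd_trans hqN hbt
        have h2 := int_fermat p (q i) (hq i) hp1 (hqdvd i) ((t.val:ℤ) + ((D t).val:ℤ))
        have h3 := int_fermat p (q i) (hq i) hp1 (hqdvd i) ((t.val:ℕ):ℤ)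
        have h4 : ((q i:ℕ):ℤ) ∣ (dv:ℤ) := by
          have hiden : (dv:ℤ) = -(F ((t.val:ℤ) + ((D t).val:ℤ)) - (F (t.val:ℤ) + (dv:ℤ)))
              + ((((t.val:ℤ) + ((D t).val:ℤ))^p - ((t.val:ℤ) + ((D t).val:ℤ)))
              - (((t.val:ℕ):ℤ)^p - ((t.val:ℕ):ℤ))) + (1+a) * ((D t).val:ℤ) := by
            simp only [hF]; ring
          rw [hiden]
          exact dvd_add (dvd_add (dvd_neg.mpr h1) (dvd_sub h2 h3)) (Dvd.dvd.mul_left hdvd _)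
        exact hqi (Int.natCast_dvd_natCast.mp h4)
    · -- p-adic case
      set v := padicValNat p dv with hv
      have hv1 : p^v ∣ dv := pow_padicValNat_dvd
      have hv2 : ¬ p^(v+1) ∣ dv := pow_succ_padicValNat_not_dvd hd0
      have hvn : v + 1 ≤ n := by
        by_contra hcon
        push_neg at hcon
        exact hcase (dvd_trans (pow_dvd_pow p (by omega)) hv1)
      have hp_dvd_N : ((p:ℕ):ℤ) ∣ (N:ℤ) :=
        Int.natCast_dvd_natCast.mpr (by rw [hN]; exact Dvd.dvd.mul_right (dvd_pow_self p (by omega)) _)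
      have hrelp : ∀ t : ZMod N,
          (1 + (a : ZMod p)) * (((D t).val : ℤ) : ZMod p) = ((dv : ℤ) : ZMod p) := by
        intro t
        have h1 : ((p:ℕ):ℤ) ∣ F ((t.val:ℤ) + ((D t).val:ℤ)) - (F (t.val:ℤ) + (dv:ℤ)) :=
          dvd_trans hp_dvd_N (hbase t)
        have h2 := (ZMod.intCast_zmod_eq_zero_iff_dvd _ p).mpr h1
        simp only [hF] at h2
        push_cast at h2
        rw [ZMod.pow_card, ZMod.pow_card] at h2
        push_cast
        linear_combination h2
      have ha1' : (1 + (a : ZMod p)) ≠ 0 := by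
        intro hcon
        apply ha1
        have hcon2 : ((a:ℤ) : ZMod p) = ((-1 : ℤ) : ZMod p) := by push_cast; linear_combination hcon
        exact (ZMod.intCast_eq_intCast_iff _ _ _).mp hcon2
      have ha0' : (a : ZMod p) ≠ 0 := by
        intro hcon
        apply ha0
        have hcon2 : ((a:ℤ) : ZMod p) = ((0 : ℤ) : ZMod p) := by push_cast; exact hcon
        exact (ZMod.intCast_eq_intCast_iff _ _ _).mp hcon2
      have hDv : ∀ t : ZMod N,
          ((p:ℤ)^v ∣ ((D t).val:ℤ)) ∧ ¬ ((p:ℤ)^(v+1) ∣ ((D t).val:ℤ)) := by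
        intro t
        have hFA : F ((t.val:ℤ) + ((D t).val:ℤ)) - F ((t.val:ℕ):ℤ) = ((D t).val:ℤ) *
            ((∑ i ∈ Finset.range p, ((t.val:ℤ)+((D t).val:ℤ))^i * ((t.val:ℤ))^(p-1-i)) + a) := by
          have hg := geom_sum₂_mul ((t.val:ℤ)+((D t).val:ℤ)) ((t.val:ℕ):ℤ) p
          simp only [hF]
          linear_combination -hg
        set A : ℤ := (∑ i ∈ Finset.range p, ((t.val:ℤ)+((D t).val:ℤ))^i * ((t.val:ℤ))^(p-1-i)) + a
          with hA
        have hpnA : ((p:ℤ))^n ∣ ((D t).val:ℤ) * A - (dv:ℤ) := by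
          have h1 : (N:ℤ) ∣ ((D t).val:ℤ) * A - (dv:ℤ) := by
            have hb := hbase t
            have hre : F ((t.val:ℤ) + ((D t).val:ℤ)) - (F ((t.val:ℕ):ℤ) + (dv:ℤ))
                = (F ((t.val:ℤ)+((D t).val:ℤ)) - F ((t.val:ℕ):ℤ)) - (dv:ℤ) := by ring
            rw [hre, hFA] at hb
            exact hb
          have h2 : ((p:ℤ))^n ∣ (N:ℤ) := by
            rw [show (N:ℤ) = ((p:ℤ))^n * ((N₁:ℕ):ℤ) from by exact_mod_cast hN]
            exact dvd_mul_right _ _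
          exact dvd_trans h2 h1
        rcases Nat.eq_zero_or_pos v with hv0 | hvpos
        · constructor
          · rw [hv0, pow_zero]; exact one_dvd _
          · rw [hv0, zero_add, pow_one]
            intro hpe
            have h2 : (((D t).val:ℤ) : ZMod p) = 0 := (ZMod.intCast_zmod_eq_zero_iff_dvd _ p).mpr hpe
            have h3 := hrelp t
            rw [h2, mul_zero] at h3
            have h4 : ((p:ℕ):ℤ) ∣ ((dv:ℕ):ℤ) := (ZMod.intCast_zmod_eq_zero_iff_dvd _ p).mp h3.symm
            apply hv2
            rw [hv0, pow_one]
            exact Int.natCast_dvd_natCast.mp h4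
        · have hpdv : p ∣ dv := dvd_trans (dvd_pow_self p (by omega)) hv1
          have hpe : ((((D t).val:ℕ):ℤ) : ZMod p) = 0 := by
            have h3 := hrelp t
            have h4 : (((dv:ℕ):ℤ) : ZMod p) = 0 := by
              apply (ZMod.intCast_zmod_eq_zero_iff_dvd _ p).mpr
              exact Int.natCast_dvd_natCast.mpr hpdv
            rw [h4] at h3
            rcases mul_eq_zero.mp h3 with h | h
            · exact absurd h ha1'
            · exact h
          have hpez : ((p:ℕ):ℤ) ∣ (((D t).val:ℕ):ℤ) := (ZMod.intCast_zmod_eq_zero_iff_dvd _ p).mp hpe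
          have hAp : ((A:ℤ) : ZMod p) = (a : ZMod p) := by
            have hpe' : (((D t).val:ℕ) : ZMod p) = 0 := by exact_mod_cast hpe
            rw [hA]
            push_cast
            rw [hpe', add_zero]
            have hcong : ∀ i ∈ Finset.range p, (((t.val:ℕ):ZMod p))^i * (((t.val:ℕ):ZMod p))^(p-1-i)
                = (((t.val:ℕ):ZMod p))^(p-1) := by
              intro i hi
              rw [← pow_add]
              congr 1
              have := Finset.mem_range.mp hi
              omega
            rw [Finset.sum_congr rfl hcong, Finset.sum_const, Finset.card_range, nsmul_eq_mul,
              ZMod.natCast_self, zero_mul, zero_add]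
          have hnA : ¬ (((p:ℕ):ℤ) ∣ A) := by
            intro hcon
            have hz : ((A:ℤ):ZMod p) = 0 := (ZMod.intCast_zmod_eq_zero_iff_dvd _ p).mpr hcon
            rw [hAp] at hz
            exact ha0' hz
          have hcopA : IsCoprime ((p:ℤ)^v) A :=
            (((Nat.prime_iff_prime_int.mp hp).coprime_iff_not_dvd).mpr hnA).pow_left
          constructor
          · have h8 : ((p:ℤ))^v ∣ ((dv:ℕ):ℤ) := by
              have := Int.natCast_dvd_natCast.mpr hv1
              push_cast at this
              exact this
            have h6 : ((p:ℤ))^v ∣ ((D t).val:ℤ) * A := by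
              have h7 : ((p:ℤ))^v ∣ ((D t).val:ℤ) * A - (dv:ℤ) :=
                dvd_trans (pow_dvd_pow _ (by omega)) hpnA
              have h9 : (((D t).val:ℤ) * A - (dv:ℤ)) + (dv:ℤ) = ((D t).val:ℤ) * A := by ring
              rw [← h9]
              exact dvd_add h7 h8
            exact hcopA.dvd_of_dvd_mul_right h6
          · intro hcon
            have h9 : ((p:ℤ))^(v+1) ∣ ((D t).val:ℤ) * A := Dvd.dvd.mul_right hcon A
            have h11 : ((p:ℤ))^(v+1) ∣ ((D t).val:ℤ)*A - (dv:ℤ) :=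
              dvd_trans (pow_dvd_pow _ hvn) hpnA
            have h10 : ((p:ℤ))^(v+1) ∣ ((dv:ℕ):ℤ) := by
              have h12 : ((D t).val:ℤ)*A - (((D t).val:ℤ)*A - (dv:ℤ)) = ((dv:ℕ):ℤ) := by ring
              rw [← h12]
              exact dvd_sub h9 h11
            apply hv2
            have h13 : ((p^(v+1):ℕ):ℤ) ∣ ((dv:ℕ):ℤ) := by push_cast; exact h10
            exact Int.natCast_dvd_natCast.mp h13
      apply main (p^(v+1)) (p^(n-v-1) * N₁)
      · have hre : p^(n-v-1) * N₁ * p^(v+1) = p^(n-v-1) * p^(v+1) * N₁ := by ring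
        rw [hre, ← pow_add, show n-v-1 + (v+1) = n from by omega, ← hN]
      · intro t m
        apply hperiod
        have hsplit : ((p:ℤ))^(n-1) = (p:ℤ)^(n-v-1) * (p:ℤ)^v := by
          rw [← pow_add]
          congr 1
          omega
        rw [hsplit]
        apply mul_dvd_mul
        · push_cast
          exact Dvd.dvd.mul_right (Dvd.dvd.mul_right (dvd_refl _) _) _
        · exact (hDv t).1
      · intro t hcon
        apply (hDv t).2
        have : ((p^(v+1):ℕ):ℤ) ∣ ((D t).val:ℤ) := hcon
        push_cast at this
        exact this
end

section
/- Let N = 2^n with n ≥ 2, let u be an odd integer, and let s be the Zadoff–Chu sequence of length N with root index u (so s(k) = exp(−π·i·u·k²/N) since N is even). Let π be any polynomial with integer coefficients that is a permutation polynomial over ℤ_{2^n}. Then the interleaved sequence s∘π is a CAZAC sequence: |s(π(k))| = 1 for every k, and for every integer d with 0 < d < N, Σ_{k=0}^{N−1} s(π(k))·conj(s(π(k+d))) = 0. -/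
open Polynomial

lemma exists_dq (p : Polynomial ℤ) (c : ℤ) :
    ∃ q : Polynomial ℤ,
      (∀ x : ℤ, p.eval (x + c) = p.eval x + c * q.eval x) ∧
      (c % 2 = 0 → q.map (Int.castRingHom (ZMod 2)) =
        (Polynomial.derivative p).map (Int.castRingHom (ZMod 2))) := by
  induction p using Polynomial.induction_on' with
  | add f g hf hg =>
    obtain ⟨qf, hf1, hf2⟩ := hf
    obtain ⟨qg, hg1, hg2⟩ := hg
    refine ⟨qf + qg, fun x => by simp [hf1 x, hg1 x]; ring, fun hc => by
      simp [Polynomial.map_add, hf2 hc, hg2 hc]⟩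
  | monomial m a =>
    refine ⟨C a * ∑ i ∈ Finset.range m, (X + C c)^i * X^(m-1-i), fun x => ?_, fun hc => ?_⟩
    · have hgeom := geom_sum₂_mul (x + c) x m
      simp only [eval_monomial, eval_mul, eval_C, eval_finset_sum, eval_pow, eval_add, eval_X]
      linear_combination -a * hgeom
    · have hc2 : ((c : ZMod 2)) = 0 := by
        have : (2:ℤ) ∣ c := Int.dvd_of_emod_eq_zero hc
        exact_mod_cast (ZMod.intCast_zmod_eq_zero_iff_dvd c 2).mpr this
      rw [Polynomial.map_mul, Polynomial.map_C, Polynomial.map_sum]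
      have hterm : ∀ i ∈ Finset.range m,
          ((X + C c)^i * X^(m-1-i) : Polynomial ℤ).map (Int.castRingHom (ZMod 2))
            = X^(m-1) := by
        intro i hi
        rw [Polynomial.map_mul, Polynomial.map_pow, Polynomial.map_pow, Polynomial.map_add,
          Polynomial.map_X, Polynomial.map_C]
        have : (Int.castRingHom (ZMod 2)) c = 0 := by simpa using hc2
        rw [this, map_zero, add_zero, ← pow_add]
        congr 1
        have := Finset.mem_range.mp hi
        omega
      rw [Finset.sum_congr rfl hterm, derivative_monomial, Polynomial.map_monomial]
      simp only [Finset.sum_const, Finset.card_range, nsmul_eq_mul]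
      rw [← Polynomial.C_mul_X_pow_eq_monomial, map_mul, map_natCast, C_mul,
        Polynomial.C_eq_natCast]
      ring

lemma eval_cast (p : Polynomial ℤ) (m : ℕ) (x : ℤ) :
    ((p.eval x : ℤ) : ZMod m) = (p.map (Int.castRingHom (ZMod m))).eval (x : ZMod m) := by
  simpa using (Polynomial.eval_intCast_map (Int.castRingHom (ZMod m)) p x).symm

lemma eval_modeq (p : Polynomial ℤ) (m : ℕ) {a b : ℤ} (h : a ≡ b [ZMOD (m:ℤ)]) :
    p.eval a ≡ p.eval b [ZMOD (m:ℤ)] := by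
  have h' : ((a : ℤ) : ZMod m) = ((b : ℤ) : ZMod m) := by
    rwa [ZMod.intCast_eq_intCast_iff]
  rw [← ZMod.intCast_eq_intCast_iff, eval_cast, eval_cast, h']

lemma parity_transfer {q r : Polynomial ℤ}
    (h : q.map (Int.castRingHom (ZMod 2)) = r.map (Int.castRingHom (ZMod 2))) (x : ℤ) :
    Odd (q.eval x) ↔ Odd (r.eval x) := by
  have h2 : ((q.eval x : ℤ) : ZMod 2) = ((r.eval x : ℤ) : ZMod 2) := by
    rw [eval_cast, eval_cast, h]
  have := (ZMod.intCast_eq_intCast_iff _ _ _).mp h2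
  rw [Int.ModEq] at this
  rw [Int.odd_iff, Int.odd_iff]
  norm_num at this ⊢
  omega

lemma deriv2_zmod2 (p : Polynomial (ZMod 2)) :
    Polynomial.derivative (Polynomial.derivative p) = 0 := by
  ext m
  rw [Polynomial.coeff_derivative, Polynomial.coeff_derivative]
  have h : ∀ x : ZMod 2, (x + 1 + 1) * (x + 1) = 0 := by decide
  push_cast
  rw [mul_assoc, show ((m:ZMod 2) + 1 + 1) * ((m:ZMod 2) + 1) = 0 from h _]
  simp

lemma pp_reduce (p : Polynomial ℤ) (N m : ℕ) (hm : m ∣ N) (hNz : N ≠ 0) (hmz : m ≠ 0)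
    (hPP : Function.Bijective
      (fun x : ZMod N => (p.map (Int.castRingHom (ZMod N))).eval x)) :
    ∀ x y : ℤ, (((p.eval x : ℤ) : ZMod m) = ((p.eval y : ℤ) : ZMod m)) →
      (x : ZMod m) = (y : ZMod m) := by
  haveI : NeZero N := ⟨hNz⟩
  haveI : NeZero m := ⟨hmz⟩
  set g : ZMod N →+* ZMod m := ZMod.castHom hm (ZMod m) with hg
  have hcomm : ∀ w : ZMod N,
      g ((p.map (Int.castRingHom (ZMod N))).eval w)
        = (p.map (Int.castRingHom (ZMod m))).eval (g w) := by
    intro w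
    rw [Polynomial.eval_map, Polynomial.eval_map, Polynomial.hom_eval₂]
    congr 1
    exact RingHom.ext_int _ _
  set f : ZMod m → ZMod m := fun z => (p.map (Int.castRingHom (ZMod m))).eval z with hf
  have hfsurj : Function.Surjective f := by
    intro z
    obtain ⟨y, hy⟩ := hPP.surjective ((z.val : ZMod N))
    refine ⟨g y, ?_⟩
    have h1 : f (g y) = g ((p.map (Int.castRingHom (ZMod N))).eval y) := (hcomm y).symm
    have h2 : (p.map (Int.castRingHom (ZMod N))).eval y = (z.val : ZMod N) := hy
    rw [h1, h2, map_natCast]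
    exact ZMod.natCast_rightInverse z
  have hfinj : Function.Injective f := Finite.injective_iff_surjective.mpr hfsurj
  intro x y hxy
  apply hfinj
  show (p.map (Int.castRingHom (ZMod m))).eval (x : ZMod m)
      = (p.map (Int.castRingHom (ZMod m))).eval (y : ZMod m)
  rw [← eval_cast, ← eval_cast]
  exact hxy

/-- Theorem 4.2(i): for `N = 2^n` (`n ≥ 2`), an odd root index `u`, the ZC sequence
`s(k) = exp(−π i u k²/N)`, and any polynomial `π ∈ ℤ[x]` which is a permutation polynomial
over `ℤ_{2^n}`, the interleaved sequence `s∘π` is a CAZAC sequence. -/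
theorem stmt_10 (n : ℕ) (hn : 2 ≤ n) (N : ℕ) (hN : N = 2 ^ n)
    (u : ℤ) (hu : Odd u)
    (s : ℤ → ℂ)
    (hs : ∀ k : ℤ, s k =
      Complex.exp (-(Real.pi : ℂ) * Complex.I * (u : ℂ) * (k : ℂ) ^ 2 / (N : ℂ)))
    (π : Polynomial ℤ)
    (hPP : Function.Bijective
      (fun x : ZMod N => (π.map (Int.castRingHom (ZMod N))).eval x)) :
    (∀ k : ℤ, ‖s (π.eval k)‖ = 1) ∧
    ∀ d : ℕ, 0 < d → d < N →
      ∑ k ∈ Finset.range N,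
          s (π.eval (k : ℤ)) * (starRingEnd ℂ) (s (π.eval ((k : ℤ) + (d : ℤ)))) = 0 := by
  subst hN
  constructor
  · intro k
    rw [hs, Complex.norm_exp]
    have hz : (-(Real.pi : ℂ) * Complex.I * (u:ℂ) * ((π.eval k : ℤ):ℂ)^2 / ((2^n : ℕ):ℂ))
        = (((-Real.pi * (u:ℝ) * ((π.eval k : ℤ):ℝ)^2 / ((2^n:ℕ):ℝ)) : ℝ) : ℂ) * Complex.I := by
      push_cast
      ring
    rw [hz, Complex.mul_I_re, Complex.ofReal_im]
    norm_num
  · intro d hd0 hdN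
    obtain ⟨t, e, he2, hde⟩ :=
      Nat.exists_eq_pow_mul_and_not_dvd (by omega : d ≠ 0) 2 (by norm_num)
    have hepos : 0 < e := by
      rcases Nat.eq_zero_or_pos e with h | h
      · rw [h, mul_zero] at hde; omega
      · exact h
    have ht : t < n := by
      have h1 : 2^t ≤ d := by
        calc 2^t = 2^t * 1 := by ring
        _ ≤ 2^t * e := Nat.mul_le_mul_left _ hepos
        _ = d := hde.symm
      have h2 : (2:ℕ)^t < 2^n := lt_of_le_of_lt h1 hdN
      exact (Nat.pow_lt_pow_iff_right (by norm_num)).mp h2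
    set dZ : ℤ := (d : ℤ) with hdZdef
    set eZ : ℤ := (e : ℤ) with heZdef
    have heZ : Odd eZ := by
      rw [Int.odd_iff]
      rw [heZdef]
      omega
    have hdZ : dZ = 2^t * eZ := by rw [hdZdef, heZdef, hde]; push_cast; ring
    set Ln : ℕ := 2^(n-1-t) with hLndef
    set LZ : ℤ := (Ln : ℤ) with hLZdef
    have hLZ : LZ = 2^(n-1-t) := by rw [hLZdef, hLndef]; push_cast; ring
    obtain ⟨qd, hqd, hqdm⟩ := exists_dq π dZ
    obtain ⟨qL, hqL, hqLm⟩ := exists_dq π LZ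
    obtain ⟨qS, hqS, hqSm⟩ := exists_dq qL dZ
    obtain ⟨q2, hq2, hq2m⟩ := exists_dq π 2
    have hq2m' := hq2m (by norm_num)
    have hred2 := pp_reduce π (2^n) 2 (dvd_pow_self 2 (by omega)) (by positivity) (by norm_num) hPP
    have hred4 := pp_reduce π (2^n) 4
      (by rw [show (4:ℕ) = 2^2 by norm_num]; exact pow_dvd_pow 2 hn) (by positivity)
      (by norm_num) hPP
    have hstep : ∀ x c : ℤ, Odd c → Odd (π.eval (x + c) - π.eval x) := by
      intro x c hc
      rw [← Int.not_even_iff_odd]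
      intro h
      obtain ⟨k, hk⟩ := h
      have hcast : ((π.eval (x+c) : ℤ) : ZMod 2) = ((π.eval x : ℤ) : ZMod 2) := by
        rw [ZMod.intCast_eq_intCast_iff]
        symm
        rw [Int.modEq_iff_dvd]
        exact ⟨k, by omega⟩
      have h2 := hred2 _ _ hcast
      rw [ZMod.intCast_eq_intCast_iff] at h2
      have h3 := Int.ModEq.dvd h2
      have : (2:ℤ) ∣ c := by
        have : x - (x + c) = -c := by ring
        rw [this] at h3
        exact (dvd_neg.mp h3)
      rw [Int.odd_iff] at hc
      omega
    have hderiv_odd : ∀ x : ℤ, Odd ((Polynomial.derivative π).eval x) := by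
      have hq2odd : ∀ x : ℤ, Odd (q2.eval x) := by
        intro x
        rw [← Int.not_even_iff_odd]
        intro hev
        obtain ⟨k, hk⟩ := hev
        have hcast : ((π.eval (x+2) : ℤ) : ZMod 4) = ((π.eval x : ℤ) : ZMod 4) := by
          rw [ZMod.intCast_eq_intCast_iff]
          symm
          rw [Int.modEq_iff_dvd]
          exact ⟨k, by rw [hq2 x, hk]; ring⟩
        have h4 := hred4 _ _ hcast
        rw [ZMod.intCast_eq_intCast_iff] at h4
        have h5 := Int.ModEq.dvd h4
        have h6 : x - (x + 2) = -2 := by ring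
        rw [h6] at h5
        have : (4:ℤ) ∣ 2 := dvd_neg.mp h5
        norm_num at this
      intro x
      exact (parity_transfer hq2m' x).mp (hq2odd x)
    have hqd_odd : ∀ x : ℤ, Odd (qd.eval x) := by
      intro x
      rcases Nat.eq_zero_or_pos t with ht0 | htpos
      · have hdodd : Odd dZ := by rw [hdZ, ht0]; simpa using heZ
        have hso := hstep x dZ hdodd
        rw [hqd x] at hso
        simp only [add_sub_cancel_left] at hso
        exact (Int.odd_mul.mp hso).2
      · have hdm : dZ % 2 = 0 := by
          have : (2:ℤ) ∣ dZ := by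
            rw [hdZ]
            exact Dvd.dvd.mul_right (dvd_pow_self 2 (by omega)) eZ
          omega
        exact (parity_transfer (hqdm hdm) x).mpr (hderiv_odd x)
    have hqL_odd : ∀ x : ℤ, Odd (qL.eval x) := by
      intro x
      rcases Nat.eq_zero_or_pos (n-1-t) with hl0 | hlpos
      · have hlodd : Odd LZ := by rw [hLZ, hl0]; simp
        have hso := hstep x LZ hlodd
        rw [hqL x] at hso
        simp only [add_sub_cancel_left] at hso
        exact (Int.odd_mul.mp hso).2
      · have hlm : LZ % 2 = 0 := by
          have : (2:ℤ) ∣ LZ := by rw [hLZ]; exact dvd_pow_self 2 (by omega)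
          omega
        exact (parity_transfer (hqLm hlm) x).mpr (hderiv_odd x)
    have hqS_even : ∀ x : ℤ, Even (qS.eval x) := by
      intro x
      rcases Nat.eq_zero_or_pos t with ht0 | htpos
      · have hdodd : Odd dZ := by rw [hdZ, ht0]; simpa using heZ
        have h4 : Even (dZ * qS.eval x) := by
          have h1 : dZ * qS.eval x = qL.eval (x + dZ) - qL.eval x := by
            rw [hqS x]; ring
          rw [h1]
          exact Odd.sub_odd (hqL_odd _) (hqL_odd x)
        rcases Int.even_mul.mp h4 with h5 | h5
        · exact absurd hdodd (by rw [← Int.not_even_iff_odd]; simp [h5])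
        · exact h5
      · have hdm : dZ % 2 = 0 := by
          have : (2:ℤ) ∣ dZ := by
            rw [hdZ]
            exact Dvd.dvd.mul_right (dvd_pow_self 2 (by omega)) eZ
          omega
        have hmapS := hqSm hdm
        rcases Nat.eq_zero_or_pos (n-1-t) with hl0 | hlpos
        · have hL1 : LZ = 1 := by rw [hLZ, hl0, pow_zero]
          have hqLeq : qL = π.comp (X + C 1) - π := by
            apply Polynomial.funext
            intro r
            have h := hqL r
            rw [hL1, one_mul] at h
            rw [eval_sub, Polynomial.eval_comp]
            simp only [eval_add, eval_X, eval_C]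
            omega
          have hd1 : (Polynomial.derivative qL).eval x
              = (Polynomial.derivative π).eval (x+1) - (Polynomial.derivative π).eval x := by
            rw [hqLeq, derivative_sub, Polynomial.derivative_comp]
            simp [Polynomial.eval_comp]
          have hev : Even ((Polynomial.derivative qL).eval x) := by
            rw [hd1]; exact Odd.sub_odd (hderiv_odd _) (hderiv_odd x)
          rw [← Int.not_odd_iff_even]
          intro hodd
          exact (Int.not_odd_iff_even.mpr hev) ((parity_transfer hmapS x).mp hodd)
        · have hlm : LZ % 2 = 0 := by
            have : (2:ℤ) ∣ LZ := by rw [hLZ]; exact dvd_pow_self 2 (by omega)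
            omega
          have hz : qS.map (Int.castRingHom (ZMod 2)) = (0 : Polynomial ℤ).map (Int.castRingHom (ZMod 2)) := by
            rw [hmapS, ← Polynomial.derivative_map, hqLm hlm, ← Polynomial.derivative_map,
              deriv2_zmod2]
            simp
          rw [← Int.not_odd_iff_even]
          intro hodd
          have := (parity_transfer hz x).mp hodd
          norm_num at this
    -- Key congruence (MC)
    have hK1 : ∀ x : ℤ,
        (2:ℤ)^(n+1) ∣ ((π.eval (x + LZ))^2 - (π.eval (x + LZ + dZ))^2
          - (π.eval x)^2 + (π.eval (x + dZ))^2 - 2^n) := by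
      intro x
      have e1 := hqd x
      have e2 := hqL x
      have e3 : π.eval (x + LZ + dZ)
          = π.eval x + dZ * qd.eval x + LZ * qL.eval (x + dZ) := by
        have h := hqL (x + dZ)
        rw [show x + dZ + LZ = x + LZ + dZ by ring] at h
        rw [h, e1]
      have e4 := hqS x
      obtain ⟨S', hS'⟩ := hqS_even x
      obtain ⟨w, hw⟩ := (heZ.mul ((hqd_odd x).mul (hqL_odd (x + dZ))))
      rw [e4, hS', hdZ] at hw
      have hpow : (2:ℤ)^n = 2 * (2^t * 2^(n-1-t)) := by
        calc (2:ℤ)^n = 2^(1 + (t + (n-1-t))) := by congr 1; omega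
        _ = 2 * (2^t * 2^(n-1-t)) := by rw [pow_add, pow_add, pow_one]
      have hpow2 : (2:ℤ)^(n+1) = 4 * (2^t * 2^(n-1-t)) := by
        calc (2:ℤ)^(n+1) = 2^(2 + (t + (n-1-t))) := by congr 1; omega
        _ = 4 * (2^t * 2^(n-1-t)) := by rw [pow_add, pow_add]; norm_num
      refine ⟨-(π.eval x * eZ * S' + w + 1
        + 2^(n-1-t) * eZ * S' * (qL.eval x + 2^t * eZ * S')), ?_⟩
      rw [e3, e2, e1, e4, hS', hdZ, hLZ, hpow, hpow2]
      linear_combination (-2*(2:ℤ)^t*(2:ℤ)^(n-1-t)) * hw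
    -- squares congruence
    have hsq : ∀ a b : ℤ, (2:ℤ)^n ∣ (b - a) → (2:ℤ)^(n+1) ∣ (b^2 - a^2) := by
      rintro a b ⟨k, hk⟩
      refine ⟨a*k + 2^(n-1)*k^2, ?_⟩
      have hp2 : (2:ℤ)^n * (2:ℤ)^n = (2:ℤ)^(n+1) * (2:ℤ)^(n-1) := by
        rw [← pow_add, ← pow_add]; congr 1; omega
      have hp3 : 2*(2:ℤ)^n = (2:ℤ)^(n+1) := by rw [← pow_succ']
      linear_combination (b + a + 2^n*k) * hk + k^2 * hp2 + a*k*hp3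
    have hmod : ∀ j k : ℤ, (2:ℤ)^n ∣ (j - k) →
        (2:ℤ)^(n+1) ∣ ((π.eval j)^2 - (π.eval (j+dZ))^2
          - ((π.eval k)^2 - (π.eval (k+dZ))^2)) := by
      intro j k hjk
      have hcast : ((2^n : ℕ) : ℤ) = (2:ℤ)^n := by push_cast; ring
      have h1 : (2:ℤ)^n ∣ (π.eval j - π.eval k) := by
        have hm : k ≡ j [ZMOD ((2^n : ℕ) : ℤ)] := by
          rw [Int.modEq_iff_dvd, hcast]; exact hjk
        have h := eval_modeq π (2^n) hm
        rw [Int.modEq_iff_dvd, hcast] at h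
        exact h
      have h2 : (2:ℤ)^n ∣ (π.eval (j+dZ) - π.eval (k+dZ)) := by
        have hm : k + dZ ≡ j + dZ [ZMOD ((2^n : ℕ) : ℤ)] := by
          rw [Int.modEq_iff_dvd, hcast]
          have : j + dZ - (k + dZ) = j - k := by ring
          rw [this]; exact hjk
        have h := eval_modeq π (2^n) hm
        rw [Int.modEq_iff_dvd, hcast] at h
        exact h
      have hA := hsq (π.eval k) (π.eval j) h1
      have hB := hsq (π.eval (k+dZ)) (π.eval (j+dZ)) h2
      have hre : (π.eval j)^2 - (π.eval (j+dZ))^2 - ((π.eval k)^2 - (π.eval (k+dZ))^2)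
          = ((π.eval j)^2 - (π.eval k)^2) - ((π.eval (j+dZ))^2 - (π.eval (k+dZ))^2) := by ring
      rw [hre]
      exact dvd_sub hA hB
    -- complex exponential machinery
    set cc : ℂ := -(Real.pi:ℂ) * Complex.I * (u:ℂ) / ((2^n : ℕ) : ℂ) with hccdef
    have hNC : ((2^n : ℕ) : ℂ) ≠ 0 := Nat.cast_ne_zero.mpr (by positivity)
    have hterm : ∀ m1 m2 : ℤ, s m1 * (starRingEnd ℂ) (s m2)
        = Complex.exp (cc * (((m1^2 - m2^2 : ℤ)) : ℂ)) := by
      intro m1 m2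
      rw [hs m1, hs m2, ← Complex.exp_conj, ← Complex.exp_add]
      congr 1
      rw [hccdef, map_div₀]
      simp only [map_mul, map_neg, Complex.conj_ofReal, Complex.conj_I, map_intCast,
        map_pow, map_natCast]
      push_cast
      field_simp
      ring
    have hexpTwoPi : ∀ m : ℤ, Complex.exp (cc * ((2:ℂ)^(n+1)) * (m:ℂ)) = 1 := by
      intro m
      have h2 : cc * ((2:ℂ)^(n+1)) * (m:ℂ)
          = ((m * (-u) : ℤ) : ℂ) * (2 * (Real.pi:ℂ) * Complex.I) := by
        rw [hccdef]
        push_cast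
        rw [show (2:ℂ)^(n+1) = 2 * 2^n from by rw [pow_succ']]
        have h2n : ((2:ℂ))^n ≠ 0 := pow_ne_zero _ two_ne_zero
        field_simp
      rw [h2, Complex.exp_int_mul_two_pi_mul_I]
    have hexp_per : ∀ a b : ℤ, (2:ℤ)^(n+1) ∣ (a - b) →
        Complex.exp (cc * (a:ℂ)) = Complex.exp (cc * (b:ℂ)) := by
      rintro a b ⟨m, hm⟩
      have hC : (a:ℂ) = (b:ℂ) + (2:ℂ)^(n+1) * (m:ℂ) := by
        have h : a = b + 2^(n+1)*m := by linarith
        rw [h]; push_cast; ring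
      rw [hC, mul_add, Complex.exp_add, ← mul_assoc, hexpTwoPi, mul_one]
    have hexpN : Complex.exp (cc * ((2:ℂ)^n)) = -1 := by
      have h2 : cc * ((2:ℂ)^n) = ((-u : ℤ):ℂ) * ((Real.pi:ℂ) * Complex.I) := by
        rw [hccdef]
        push_cast
        field_simp
      rw [h2, Complex.exp_int_mul, Complex.exp_pi_mul_I]
      exact Odd.neg_one_zpow (hu.neg)
    have hexp_flip : ∀ a b : ℤ, (2:ℤ)^(n+1) ∣ (a - b - 2^n) →
        Complex.exp (cc * (a:ℂ)) = - Complex.exp (cc * (b:ℂ)) := by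
      intro a b hdv
      have h1 : Complex.exp (cc * (a:ℂ)) = Complex.exp (cc * ((b + 2^n : ℤ):ℂ)) := by
        apply hexp_per
        rw [show a - (b + 2^n) = a - b - 2^n from by ring]
        exact hdv
      rw [h1, show ((b + 2^n : ℤ):ℂ) = (b:ℂ) + (2:ℂ)^n from by push_cast; ring,
        mul_add, Complex.exp_add, hexpN, mul_neg_one]
    -- the function on ZMod (2^n)
    haveI : NeZero ((2:ℕ)^n) := ⟨by positivity⟩
    set g : ZMod (2^n) → ℂ := fun z =>
      Complex.exp (cc * ((((π.eval ((z.val : ℤ)))^2 - (π.eval ((z.val : ℤ) + dZ))^2 : ℤ)) : ℂ))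
      with hgdef
    have hvalsub : ∀ k : ℤ, (2:ℤ)^n ∣ (k - ((k : ZMod (2^n)).val : ℤ)) := by
      intro k
      have h := ZMod.val_intCast (n := 2^n) k
      have h2 : (k % ((2^n:ℕ):ℤ)) ≡ k [ZMOD ((2^n:ℕ):ℤ)] := Int.emod_emod_of_dvd k dvd_rfl
      have h3 := Int.ModEq.dvd h2
      rw [h]
      have hcast : ((2^n : ℕ) : ℤ) = (2:ℤ)^n := by push_cast; ring
      rw [← hcast]
      exact h3
    have hgk : ∀ k : ℤ,
        Complex.exp (cc * ((((π.eval k)^2 - (π.eval (k + dZ))^2 : ℤ)) : ℂ))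
          = g ((k : ZMod (2^n))) := by
      intro k
      rw [hgdef]
      exact hexp_per _ _ (hmod k _ (hvalsub k))
    have hterm' : ∀ k : ℕ, s (π.eval (k:ℤ)) * (starRingEnd ℂ) (s (π.eval ((k:ℤ) + dZ)))
        = g ((k : ZMod (2^n))) := by
      intro k
      rw [hterm _ _]
      have h := hgk (k:ℤ)
      rw [h]
      norm_cast
    have hsum1 : ∑ k ∈ Finset.range (2^n), g ((k : ZMod (2^n))) = ∑ z : ZMod (2^n), g z := by
      apply Finset.sum_nbij' (i := fun (k : ℕ) => (k : ZMod (2^n))) (j := fun z => z.val)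
      · intro a _; exact Finset.mem_univ _
      · intro z _; exact Finset.mem_range.mpr (ZMod.val_lt z)
      · intro a ha; exact ZMod.val_cast_of_lt (Finset.mem_range.mp ha)
      · intro z _; exact ZMod.natCast_rightInverse z
      · intro a _; rfl
    have hfinal : ∑ k ∈ Finset.range (2^n),
        s (π.eval (k : ℤ)) * (starRingEnd ℂ) (s (π.eval ((k : ℤ) + dZ)))
          = ∑ z : ZMod (2^n), g z := by
      rw [← hsum1]
      exact Finset.sum_congr rfl (fun k _ => hterm' k)
    rw [hfinal]
    -- now the shift argument
    have hshift : ∑ z : ZMod (2^n), g (z + (Ln : ZMod (2^n))) = ∑ z : ZMod (2^n), g z :=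
      Function.Bijective.sum_comp (Equiv.addRight ((Ln : ZMod (2^n)))).bijective g
    have hneg : ∀ z : ZMod (2^n), g (z + (Ln : ZMod (2^n))) = - g z := by
      intro z
      have h1 : (2:ℤ)^n ∣ ((((z + (Ln : ZMod (2^n))).val : ℤ)) - ((z.val : ℤ) + LZ)) := by
        have hc : (((((z + (Ln:ZMod (2^n))).val : ℤ))) : ZMod (2^n))
            = (((((z.val : ℤ) + LZ) : ℤ)) : ZMod (2^n)) := by
          rw [hLZdef]
          push_cast
          simp [ZMod.natCast_val, ZMod.cast_id]
        rw [ZMod.intCast_eq_intCast_iff] at hc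
        have h3 := Int.ModEq.dvd hc
        have hcast : ((2^n : ℕ) : ℤ) = (2:ℤ)^n := by push_cast; ring
        rw [hcast] at h3
        exact dvd_sub_comm.mp h3
      have h2 := hmod _ _ h1
      have h3 := hK1 ((z.val : ℤ))
      calc g (z + (Ln : ZMod (2^n)))
          = Complex.exp (cc * ((((π.eval (((z + (Ln : ZMod (2^n))).val : ℤ)))^2
            - (π.eval (((z + (Ln : ZMod (2^n))).val : ℤ) + dZ))^2 : ℤ)) : ℂ)) := rfl
        _ = Complex.exp (cc * ((((π.eval ((z.val : ℤ) + LZ))^2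
            - (π.eval (((z.val : ℤ) + LZ) + dZ))^2 : ℤ)) : ℂ)) := hexp_per _ _ h2
        _ = - Complex.exp (cc * ((((π.eval ((z.val : ℤ)))^2
            - (π.eval ((z.val : ℤ) + dZ))^2 : ℤ)) : ℂ)) := by
            apply hexp_flip
            have hre : (π.eval ((z.val : ℤ) + LZ))^2 - (π.eval (((z.val : ℤ) + LZ) + dZ))^2
                - ((π.eval ((z.val : ℤ)))^2 - (π.eval ((z.val : ℤ) + dZ))^2) - 2^n
                = (π.eval ((z.val:ℤ) + LZ))^2 - (π.eval ((z.val:ℤ) + LZ + dZ))^2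
                  - (π.eval ((z.val:ℤ)))^2 + (π.eval ((z.val:ℤ) + dZ))^2 - 2^n := by ring
            rw [hre]
            exact h3
        _ = - g z := rfl
    have h0 : ∑ z : ZMod (2^n), g z = - ∑ z : ZMod (2^n), g z := by
      conv_lhs => rw [← hshift]
      rw [Finset.sum_congr rfl (fun z _ => hneg z), Finset.sum_neg_distrib]
    have h2S : (2:ℂ) * (∑ z : ZMod (2^n), g z) = 0 := by
      rw [two_mul]
      nth_rewrite 2 [h0]
      ring
    rcases mul_eq_zero.mp h2S with h | h
    · norm_num at h
    · exact h
end

section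
/- Let N = 2^n with n ≥ 2, let u be an odd integer, and let s be the Zadoff–Chu sequence of length N with root index u (so s(k) = exp(−π·i·u·k²/N) since N is even). Let π be any polynomial with integer coefficients that is a permutation polynomial over ℤ_{2^n}, let σ be the permutation of ℤ/Nℤ induced by π, and define y : ℤ/Nℤ → ℂ by y(x) = s(k) for any integer representative k of σ⁻¹(x). Then y is a CAZAC sequence: |y(x)| = 1 for every x, and for every nonzero d ∈ ℤ/Nℤ, Σ_{x ∈ ℤ/Nℤ} y(x)·conj(y(x+d)) = 0. -/
open Polynomial

lemma evenDiffZC (p : Polynomial ℤ) {a b : ℤ} (h : (2:ℤ) ∣ a - b) :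
    (2:ℤ) ∣ p.eval a - p.eval b :=
  h.trans (Polynomial.sub_dvd_eval_sub a b p)

lemma binPowZC {h d : ℤ} (hh : (2:ℤ) ∣ h) (hd : (2:ℤ) ∣ d) :
    ∀ i, 2 ≤ i → 2*h*d ∣ (h+d)^i - h^i - d^i := by
  intro i hi
  induction i, hi using Nat.le_induction with
  | base => exact ⟨1, by ring⟩
  | succ m hm ih =>
    obtain ⟨j, rfl⟩ : ∃ j, m = j + 1 := ⟨m - 1, by omega⟩
    have hid : (h+d)^(j+1+1) - h^(j+1+1) - d^(j+1+1)
        = (h+d)*((h+d)^(j+1) - h^(j+1) - d^(j+1)) + h*d*(d^j + h^j) := by ring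
    rw [hid]
    refine dvd_add (Dvd.dvd.mul_left ih (h+d)) ?_
    obtain ⟨c, hc⟩ : (2:ℤ) ∣ d^j + h^j :=
      dvd_add (hd.trans (dvd_pow_self d (by omega))) (hh.trans (dvd_pow_self h (by omega)))
    exact ⟨c, by rw [hc]; ring⟩

lemma sqLiftZC (n : ℕ) (hn : n ≠ 0) {a b : ℤ} (h : (2:ℤ)^n ∣ a - b) :
    (2:ℤ)^(n+1) ∣ a^2 - b^2 := by
  obtain ⟨t, ht⟩ := h
  obtain ⟨c, hc⟩ : (2:ℤ) ∣ a + b := by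
    have h2 : (2:ℤ) ∣ a - b := by
      rw [ht]; exact Dvd.dvd.mul_right (dvd_pow_self 2 hn) t
    omega
  refine ⟨t * c, ?_⟩
  have : a^2 - b^2 = (a-b)*(a+b) := by ring
  rw [this, ht, hc, pow_succ]
  ring

/-- Theorem 4.2(ii): for `N = 2^n` (`n ≥ 2`), an odd root index `u`, the ZC sequence
`s(k) = exp(−π i u k²/N)`, and any polynomial `π ∈ ℤ[x]` which is a permutation polynomial
over `ℤ_{2^n}` with induced permutation `σ` of `ℤ/Nℤ`, the sequence `s∘π⁻¹` given by
`y(x) = s(σ⁻¹(x))` is a CAZAC sequence. -/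
theorem stmt_11 (n : ℕ) (hn : 2 ≤ n) (N : ℕ) [NeZero N] (hN : N = 2 ^ n)
    (u : ℤ) (hu : Odd u)
    (s : ℤ → ℂ)
    (hs : ∀ k : ℤ, s k =
      Complex.exp (-(Real.pi : ℂ) * Complex.I * (u : ℂ) * (k : ℂ) ^ 2 / (N : ℂ)))
    (π : Polynomial ℤ)
    (f : ZMod N → ZMod N)
    (hf : ∀ x, f x = (π.map (Int.castRingHom (ZMod N))).eval x)
    (hbij : Function.Bijective f)
    (y : ZMod N → ℂ)
    (hy : ∀ x : ZMod N,
      y x = s (((((Equiv.ofBijective f hbij).symm x).val : ℕ) : ℤ))) :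
    (∀ x : ZMod N, ‖y x‖ = 1) ∧
    ∀ d : ZMod N, d ≠ 0 →
      ∑ x : ZMod N, y x * (starRingEnd ℂ) (y (x + d)) = 0 := by
  have hNpos : 0 < N := Nat.pos_of_ne_zero (NeZero.ne N)
  have hN1 : (N:ℤ) = 2^n := by rw [hN]; push_cast; ring
  constructor
  · intro x
    rw [hy, hs, Complex.norm_exp]
    set k : ℤ := ((((Equiv.ofBijective f hbij).symm x).val : ℕ) : ℤ) with hk
    have hz : (-(Real.pi:ℂ) * Complex.I * (u:ℂ) * (k:ℂ)^2 / (N:ℂ))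
        = Complex.I * ((-(Real.pi * (u:ℝ) * (k:ℝ)^2 / (N:ℝ)) : ℝ) : ℂ) := by
      push_cast; ring
    rw [hz]
    have hre : ∀ r : ℝ, (Complex.I * (r:ℂ)).re = 0 := fun r => by simp
    rw [hre, Real.exp_zero]
  · intro d hd
    set φ : ℤ →+* ZMod N := Int.castRingHom (ZMod N) with hφ
    set P : ZMod N ≃ ZMod N := Equiv.ofBijective f hbij with hP
    set g : Polynomial ℤ → Polynomial ℤ := fun p => p.comp π with hg
    have evalIter : ∀ (m : ℕ) (z : ZMod N), ((g^[m] X).map φ).eval z = f^[m] z := by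
      intro m
      induction m with
      | zero => intro z; simp
      | succ m ih =>
        intro z
        rw [Function.iterate_succ_apply' g m X]
        show eval z (((g^[m] X).comp π).map φ) = f^[m+1] z
        rw [Polynomial.map_comp, Polynomial.eval_comp, ← hf z, ih (f z),
          ← Function.iterate_succ_apply f m z]
    have hPpow : ∀ (m : ℕ) (z : ZMod N), (P ^ m) z = f^[m] z := by
      intro m
      induction m with
      | zero => intro z; simp
      | succ m ih =>
        intro z
        rw [pow_succ, Equiv.Perm.mul_apply]
        have hPz : P z = f z := rfl
        rw [hPz, ih (f z), ← Function.iterate_succ_apply f m z]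
    set r : ℕ := orderOf P with hr
    have hrpos : 0 < r := orderOf_pos P
    have hsymmpow : ∀ z : ZMod N, P.symm z = f^[r-1] z := by
      intro z
      have h1 : P⁻¹ = P ^ (r-1) := by
        apply inv_eq_of_mul_eq_one_right
        have h2 : P * P ^ (r - 1) = P ^ (r - 1 + 1) := (pow_succ' P (r-1)).symm
        have h5 : r - 1 + 1 = r := by omega
        rw [h2, h5]
        exact pow_orderOf_eq_one P
      have h3 : P.symm z = P⁻¹ z := rfl
      rw [h3, h1, hPpow]
    set Q : Polynomial ℤ := g^[r-1] X with hQdef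
    have hQeval : ∀ z : ZMod N, (Q.map φ).eval z = P.symm z := by
      intro z; rw [hQdef, evalIter, hsymmpow]
    have hQcast : ∀ w : ℤ, ((Q.eval w : ℤ) : ZMod N) = P.symm ((w : ZMod N)) := by
      intro w
      rw [← hQeval ((w : ZMod N))]
      have := Polynomial.eval_intCast_map φ Q w
      rw [this]
      rfl
    have castdvd : ∀ a b : ℤ, ((a : ZMod N) = (b : ZMod N)) ↔ ((2:ℤ)^n ∣ a - b) := by
      intro a b
      rw [ZMod.intCast_eq_intCast_iff, Int.ModEq]
      constructor
      · intro hmod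
        have h4 : (N:ℤ) ∣ b - a := Int.ModEq.dvd hmod
        rw [hN1] at h4
        exact (dvd_sub_comm).mp h4
      · intro hdvd
        have h4 : (N:ℤ) ∣ b - a := by rw [hN1]; exact (dvd_sub_comm).mp hdvd
        exact Int.modEq_iff_dvd.mpr h4
    set τ : ZMod N → ℤ := fun z => (((P.symm z).val : ℕ) : ℤ) with hτdef
    have hτcast : ∀ z : ZMod N, ((τ z : ℤ) : ZMod N) = P.symm z := by
      intro z
      show ((((P.symm z).val : ℕ) : ℤ) : ZMod N) = P.symm z
      rw [Int.cast_natCast]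
      exact ZMod.natCast_rightInverse (P.symm z)
    have hτQ : ∀ w : ℤ, (2:ℤ)^n ∣ τ ((w : ZMod N)) - Q.eval w := by
      intro w
      rw [← castdvd, hτcast, hQcast]
    have hQinj : ∀ a b : ℤ, (2:ℤ)^n ∣ Q.eval a - Q.eval b → (2:ℤ)^n ∣ a - b := by
      intro a b hab
      rw [← castdvd] at hab ⊢
      exact P.symm.injective (by rw [← hQcast, ← hQcast, hab])
    have hQsurj : ∀ t : ℤ, ∃ w : ℤ, (2:ℤ)^n ∣ Q.eval w - t := by
      intro t
      refine ⟨(((P ((t : ZMod N))).val : ℕ) : ℤ), ?_⟩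
      rw [← castdvd, hQcast]
      have h6 : (((((P ((t:ZMod N))).val : ℕ) : ℤ)) : ZMod N) = P ((t:ZMod N)) := by
        rw [Int.cast_natCast]
        exact ZMod.natCast_rightInverse _
      rw [h6, Equiv.symm_apply_apply]
    have two_dvd_pow : (2:ℤ) ∣ 2^n := dvd_pow_self 2 (by omega)
    have hQodd01 : ¬ (2:ℤ) ∣ (Q.eval 1 - Q.eval 0) := by
      intro hcon
      obtain ⟨w, hw⟩ := hQsurj (Q.eval 0 + 1)
      have hw2 : (2:ℤ) ∣ Q.eval w - (Q.eval 0 + 1) := two_dvd_pow.trans hw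
      rcases Int.even_or_odd w with he | ho
      · have h7 : (2:ℤ) ∣ Q.eval w - Q.eval 0 := by
          refine evenDiffZC Q ?_
          obtain ⟨c, hc⟩ := he; omega
        omega
      · have h7 : (2:ℤ) ∣ Q.eval w - Q.eval 1 := by
          refine evenDiffZC Q ?_
          obtain ⟨c, hc⟩ := ho; omega
        omega
    have hparity : ∀ a b : ℤ, ¬ (2:ℤ) ∣ (a - b) → ¬ (2:ℤ) ∣ (Q.eval a - Q.eval b) := by
      intro a b hab hcon
      rcases Int.even_or_odd a with ⟨c, hc⟩ | ⟨c, hc⟩ <;>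
        rcases Int.even_or_odd b with ⟨c', hc'⟩ | ⟨c', hc'⟩
      · exact hab ⟨c - c', by omega⟩
      · have h8 : (2:ℤ) ∣ Q.eval a - Q.eval 0 := evenDiffZC Q ⟨c, by omega⟩
        have h9 : (2:ℤ) ∣ Q.eval b - Q.eval 1 := evenDiffZC Q ⟨c', by omega⟩
        exact hQodd01 (by omega)
      · have h8 : (2:ℤ) ∣ Q.eval a - Q.eval 1 := evenDiffZC Q ⟨c, by omega⟩
        have h9 : (2:ℤ) ∣ Q.eval b - Q.eval 0 := evenDiffZC Q ⟨c', by omega⟩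
        exact hQodd01 (by omega)
      · exact hab ⟨c - c', by omega⟩
    have hQder : ∀ w : ℤ, ¬ (2:ℤ) ∣ Q.derivative.eval w := by
      intro w hcon
      obtain ⟨m, hm⟩ := hcon
      obtain ⟨k2, hk2⟩ := Q.binomExpansion w (2^(n-1))
      have hdvd : (2:ℤ)^n ∣ Q.eval (w + 2^(n-1)) - Q.eval w := by
        rw [hk2]
        have h10 : (2:ℤ)^n ∣ Q.derivative.eval w * 2^(n-1) := by
          rw [hm]
          refine ⟨m, ?_⟩
          have : (2:ℤ)^n = 2^(n-1) * 2 := by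
            rw [← pow_succ]; congr 1; omega
          rw [this]; ring
        have h11 : (2:ℤ)^n ∣ k2 * ((2:ℤ)^(n-1))^2 := by
          have h12 : ((2:ℤ)^(n-1))^2 = 2^(2*(n-1)) := by rw [← pow_mul]; congr 1; omega
          have h13 : (2:ℤ)^n ∣ 2^(2*(n-1)) := pow_dvd_pow 2 (by omega)
          rw [h12]
          exact Dvd.dvd.mul_left h13 k2
        have h14 : Q.eval w + Q.derivative.eval w * 2^(n-1) + k2 * ((2:ℤ)^(n-1))^2 - Q.eval w
            = Q.derivative.eval w * 2^(n-1) + k2 * ((2:ℤ)^(n-1))^2 := by ring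
        rw [h14]
        exact dvd_add h10 h11
      have h15 := hQinj _ _ hdvd
      have h16 : (2:ℤ)^n ∣ 2^(n-1) := by
        have : w + 2^(n-1) - w = (2:ℤ)^(n-1) := by ring
        rwa [this] at h15
      have h17 : (2:ℤ)^n ≤ 2^(n-1) := Int.le_of_dvd (by positivity) h16
      have h18 : (2:ℤ)^(n-1) < 2^n := by
        apply pow_lt_pow_right₀ (by norm_num) (by omega)
      omega
    have hNC : (N:ℂ) = (2:ℂ)^n := by rw [hN]; push_cast; ring
    have hconj : ∀ k : ℤ, (starRingEnd ℂ) (-(Real.pi:ℂ) * Complex.I * (u:ℂ) * (k:ℂ)^2 / (N:ℂ))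
        = (Real.pi:ℂ) * Complex.I * (u:ℂ) * (k:ℂ)^2 / (N:ℂ) := by
      intro k
      have hz : (-(Real.pi:ℂ) * Complex.I * (u:ℂ) * (k:ℂ)^2 / (N:ℂ))
          = Complex.I * ((-(Real.pi * (u:ℝ) * (k:ℝ)^2 / (N:ℝ)) : ℝ) : ℂ) := by push_cast; ring
      rw [hz, map_mul, Complex.conj_I, Complex.conj_ofReal]
      push_cast; ring
    have expkey : ∀ k1 k2 k3 k4 : ℤ,
        (∃ M : ℤ, k2^2 - k1^2 - k4^2 + k3^2 = 2^n + 2^(n+1)*M) →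
        Complex.exp (-(Real.pi:ℂ) * Complex.I * (u:ℂ) * (k1:ℂ)^2 / (N:ℂ)) *
          (starRingEnd ℂ) (Complex.exp (-(Real.pi:ℂ) * Complex.I * (u:ℂ) * (k2:ℂ)^2 / (N:ℂ))) =
        -(Complex.exp (-(Real.pi:ℂ) * Complex.I * (u:ℂ) * (k3:ℂ)^2 / (N:ℂ)) *
          (starRingEnd ℂ) (Complex.exp (-(Real.pi:ℂ) * Complex.I * (u:ℂ) * (k4:ℂ)^2 / (N:ℂ)))) := by
      rintro k1 k2 k3 k4 ⟨M, hM⟩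
      rw [← Complex.exp_conj, ← Complex.exp_conj, hconj k2, hconj k4,
        ← Complex.exp_add, ← Complex.exp_add]
      have hcast : ((k2:ℂ))^2 - (k1:ℂ)^2 - (k4:ℂ)^2 + (k3:ℂ)^2
          = (2:ℂ)^n + 2^(n+1)*((M : ℤ):ℂ) := by exact_mod_cast hM
      have hsplit : -(Real.pi:ℂ) * Complex.I * (u:ℂ) * (k1:ℂ)^2 / (N:ℂ)
            + (Real.pi:ℂ) * Complex.I * (u:ℂ) * (k2:ℂ)^2 / (N:ℂ)
          = (-(Real.pi:ℂ) * Complex.I * (u:ℂ) * (k3:ℂ)^2 / (N:ℂ)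
            + (Real.pi:ℂ) * Complex.I * (u:ℂ) * (k4:ℂ)^2 / (N:ℂ))
            + ((u:ℂ) * ((Real.pi:ℂ) * Complex.I) + ((u*M : ℤ):ℂ) * (2*(Real.pi:ℂ)*Complex.I)) := by
        rw [hNC]
        have h2n : (2:ℂ)^n ≠ 0 := pow_ne_zero _ two_ne_zero
        have hinv : (2:ℂ)^n * ((2:ℂ)^n)⁻¹ = 1 := mul_inv_cancel₀ h2n
        rw [pow_succ] at hcast
        push_cast
        linear_combination ((Real.pi:ℂ) * Complex.I * (u:ℂ) / (2:ℂ)^n) * hcast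
          + ((Real.pi:ℂ) * Complex.I * (u:ℂ) + 2 * (Real.pi:ℂ) * Complex.I * (u:ℂ) * (M:ℂ)) * hinv
      rw [hsplit, Complex.exp_add]
      have hexp1 : Complex.exp ((u:ℂ) * ((Real.pi:ℂ) * Complex.I)
          + ((u*M : ℤ):ℂ) * (2*(Real.pi:ℂ)*Complex.I)) = -1 := by
        obtain ⟨t, ht⟩ := hu
        have harr : (u:ℂ) * ((Real.pi:ℂ) * Complex.I) + ((u*M : ℤ):ℂ) * (2*(Real.pi:ℂ)*Complex.I)
            = ((t + u*M : ℤ):ℂ) * (2*(Real.pi:ℂ)*Complex.I) + (Real.pi:ℂ)*Complex.I := by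
          push_cast [ht]; ring
        rw [harr, Complex.exp_add, Complex.exp_int_mul_two_pi_mul_I, Complex.exp_pi_mul_I]
        ring
      rw [hexp1]
      ring
    have oddof : ∀ z : ℤ, ¬ (2:ℤ) ∣ z → Odd z := by
      intro z hnd
      rcases Int.even_or_odd z with ⟨c, hc⟩ | ho
      · exact absurd ⟨c, by omega⟩ hnd
      · exact ho
    have hdvalne : d.val ≠ 0 := fun hc => hd ((ZMod.val_eq_zero d).mp hc)
    obtain ⟨v, e, heodd, hde⟩ := Nat.exists_eq_two_pow_mul_odd hdvalne
    obtain ⟨ec, hec⟩ := heodd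
    have hvlt : v < n := by
      have h2 : d.val < N := ZMod.val_lt d
      by_contra hcon
      push_neg at hcon
      have h3 : (2:ℕ)^n ≤ 2^v := Nat.pow_le_pow_right (by norm_num) hcon
      have h4 : (2:ℕ)^v ≤ d.val := by
        rw [hde]
        exact Nat.le_mul_of_pos_right _ (by omega)
      have h5 : d.val < 2^n := lt_of_lt_of_eq h2 hN
      omega
    set a : ℕ := n - 1 - v with ha
    have hav : a + v + 1 = n := by omega
    set dz : ℤ := ((d.val : ℕ) : ℤ) with hdz
    set hzz : ℤ := 2^a with hhzz
    set hbar : ZMod N := ((hzz : ℤ) : ZMod N) with hhbar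
    set E : ℤ := ((e : ℕ) : ℤ) with hE
    have hdz2 : dz = 2^v * E := by rw [hdz, hE, hde]; push_cast; ring
    have hEodd : Odd E := by
      refine ⟨(ec : ℤ), ?_⟩
      rw [hE, hec]; push_cast; ring
    have key : ∀ x : ZMod N,
        y (x + hbar) * (starRingEnd ℂ) (y (x + hbar + d)) =
        -(y x * (starRingEnd ℂ) (y (x + d))) := by
      intro x
      set ℓ : ℤ := ((x.val : ℕ) : ℤ) with hℓ
      have hxcast : ((ℓ : ℤ) : ZMod N) = x := by
        rw [hℓ, Int.cast_natCast]; exact ZMod.natCast_rightInverse x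
      have hdcast : ((dz : ℤ) : ZMod N) = d := by
        rw [hdz, Int.cast_natCast]; exact ZMod.natCast_rightInverse d
      have hpw3x : (2:ℤ) * (2^a * 2^v) = 2^n := by
        rw [← hav, pow_succ', pow_add]
      have c1 : (2:ℤ)^n ∣ τ (x + hbar + d) - Q.eval (ℓ + dz + hzz) := by
        have h0 := hτQ (ℓ + dz + hzz)
        have harg : (((ℓ + dz + hzz : ℤ)) : ZMod N) = x + hbar + d := by
          push_cast
          rw [hxcast, hdcast, ← hhbar]
          ring
        rwa [harg] at h0
      have c2 : (2:ℤ)^n ∣ τ (x + hbar) - Q.eval (ℓ + hzz) := by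
        have h0 := hτQ (ℓ + hzz)
        have harg : (((ℓ + hzz : ℤ)) : ZMod N) = x + hbar := by
          push_cast
          rw [hxcast, ← hhbar]
        rwa [harg] at h0
      have c3 : (2:ℤ)^n ∣ τ (x + d) - Q.eval (ℓ + dz) := by
        have h0 := hτQ (ℓ + dz)
        have harg : (((ℓ + dz : ℤ)) : ZMod N) = x + d := by
          push_cast
          rw [hxcast, hdcast]
        rwa [harg] at h0
      have c4 : (2:ℤ)^n ∣ τ x - Q.eval ℓ := by
        have h0 := hτQ ℓ
        rwa [hxcast] at h0
      have hAC : ∃ w : ℤ, Odd w ∧ Q.eval (ℓ + dz + hzz) - Q.eval (ℓ + dz) = 2^a * w := by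
        rcases Nat.eq_zero_or_pos a with ha0 | hapos
        · have hz1 : hzz = 1 := by rw [hhzz, ha0, pow_zero]
          refine ⟨Q.eval (ℓ + dz + hzz) - Q.eval (ℓ + dz), ?_, by rw [ha0, pow_zero, one_mul]⟩
          apply oddof
          apply hparity
          rw [hz1]
          intro hcon
          omega
        · obtain ⟨k2, hk2⟩ := Q.binomExpansion (ℓ + dz) hzz
          obtain ⟨c, hc⟩ := oddof _ (hQder (ℓ + dz))
          obtain ⟨c2, hc2⟩ : (2:ℤ) ∣ k2 * hzz :=
            Dvd.dvd.mul_left (by rw [hhzz]; exact dvd_pow_self 2 (by omega)) k2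
          refine ⟨Q.derivative.eval (ℓ + dz) + k2 * hzz, ⟨c + c2, by omega⟩, ?_⟩
          rw [← hhzz]
          linear_combination hk2
      have hCE : ∃ w : ℤ, Odd w ∧ Q.eval (ℓ + dz) - Q.eval ℓ = 2^v * w := by
        rcases Nat.eq_zero_or_pos v with hv0 | hvpos
        · refine ⟨Q.eval (ℓ + dz) - Q.eval ℓ, ?_, by rw [hv0, pow_zero, one_mul]⟩
          apply oddof
          apply hparity
          obtain ⟨cE, hcE⟩ := hEodd
          have h9 : dz = 2 * cE + 1 := by rw [hdz2, hv0, pow_zero, one_mul, hcE]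
          intro hcon
          omega
        · obtain ⟨k2, hk2⟩ := Q.binomExpansion ℓ dz
          obtain ⟨c, hc⟩ := oddof _ (hQder ℓ)
          obtain ⟨c2, hc2⟩ : (2:ℤ) ∣ k2 * dz := by
            refine Dvd.dvd.mul_left ?_ k2
            rw [hdz2]
            exact Dvd.dvd.mul_right (dvd_pow_self 2 (by omega)) E
          refine ⟨E * (Q.derivative.eval ℓ + k2 * dz), hEodd.mul ⟨c + c2, by omega⟩, ?_⟩
          linear_combination hk2 + (Q.derivative.eval ℓ + k2 * dz) * hdz2
      have hsev : ∃ s2 : ℤ, Q.eval (ℓ + dz + hzz) - Q.eval (ℓ + dz) + Q.eval (ℓ + hzz) + Q.eval ℓ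
          = 2 * s2 := by
        rcases Nat.eq_zero_or_pos a with ha0 | hapos
        · have hz1 : hzz = 1 := by rw [hhzz, ha0, pow_zero]
          have o1 : ¬ (2:ℤ) ∣ (Q.eval (ℓ+dz+hzz) - Q.eval (ℓ+dz)) := by
            apply hparity
            rw [hz1]
            intro hcon
            omega
          have o2 : ¬ (2:ℤ) ∣ (Q.eval (ℓ+hzz) - Q.eval ℓ) := by
            apply hparity
            rw [hz1]
            intro hcon
            omega
          obtain ⟨p1, hp1⟩ := oddof _ o1
          obtain ⟨p2, hp2⟩ := oddof _ o2
          exact ⟨p1 + p2 + Q.eval ℓ + 1, by omega⟩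
        · have h2hz : (2:ℤ) ∣ hzz := by rw [hhzz]; exact dvd_pow_self 2 (by omega)
          have e1 : (2:ℤ) ∣ (Q.eval (ℓ+dz+hzz) - Q.eval (ℓ+dz)) := by
            apply evenDiffZC
            have h9 : ℓ + dz + hzz - (ℓ + dz) = hzz := by ring
            rw [h9]
            exact h2hz
          have e2 : (2:ℤ) ∣ (Q.eval (ℓ+hzz) - Q.eval ℓ) := by
            apply evenDiffZC
            have h9 : ℓ + hzz - ℓ = hzz := by ring
            rw [h9]
            exact h2hz
          obtain ⟨p1, hp1⟩ := e1
          obtain ⟨p2, hp2⟩ := e2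
          exact ⟨p1 + p2 + Q.eval ℓ, by omega⟩
      have hD2 : ∃ m : ℤ, Q.eval (ℓ + dz + hzz) - Q.eval (ℓ + hzz) - Q.eval (ℓ + dz) + Q.eval ℓ
          = 2^n * m := by
        rcases Nat.eq_zero_or_pos a with ha0 | hapos
        · -- a = 0 : hzz = 1, v = n-1 ≥ 1
          have hz1 : hzz = 1 := by rw [hhzz, ha0, pow_zero]
          have hvn : v + 1 = n := by omega
          obtain ⟨k2, hk2⟩ := (Q.comp (X + Polynomial.C 1) - Q).binomExpansion ℓ dz
          have hFe : ∀ t : ℤ, (Q.comp (X + Polynomial.C 1) - Q).eval t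
              = Q.eval (t+1) - Q.eval t := by
            intro t; simp [Polynomial.eval_comp]
          have hFd : ((Q.comp (X + Polynomial.C 1) - Q).derivative).eval ℓ
              = Q.derivative.eval (ℓ+1) - Q.derivative.eval ℓ := by
            rw [Polynomial.derivative_sub, Polynomial.derivative_comp]
            simp [Polynomial.eval_comp]
          rw [hFe (ℓ + dz), hFe ℓ, hFd] at hk2
          obtain ⟨c, hc⟩ : (2:ℤ) ∣ (Q.derivative.eval (ℓ+1) - Q.derivative.eval ℓ) := by
            obtain ⟨c1x, hc1⟩ := oddof _ (hQder (ℓ+1))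
            obtain ⟨c2x, hc2⟩ := oddof _ (hQder ℓ)
            exact ⟨c1x - c2x, by omega⟩
          obtain ⟨d2, hd2⟩ : (2:ℤ) ∣ dz := by
            rw [hdz2]
            exact Dvd.dvd.mul_right (dvd_pow_self 2 (by omega)) E
          refine ⟨E * c + k2 * (E * d2), ?_⟩
          rw [hz1]
          have hpwv : (2:ℤ)^v * 2 = 2^n := by rw [← hvn, pow_succ]
          linear_combination hk2 + dz * hc + c * 2 * hdz2 + E * c * hpwv
            + k2 * dz * hd2 + 2 * k2 * d2 * hdz2 + k2 * E * d2 * hpwv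
        · rcases Nat.eq_zero_or_pos v with hv0 | hvpos
          · -- v = 0 : a = n-1 ≥ 1
            have han : a + 1 = n := by omega
            obtain ⟨k2, hk2⟩ := (Q.comp (X + Polynomial.C dz) - Q).binomExpansion ℓ hzz
            have hGe : ∀ t : ℤ, (Q.comp (X + Polynomial.C dz) - Q).eval t
                = Q.eval (t+dz) - Q.eval t := by
              intro t; simp [Polynomial.eval_comp]
            have hGd : ((Q.comp (X + Polynomial.C dz) - Q).derivative).eval ℓ
                = Q.derivative.eval (ℓ+dz) - Q.derivative.eval ℓ := by
              rw [Polynomial.derivative_sub, Polynomial.derivative_comp]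
              simp [Polynomial.eval_comp]
            rw [hGe (ℓ + hzz), hGe ℓ, hGd] at hk2
            have harg2 : ℓ + hzz + dz = ℓ + dz + hzz := by ring
            rw [harg2] at hk2
            obtain ⟨c, hc⟩ : (2:ℤ) ∣ (Q.derivative.eval (ℓ+dz) - Q.derivative.eval ℓ) := by
              obtain ⟨c1x, hc1⟩ := oddof _ (hQder (ℓ+dz))
              obtain ⟨c2x, hc2⟩ := oddof _ (hQder ℓ)
              exact ⟨c1x - c2x, by omega⟩
            refine ⟨c + k2 * 2^(n-2), ?_⟩
            have hpa : (2:ℤ)^a * 2 = 2^n := by rw [← han, pow_succ]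
            have hpa2 : (2:ℤ)^a * (2:ℤ)^a = 2^n * 2^(n-2) := by
              rw [← pow_add, ← pow_add]
              congr 1
              omega
            rw [← hhzz] at hpa hpa2
            linear_combination hk2 + (2:ℤ)^a * hc + c * hpa + k2 * hpa2
          · -- a ≥ 1, v ≥ 1 : taylor expansion
            have h2hz : (2:ℤ) ∣ hzz := by rw [hhzz]; exact dvd_pow_self 2 (by omega)
            have h2dz : (2:ℤ) ∣ dz := by
              rw [hdz2]
              exact Dvd.dvd.mul_right (dvd_pow_self 2 (by omega)) E
            have h2n : (2:ℤ)*hzz*dz = 2^n * E := by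
              rw [hhzz, hdz2]
              linear_combination E * hpw3x
            have hAq : Q.eval (ℓ+dz+hzz) = (Polynomial.taylor ℓ Q).eval (dz+hzz) := by
              rw [Polynomial.taylor_eval]
              congr 1
              ring
            have hBq : Q.eval (ℓ+hzz) = (Polynomial.taylor ℓ Q).eval hzz := by
              rw [Polynomial.taylor_eval]
              congr 1
              ring
            have hCq : Q.eval (ℓ+dz) = (Polynomial.taylor ℓ Q).eval dz := by
              rw [Polynomial.taylor_eval]
              congr 1
              ring
            have hEq : Q.eval ℓ = (Polynomial.taylor ℓ Q).eval 0 := by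
              rw [Polynomial.taylor_eval]
              congr 1
              ring
            have hdvd : (2:ℤ)^n ∣ (Q.eval (ℓ+dz+hzz) - Q.eval (ℓ+hzz) - Q.eval (ℓ+dz) + Q.eval ℓ) := by
              rw [hAq, hBq, hCq, hEq]
              rw [Polynomial.eval_eq_sum_range, Polynomial.eval_eq_sum_range,
                Polynomial.eval_eq_sum_range, Polynomial.eval_eq_sum_range]
              rw [← Finset.sum_sub_distrib, ← Finset.sum_sub_distrib, ← Finset.sum_add_distrib]
              refine Finset.dvd_sum ?_
              intro i _
              match i with
              | 0 => simp
              | 1 =>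
                have h9 : (Polynomial.taylor ℓ Q).coeff 1 * (dz+hzz)^1
                    - (Polynomial.taylor ℓ Q).coeff 1 * hzz^1
                    - (Polynomial.taylor ℓ Q).coeff 1 * dz^1
                    + (Polynomial.taylor ℓ Q).coeff 1 * (0:ℤ)^1 = 0 := by ring
                rw [h9]
                exact dvd_zero _
              | (j+2) =>
                obtain ⟨cb, hcb⟩ := binPowZC h2hz h2dz (j+2) (by omega)
                have hzero : ((0:ℤ))^(j+2) = 0 := by
                  exact zero_pow (by omega)
                have hterm : (Polynomial.taylor ℓ Q).coeff (j+2) * (dz+hzz)^(j+2)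
                    - (Polynomial.taylor ℓ Q).coeff (j+2) * hzz^(j+2)
                    - (Polynomial.taylor ℓ Q).coeff (j+2) * dz^(j+2)
                    + (Polynomial.taylor ℓ Q).coeff (j+2) * (0:ℤ)^(j+2)
                    = (Polynomial.taylor ℓ Q).coeff (j+2)
                      * ((hzz+dz)^(j+2) - hzz^(j+2) - dz^(j+2)) := by
                  rw [hzero, add_comm dz hzz]
                  ring
                rw [hterm]
                refine Dvd.dvd.mul_left ⟨E * cb, ?_⟩ _
                rw [hcb]
                linear_combination cb * h2n
            obtain ⟨m, hm⟩ := hdvd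
            exact ⟨m, hm⟩
      obtain ⟨w1, hw1odd, hw1⟩ := hAC
      obtain ⟨w2, hw2odd, hw2⟩ := hCE
      obtain ⟨s2, hs2e⟩ := hsev
      obtain ⟨m2, hm2⟩ := hD2
      obtain ⟨t0, ht0⟩ := hw1odd.mul hw2odd
      have hDform : Q.eval (ℓ+dz+hzz)^2 - Q.eval (ℓ+hzz)^2 - Q.eval (ℓ+dz)^2 + Q.eval ℓ^2
          = 2^n + 2^(n+1) * (t0 + m2 * s2) := by
        linear_combination 2 * (Q.eval (ℓ+dz) - Q.eval ℓ) * hw1 + 2 * (2^a * w1) * hw2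
          + 2 * (2^a * 2^v) * ht0 + (2*t0+1) * hpw3x
          + (Q.eval (ℓ+dz+hzz) - Q.eval (ℓ+dz) + Q.eval (ℓ+hzz) + Q.eval ℓ) * hm2
          + 2^n * m2 * hs2e
      obtain ⟨e1, he1⟩ := sqLiftZC n (by omega) c1
      obtain ⟨e2, he2⟩ := sqLiftZC n (by omega) c2
      obtain ⟨e3, he3⟩ := sqLiftZC n (by omega) c3
      obtain ⟨e4, he4⟩ := sqLiftZC n (by omega) c4
      have hDt : ∃ M : ℤ, (τ (x+hbar+d))^2 - (τ (x+hbar))^2 - (τ (x+d))^2 + (τ x)^2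
          = 2^n + 2^(n+1)*M := by
        refine ⟨t0 + m2 * s2 + e1 - e2 - e3 + e4, ?_⟩
        linear_combination hDform + he1 - he2 - he3 + he4
      rw [hy (x+hbar), hy (x+hbar+d), hy x, hy (x+d), hs, hs, hs, hs]
      exact expkey _ _ _ _ hDt
    have hsum : ∑ x : ZMod N, y (x + hbar) * (starRingEnd ℂ) (y (x + hbar + d))
        = ∑ x : ZMod N, y x * (starRingEnd ℂ) (y (x + d)) :=
      Fintype.sum_equiv (Equiv.addRight hbar)
        (fun x => y (x + hbar) * (starRingEnd ℂ) (y (x + hbar + d)))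
        (fun x => y x * (starRingEnd ℂ) (y (x + d))) (fun x => rfl)
    have hneg : ∑ x : ZMod N, y x * (starRingEnd ℂ) (y (x + d))
        = - ∑ x : ZMod N, y x * (starRingEnd ℂ) (y (x + d)) := by
      conv_lhs => rw [← hsum]
      rw [Finset.sum_congr rfl (fun x _ => key x), Finset.sum_neg_distrib]
    exact add_self_eq_zero.mp (by linear_combination hneg)
end

section
/- Let N = 2^n with n ≥ 2, and let π be a polynomial with integer coefficients, with constant term π(0) = 0, that is a permutation polynomial over ℤ_{2^n}. Fix an integer d with 0 < d < N and let g = gcd(d, N). For k ∈ ℤ define H_d(k) = (π(k+d)² − π(k)² − π(d)²)/2. Then: (a) π(k+d)² − π(k)² − π(d)² is even, so H_d(k) is an integer for every k; (b) g divides H_d(k) for every integer k; and (c) the N/g integers H_d(0)/g, H_d(1)/g, …, H_d(N/g − 1)/g are pairwise incongruent modulo N/g, i.e., they form a complete residue system modulo N/g (so H_d(k)/g induces a permutation of ℤ/(N/g)ℤ). -/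
open Polynomial Finset

private lemma pp_taylor (p : Polynomial ℤ) (x e : ℤ) :
    p.eval (x + e) - p.eval x
      = ∑ k ∈ Finset.range p.natDegree, (Polynomial.hasseDeriv (k+1) p).eval x * e ^ (k+1) := by
  have h0 : p.eval (x + e) = (Polynomial.taylor x p).eval e := by
    rw [Polynomial.taylor_eval, add_comm]
  have h1 : (Polynomial.taylor x p).eval e
      = ∑ i ∈ Finset.range (p.natDegree + 1), (Polynomial.taylor x p).coeff i * e ^ i :=
    Polynomial.eval_eq_sum_range' (by rw [Polynomial.natDegree_taylor]; omega) e
  rw [h0, h1, Finset.sum_range_succ']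
  simp only [Polynomial.taylor_coeff, Polynomial.taylor_coeff_zero, Polynomial.hasseDeriv_zero',
    pow_zero, mul_one]
  ring

private lemma pp_inj (n : ℕ) (π : Polynomial ℤ)
    (hPP : Function.Bijective
      (fun x : ZMod (2^n) => (π.map (Int.castRingHom (ZMod (2^n)))).eval x))
    (m : ℕ) (hm : m ≤ n) (x y : ℤ) (h : (2:ℤ)^m ∣ π.eval x - π.eval y) :
    (2:ℤ)^m ∣ x - y := by
  haveI : NeZero (2^m) := ⟨by positivity⟩
  set f : ZMod (2^m) → ZMod (2^m) :=
    fun z => (π.map (Int.castRingHom (ZMod (2^m)))).eval z with hf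
  have hcast : ∀ a b : ℤ, (2:ℤ)^m ∣ a - b → ((a : ZMod (2^m)) = (b : ZMod (2^m))) := by
    intro a b hab
    rw [ZMod.intCast_eq_intCast_iff]
    apply Int.ModEq.symm
    apply Int.modEq_of_dvd
    push_cast
    exact hab
  have hcast' : ∀ a b : ℤ, ((a : ZMod (2^m)) = (b : ZMod (2^m))) → (2:ℤ)^m ∣ a - b := by
    intro a b hab
    rw [ZMod.intCast_eq_intCast_iff] at hab
    have := hab.symm.dvd
    push_cast at this
    exact this
  have hsurj : Function.Surjective f := by
    intro w
    obtain ⟨w0, rfl⟩ := ZMod.intCast_surjective w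
    obtain ⟨z, hz⟩ := hPP.surjective ((w0 : ZMod (2^n)))
    obtain ⟨z0, rfl⟩ := ZMod.intCast_surjective z
    refine ⟨(z0 : ZMod (2^m)), ?_⟩
    simp only [Polynomial.eval_intCast_map, Int.coe_castRingHom] at hz
    have hd : ((2:ℤ)^n) ∣ (π.eval z0 - w0) := by
      rw [ZMod.intCast_eq_intCast_iff] at hz
      have := hz.symm.dvd
      push_cast at this
      exact this
    have hgoal : f ((z0 : ℤ) : ZMod (2^m)) = ((π.eval z0 : ℤ) : ZMod (2^m)) := by
      simp [hf, Polynomial.eval_intCast_map, Int.coe_castRingHom]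
    rw [hgoal]
    exact hcast _ _ (dvd_trans (pow_dvd_pow 2 hm) hd)
  have hbij : Function.Bijective f := Finite.surjective_iff_bijective.mp hsurj
  have h2 : f ((x : ZMod (2^m))) = f ((y : ZMod (2^m))) := by
    have e1 : ∀ a : ℤ, f ((a : ℤ) : ZMod (2^m)) = ((π.eval a : ℤ) : ZMod (2^m)) := by
      intro a; simp [hf, Polynomial.eval_intCast_map, Int.coe_castRingHom]
    rw [e1, e1]
    exact hcast _ _ h
  exact hcast' _ _ (hbij.injective h2)
section PPLemmas

variable (n : ℕ) (π : Polynomial ℤ)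
variable (hinj : ∀ m : ℕ, m ≤ n → ∀ x y : ℤ, (2:ℤ)^m ∣ (π.eval x - π.eval y) → (2:ℤ)^m ∣ (x - y))

include hinj

private lemma pp_lemB (r : ℕ) (hr : r + 1 ≤ n) (y : ℤ) :
    (2:ℤ)^(r+1) ∣ (π.eval (y + 2^r) - π.eval y - 2^r) := by
  have h2t : (2:ℤ)^(r+1) = 2 * 2^r := by ring
  have hp : (0:ℤ) < 2^r := by positivity
  have h1 : (2:ℤ)^r ∣ (π.eval (y + 2^r) - π.eval y) := by
    have h := Polynomial.sub_dvd_eval_sub (y + 2^r) y π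
    simpa using h
  have h2 : ¬ (2:ℤ)^(r+1) ∣ (π.eval (y + 2^r) - π.eval y) := by
    intro hdvd
    have h3 := hinj (r+1) hr _ _ hdvd
    simp only [add_sub_cancel_left] at h3
    have h4 := Int.le_of_dvd hp h3
    omega
  obtain ⟨w, hw⟩ := h1
  have hwodd : ¬ (2:ℤ) ∣ w := by
    rintro ⟨w2, hw2⟩
    exact h2 ⟨w2, by rw [hw, hw2]; ring⟩
  obtain ⟨w2, hw2⟩ : (2:ℤ) ∣ (w - 1) := by omega
  exact ⟨w2, by rw [hw, show w = 1 + 2*w2 by omega]; ring⟩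

private lemma pp_lemB' (r : ℕ) (hr : r + 1 ≤ n) (c x : ℤ) :
    (2:ℤ)^(r+1) ∣ (π.eval (x + 2^r * c) - π.eval x - 2^r * c) := by
  induction c using Int.induction_on with
  | zero => simp
  | succ i ih =>
    have h1 := pp_lemB n π hinj r hr (x + 2^r * i)
    have heq : π.eval (x + 2^r * ((i:ℤ)+1)) - π.eval x - 2^r*((i:ℤ)+1)
         = (π.eval ((x + 2^r*i) + 2^r) - π.eval (x+2^r*i) - 2^r)
           + (π.eval (x + 2^r*i) - π.eval x - 2^r*i) := by
      rw [show x + 2^r*((i:ℤ)+1) = (x + 2^r*(i:ℤ)) + 2^r by ring]; ring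
    rw [heq]; exact dvd_add h1 ih
  | pred i ih =>
    have h1 := pp_lemB n π hinj r hr (x + 2^r * (-(i:ℤ)-1))
    have heq : π.eval (x + 2^r * (-(i:ℤ)-1)) - π.eval x - 2^r * (-(i:ℤ)-1)
         = (π.eval (x + 2^r*(-(i:ℤ))) - π.eval x - 2^r*(-(i:ℤ)))
           - (π.eval ((x + 2^r*(-(i:ℤ)-1)) + 2^r) - π.eval (x+2^r*(-(i:ℤ)-1)) - 2^r) := by
      rw [show (x + 2^r*(-(i:ℤ)-1)) + 2^r = x + 2^r * (-(i:ℤ)) by ring]; ring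
    rw [heq]; exact dvd_sub ih h1

private lemma pp_deriv_odd (hn : 2 ≤ n) (x : ℤ) : ¬ (2:ℤ) ∣ π.derivative.eval x := by
  rintro ⟨q, hq⟩
  have h4 : (2:ℤ)^2 ∣ (π.eval (x + 2) - π.eval x) := by
    rw [show (2:ℤ) = 2^1 by norm_num, pp_taylor π x (2^1)]
    apply Finset.dvd_sum
    intro k _
    rcases Nat.eq_zero_or_pos k with rfl | hkpos
    · simp only [zero_add, pow_one, Polynomial.hasseDeriv_one']
      exact ⟨q, by rw [hq]; ring⟩
    · exact Dvd.dvd.mul_left (pow_dvd_pow 2 (by omega)) _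
  have h5 := hinj 2 hn _ _ h4
  simp only [add_sub_cancel_left] at h5
  norm_num at h5

end PPLemmas

private lemma pp_deriv2_even (π : Polynomial ℤ) (x : ℤ) :
    (2:ℤ) ∣ (Polynomial.derivative (Polynomial.derivative π)).eval x := by
  have h := congrFun (Polynomial.factorial_smul_hasseDeriv (R := ℤ) 2) π
  have h2 : Polynomial.derivative (Polynomial.derivative π)
      = (2:ℕ) • Polynomial.hasseDeriv 2 π := by
    rw [show Polynomial.derivative (Polynomial.derivative π)
        = (Polynomial.derivative (R := ℤ))^[2] π by simp [Function.iterate_succ']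
      , ← h]
    simp [Nat.factorial]
  rw [h2]
  refine ⟨(Polynomial.hasseDeriv 2 π).eval x, ?_⟩
  simp [nsmul_eq_mul]
section PPMain

variable (n : ℕ) (π : Polynomial ℤ)
variable (hinj : ∀ m : ℕ, m ≤ n → ∀ x y : ℤ, (2:ℤ)^m ∣ (π.eval x - π.eval y) → (2:ℤ)^m ∣ (x - y))
variable (hn : 2 ≤ n)

include hinj hn

private lemma pp_deriv_diff (t : ℕ) (dz : ℤ) (hdz : (2:ℤ)^t ∣ dz) (x : ℤ) :
    (2:ℤ)^(t+1) ∣ (π.derivative.eval (x + dz) - π.derivative.eval x) := by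
  rcases Nat.eq_zero_or_pos t with rfl | ht
  · have h1 := pp_deriv_odd n π hinj hn x
    have h2 := pp_deriv_odd n π hinj hn (x + dz)
    simp only [zero_add, pow_one]
    omega
  · rw [pp_taylor π.derivative x dz]
    apply Finset.dvd_sum
    intro k _
    rcases Nat.eq_zero_or_pos k with rfl | hkpos
    · simp only [zero_add, pow_one, Polynomial.hasseDeriv_one']
      obtain ⟨q, hq⟩ := pp_deriv2_even π x
      obtain ⟨c, hc⟩ := hdz
      exact ⟨q * c, by rw [hq, hc]; ring⟩
    · have h1 : ((2:ℤ)^t)^2 ∣ dz^(k+1) :=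
        dvd_trans (pow_dvd_pow_of_dvd hdz 2) (pow_dvd_pow dz (by omega))
      have h2 : (2:ℤ)^(t+1) ∣ ((2:ℤ)^t)^2 := by
        rw [← pow_mul]; exact pow_dvd_pow 2 (by omega)
      exact Dvd.dvd.mul_left (dvd_trans h2 h1) _

private lemma pp_maincong (t : ℕ) (dz : ℤ) (hdz : (2:ℤ)^t ∣ dz) (htn : t + 1 ≤ n)
    (s : ℕ) (e : ℤ) (hse : (2:ℤ)^s ∣ e) (hstn : s + t + 1 ≤ n) (x : ℤ) :
    (2:ℤ)^(s+t+1) ∣ ((π.eval (x + dz + e) - π.eval (x + dz)) - (π.eval (x + e) - π.eval x)) := by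
  rcases Nat.eq_zero_or_pos s with rfl | hs
  · obtain ⟨c, hc⟩ := hdz
    have h1 := pp_lemB' n π hinj t htn c (x + e)
    have h2 := pp_lemB' n π hinj t htn c x
    have heq : (π.eval (x + dz + e) - π.eval (x + dz)) - (π.eval (x + e) - π.eval x)
        = (π.eval ((x+e) + 2^t*c) - π.eval (x+e) - 2^t*c)
          - (π.eval (x + 2^t*c) - π.eval x - 2^t*c) := by
      rw [hc, show x + 2^t*c + e = (x+e) + 2^t*c by ring]; ring
    rw [heq]
    simpa using dvd_sub h1 h2
  · have hsplit : (π.eval (x + dz + e) - π.eval (x + dz)) - (π.eval (x + e) - π.eval x)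
        = ∑ k ∈ Finset.range π.natDegree,
            ((Polynomial.hasseDeriv (k+1) π).eval (x+dz)
              - (Polynomial.hasseDeriv (k+1) π).eval x) * e^(k+1) := by
      rw [pp_taylor π (x+dz) e, pp_taylor π x e, ← Finset.sum_sub_distrib]
      exact Finset.sum_congr rfl (fun k _ => by ring)
    rw [hsplit]
    apply Finset.dvd_sum
    intro k _
    rcases Nat.eq_zero_or_pos k with rfl | hkpos
    · simp only [zero_add, pow_one, Polynomial.hasseDeriv_one']
      have h1 := pp_deriv_diff n π hinj hn t dz hdz x
      have := mul_dvd_mul h1 hse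
      rwa [show s+t+1 = (t+1)+s by omega, pow_add]
    · have h1 : (2:ℤ)^t ∣ ((Polynomial.hasseDeriv (k+1) π).eval (x+dz)
          - (Polynomial.hasseDeriv (k+1) π).eval x) := by
        have h := Polynomial.sub_dvd_eval_sub (x + dz) x (Polynomial.hasseDeriv (k+1) π)
        simp only [add_sub_cancel_left] at h
        exact dvd_trans hdz h
      have h2 : ((2:ℤ)^s)^2 ∣ e^(k+1) :=
        dvd_trans (pow_dvd_pow_of_dvd hse 2) (pow_dvd_pow e (by omega))
      have h3 := mul_dvd_mul h1 h2
      refine dvd_trans ?_ h3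
      rw [← pow_mul, ← pow_add]
      exact pow_dvd_pow 2 (by omega)

private lemma pp_key (t : ℕ) (cz : ℤ) (hcz : Odd cz) (dz : ℤ) (hdzeq : dz = 2^t * cz)
    (htn : t + 1 ≤ n) (i j : ℤ) (hij : i < j) (hlt : j - i < 2^(n-t)) :
    ¬ ((2:ℤ)^(n+1) ∣ ((π.eval (j+dz)^2 - π.eval j^2) - (π.eval (i+dz)^2 - π.eval i^2))) := by
  intro hdvd
  obtain ⟨s, m, hmodd, hm⟩ := Nat.exists_eq_two_pow_mul_odd
    (n := (j - i).toNat) (by omega)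
  have hm1 : 1 ≤ m := by
    rcases Nat.eq_zero_or_pos m with rfl | h; · simp at hmodd
    · exact h
  have hez : j - i = 2^s * (m:ℤ) := by
    have := Int.toNat_of_nonneg (by omega : (0:ℤ) ≤ j - i)
    rw [← this, hm]; push_cast; ring
  have hsbound : s + t + 1 ≤ n := by
    have h2s : (2:ℤ)^s ≤ j - i := by
      calc (2:ℤ)^s = 2^s * 1 := by ring
      _ ≤ 2^s * (m:ℤ) := by
          have : (1:ℤ) ≤ (m:ℤ) := by exact_mod_cast hm1
          have hpos : (0:ℤ) < 2^s := by positivity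
          nlinarith
      _ = j - i := hez.symm
    have hlt2 : (2:ℤ)^s < 2^(n-t) := lt_of_le_of_lt h2s hlt
    have hslt : s < n - t := by
      by_contra hcon
      push_neg at hcon
      exact absurd (pow_le_pow_right₀ (by norm_num) hcon) (not_le.mpr hlt2)
    omega
  -- basic decompositions
  have hA := pp_lemB' n π hinj t htn cz i
  have hB0 := pp_lemB' n π hinj s (by omega) (m:ℤ) i
  have hW := pp_maincong n π hinj hn t dz ⟨cz, hdzeq⟩ htn s (j - i) ⟨(m:ℤ), hez⟩ hsbound i
  have h2t : (2:ℤ)^(t+1) = 2 * 2^t := by ring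
  have h2s : (2:ℤ)^(s+1) = 2 * 2^s := by ring
  obtain ⟨za, hza⟩ := hA
  obtain ⟨zu, hzu⟩ := hB0
  obtain ⟨w, hw⟩ := hW
  set P := π.eval i with hP
  set a := cz + 2*za with ha
  set u := (m:ℤ) + 2*zu with hu
  have e1 : π.eval (i + dz) = P + 2^t * a := by
    rw [hdzeq]; rw [h2t] at hza; rw [ha, hP]; linarith [hza]
  have e2 : π.eval j = P + 2^s * u := by
    have hj : j = i + 2^s * (m:ℤ) := by linarith [hez]
    rw [h2s] at hzu
    rw [hj, hu, hP]; linarith [hzu]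
  have e3 : π.eval (j + dz) = P + 2^s * u + 2^t * a + 2^(s+t+1) * w := by
    rw [show i + dz + (j - i) = j + dz by ring, show i + (j - i) = j by ring] at hw
    rw [e1, e2] at hw
    linarith [hw]
  have hu_odd : Odd u := by
    rw [hu]
    rcases (Nat.odd_iff.mp hmodd) with h
    exact ⟨(m:ℤ)/2 + zu, by omega⟩
  have ha_odd : Odd a := by
    obtain ⟨r, hr⟩ := hcz
    exact ⟨r + za, by omega⟩
  have hfinal : (π.eval (j+dz)^2 - π.eval j^2) - (π.eval (i+dz)^2 - π.eval i^2)
      = 2^(s+t+1) * (u*a + 2*(P*w + 2^s*(u*w) + 2^t*(a*w) + 2^(s+t)*w^2)) := by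
    rw [e1, e2, e3]; ring
  set K := u*a + 2*(P*w + 2^s*(u*w) + 2^t*(a*w) + 2^(s+t)*w^2) with hK
  have hKodd : Odd K := (hu_odd.mul ha_odd).add_even (even_two_mul _)
  rw [hfinal] at hdvd
  have hsd : (2:ℤ)^(s+t+2) ∣ 2^(s+t+1) * K :=
    dvd_trans (pow_dvd_pow 2 (by omega)) hdvd
  rw [pow_succ, mul_comm ((2:ℤ)^(s+t+1)) 2] at hsd
  have h2K : (2:ℤ) ∣ K := by
    have hne : ((2:ℤ)^(s+t+1)) ≠ 0 := by positivity
    rcases hsd with ⟨q, hq⟩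
    refine ⟨q, ?_⟩
    have : (2:ℤ)^(s+t+1) * K = (2:ℤ)^(s+t+1) * (2*q) := by rw [hq]; ring
    exact mul_left_cancel₀ hne this
  obtain ⟨r, hr⟩ := hKodd
  omega

end PPMain
/-- (Appendix C key step): for `N = 2^n` (`n ≥ 2`), a permutation polynomial `π` over
`ℤ_{2^n}` with `π(0) = 0`, a shift `0 < d < N` and `g = gcd(d,N)`, the quantity
`H_d(k) = (π(k+d)² − π(k)² − π(d)²)/2` is an integer divisible by `g`, and `H_d(k)/g`
induces a permutation of `ℤ_{N/g}` (its values at `k = 0,…,N/g−1` form a complete residue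
system modulo `N/g`). -/
theorem stmt_12 (n : ℕ) (hn : 2 ≤ n) (N : ℕ) (hN : N = 2 ^ n)
    (π : Polynomial ℤ) (hconst : π.coeff 0 = 0)
    (hPP : Function.Bijective
      (fun x : ZMod N => (π.map (Int.castRingHom (ZMod N))).eval x))
    (d : ℕ) (hd0 : 0 < d) (hdN : d < N) (g : ℕ) (hg : g = Nat.gcd d N)
    (H : ℤ → ℤ)
    (hH : ∀ k : ℤ, H k =
      (π.eval (k + (d : ℤ)) ^ 2 - π.eval k ^ 2 - π.eval ((d : ℕ) : ℤ) ^ 2) / 2) :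
    (∀ k : ℤ, (2 : ℤ) ∣
        (π.eval (k + (d : ℤ)) ^ 2 - π.eval k ^ 2 - π.eval ((d : ℕ) : ℤ) ^ 2)) ∧
    (∀ k : ℤ, (g : ℤ) ∣ H k) ∧
    Function.Bijective
      (fun k : Fin (N / g) => ((H ((k : ℕ) : ℤ) / (g : ℤ)) : ZMod (N / g))) := by
  subst hN
  obtain ⟨t, cn, hcnodd, hdeq⟩ := Nat.exists_eq_two_pow_mul_odd (n := d) (by omega)
  have hcn1 : 1 ≤ cn := by
    rcases Nat.eq_zero_or_pos cn with rfl | h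
    · simp at hcnodd
    · exact h
  have htlt : t < n := by
    have h1 : 2^t ≤ d := by
      calc 2^t = 2^t * 1 := by ring
      _ ≤ 2^t * cn := Nat.mul_le_mul_left _ hcn1
      _ = d := hdeq.symm
    exact (Nat.pow_lt_pow_iff_right (by norm_num)).mp (lt_of_le_of_lt h1 hdN)
  have htn : t + 1 ≤ n := htlt
  have hgt : g = 2^t := by
    have hg2 : g ∣ 2^n := hg ▸ Nat.gcd_dvd_right d (2^n)
    obtain ⟨t', ht'n, hgt'⟩ := (Nat.dvd_prime_pow Nat.prime_two).mp hg2
    have hdvd1 : 2^t ∣ g := by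
      rw [hg]
      exact Nat.dvd_gcd ⟨cn, hdeq⟩ (pow_dvd_pow 2 (le_of_lt htlt))
    have ht_le : t ≤ t' := by
      rw [hgt'] at hdvd1
      exact (Nat.pow_dvd_pow_iff_le_right (by norm_num)).mp hdvd1
    have hdvd2 : 2^t' ∣ d := by rw [← hgt']; exact hg ▸ Nat.gcd_dvd_left d (2^n)
    have ht'_le : t' ≤ t := by
      by_contra hcon
      push_neg at hcon
      have hh : 2^(t+1) ∣ d := dvd_trans (pow_dvd_pow 2 hcon) hdvd2
      rw [hdeq, pow_succ] at hh
      have h2cn : 2 ∣ cn := (Nat.mul_dvd_mul_iff_left (by positivity : 0 < 2^t)).mp hh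
      obtain ⟨r, hr⟩ := hcnodd
      omega
    rw [hgt']
    congr 1
    omega
  have hinj : ∀ m : ℕ, m ≤ n → ∀ x y : ℤ, (2:ℤ)^m ∣ (π.eval x - π.eval y) → (2:ℤ)^m ∣ (x - y) :=
    fun m hm x y h => pp_inj n π hPP m hm x y h
  have hdzeq : ((d:ℕ):ℤ) = 2^t * ((cn:ℕ):ℤ) := by rw [hdeq]; push_cast; ring
  have hczodd : Odd ((cn:ℕ):ℤ) := by
    obtain ⟨r, hr⟩ := hcnodd
    exact ⟨(r:ℤ), by exact_mod_cast hr⟩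
  have heval0 : π.eval 0 = 0 := by rw [← Polynomial.coeff_zero_eq_eval_zero]; exact hconst
  have hpar : ∀ y : ℤ, (2:ℤ) ∣ (π.eval y - y) := by
    intro y
    have h := pp_lemB' n π hinj 0 (by omega) y 0
    simpa [heval0] using h
  have hsq : ∀ y : ℤ, (2:ℤ) ∣ (π.eval y^2 - y^2) := by
    intro y
    obtain ⟨q, hq⟩ := hpar y
    exact ⟨q * (π.eval y + y), by linear_combination (π.eval y + y) * hq⟩
  have part1 : ∀ k : ℤ, (2:ℤ) ∣ (π.eval (k + (d:ℤ))^2 - π.eval k^2 - π.eval ((d:ℕ):ℤ)^2) := by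
    intro k
    have h1 := hsq (k + (d:ℤ)); have h2 := hsq k; have h3 := hsq ((d:ℕ):ℤ)
    have heq : π.eval (k + (d:ℤ))^2 - π.eval k^2 - π.eval ((d:ℕ):ℤ)^2
        = (π.eval (k+(d:ℤ))^2 - (k+(d:ℤ))^2) - (π.eval k^2 - k^2)
          - (π.eval ((d:ℕ):ℤ)^2 - ((d:ℕ):ℤ)^2) + 2*(k*(d:ℤ)) := by ring
    rw [heq]
    exact dvd_add (dvd_sub (dvd_sub h1 h2) h3) ⟨k*(d:ℤ), rfl⟩
  have hnum : ∀ k : ℤ, (2:ℤ)^(t+1) ∣ (π.eval (k + (d:ℤ))^2 - π.eval k^2 - π.eval ((d:ℕ):ℤ)^2) := by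
    intro k
    rcases Nat.eq_zero_or_pos t with ht0 | htpos
    · subst ht0; simpa using part1 k
    · obtain ⟨za, hza⟩ := pp_lemB' n π hinj t htn ((cn:ℕ):ℤ) k
      obtain ⟨zp, hzp⟩ := pp_lemB' n π hinj t htn ((cn:ℕ):ℤ) 0
      have h2t : (2:ℤ)^(t+1) = 2*2^t := by ring
      rw [h2t] at hza hzp
      set a := ((cn:ℕ):ℤ) + 2*za with haa
      set p := ((cn:ℕ):ℤ) + 2*zp with hpp
      have e1 : π.eval (k + (d:ℤ)) = π.eval k + 2^t * a := by
        rw [hdzeq]; rw [haa]; linarith [hza]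
      have e2 : π.eval ((d:ℕ):ℤ) = 2^t * p := by
        rw [hdzeq]
        have : (0:ℤ) + 2^t * ((cn:ℕ):ℤ) = 2^t * ((cn:ℕ):ℤ) := by ring
        rw [← this]
        rw [hpp]; rw [heval0] at hzp; linarith [hzp]
      have key : π.eval (k + (d:ℤ))^2 - π.eval k^2 - π.eval ((d:ℕ):ℤ)^2
          = 2^(t+1) * (a * π.eval k) + (2^t*2^t) * (a^2 - p^2) := by
        rw [e1, e2]; ring
      rw [key]
      refine dvd_add ⟨a * π.eval k, rfl⟩ (Dvd.dvd.mul_right ?_ _)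
      rw [← pow_add]
      exact pow_dvd_pow 2 (by omega)
  have part2 : ∀ k : ℤ, ((g:ℕ):ℤ) ∣ H k := by
    intro k
    rw [hH k]
    obtain ⟨q, hq⟩ := hnum k
    have hdivq : (π.eval (k + (d:ℤ))^2 - π.eval k^2 - π.eval ((d:ℕ):ℤ)^2) / 2 = (2:ℤ)^t * q := by
      rw [hq, show (2:ℤ)^(t+1) = 2*2^t by ring, mul_assoc]
      exact Int.mul_ediv_cancel_left _ (by norm_num)
    rw [hdivq, hgt]
    push_cast
    exact ⟨q, rfl⟩
  refine ⟨part1, part2, ?_⟩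
  have hgN : g ∣ 2^n := hg ▸ Nat.gcd_dvd_right d (2^n)
  have hNg : 2^n / g = 2^(n-t) := by
    rw [hgt, Nat.pow_div (le_of_lt htlt) (by norm_num)]
  haveI : NeZero (2^n / g) := ⟨by rw [hNg]; positivity⟩
  rw [Fintype.bijective_iff_injective_and_card]
  refine ⟨?_, by simp [ZMod.card]⟩
  intro k₁ k₂ hk
  by_contra hne
  have h2H : ∀ k : ℤ, 2 * H k = π.eval (k+(d:ℤ))^2 - π.eval k^2 - π.eval ((d:ℕ):ℤ)^2 := by
    intro k; rw [hH k]; exact Int.mul_ediv_cancel' (part1 k)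
  have hkey : ∀ i j : Fin (2^n/g), (i:ℕ) < (j:ℕ) →
      ((H ((i:ℕ):ℤ) / (g:ℤ)) : ZMod (2^n/g)) = ((H ((j:ℕ):ℤ) / (g:ℤ)) : ZMod (2^n/g)) → False := by
    intro i j hij hcast
    have h1 : (((2^n/g : ℕ)):ℤ) ∣ (H ((j:ℕ):ℤ)/(g:ℤ) - H ((i:ℕ):ℤ)/(g:ℤ)) := by
      rw [ZMod.intCast_eq_intCast_iff] at hcast
      exact hcast.dvd
    have hmul : ((g:ℕ):ℤ) * ((2^n/g : ℕ):ℤ) = (2:ℤ)^n := by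
      rw [← Nat.cast_mul, Nat.mul_div_cancel' hgN]
      push_cast; ring
    have h2 : ((2:ℤ))^n ∣ (H ((j:ℕ):ℤ) - H ((i:ℕ):ℤ)) := by
      obtain ⟨z, hz⟩ := h1
      have hgH1 := Int.mul_ediv_cancel' (part2 ((i:ℕ):ℤ))
      have hgH2 := Int.mul_ediv_cancel' (part2 ((j:ℕ):ℤ))
      refine ⟨z, ?_⟩
      calc H ((j:ℕ):ℤ) - H ((i:ℕ):ℤ)
          = ((g:ℕ):ℤ) * (H ((j:ℕ):ℤ)/(g:ℤ) - H ((i:ℕ):ℤ)/(g:ℤ)) := by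
            rw [mul_sub, hgH1, hgH2]
        _ = ((g:ℕ):ℤ) * (((2^n/g : ℕ):ℤ) * z) := by rw [hz]
        _ = (2:ℤ)^n * z := by rw [← mul_assoc, hmul]
    have h3 : (2:ℤ)^(n+1) ∣ ((π.eval (((j:ℕ):ℤ)+(d:ℤ))^2 - π.eval ((j:ℕ):ℤ)^2)
          - (π.eval (((i:ℕ):ℤ)+(d:ℤ))^2 - π.eval ((i:ℕ):ℤ)^2)) := by
      obtain ⟨z, hz⟩ := h2
      refine ⟨z, ?_⟩
      have e1 := h2H ((j:ℕ):ℤ)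
      have e2 := h2H ((i:ℕ):ℤ)
      have hps : (2:ℤ)^(n+1) = 2^n * 2 := by ring
      rw [hps]
      linarith [hz, e1, e2]
    have hltij : ((i:ℕ):ℤ) < ((j:ℕ):ℤ) := by exact_mod_cast hij
    have hlt2 : ((j:ℕ):ℤ) - ((i:ℕ):ℤ) < 2^(n-t) := by
      have hjlt : (j:ℕ) < 2^(n-t) := lt_of_lt_of_le j.isLt (le_of_eq hNg)
      have hj2 : ((j:ℕ):ℤ) < (2:ℤ)^(n-t) := by exact_mod_cast hjlt
      have hi0 : (0:ℤ) ≤ ((i:ℕ):ℤ) := by positivity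
      omega
    exact pp_key n π hinj hn t ((cn:ℕ):ℤ) hczodd (d:ℤ) hdzeq htn _ _ hltij hlt2 h3
  rcases lt_trichotomy (k₁:ℕ) (k₂:ℕ) with h | h | h
  · exact hkey k₁ k₂ h hk
  · exact hne (Fin.ext h)
  · exact hkey k₂ k₁ h hk.symm
end
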